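/- arXiv:1210.6277 — 6 statements merged into one kernel-verified Lean document; each statement's English description precedes it below -/
import Mathlib

section
/- Let G be an infinite, connected, quasi-transitive simple graph with finite vertex-degrees. Then there is a constant μ such that for every vertex v, σ_n(v)^{1/n} → μ as n → ∞; moreover μ equals the connective constant lim_{n→∞} (sup_v σ_n(v))^{1/n}. -/
open Filter Topology

/-- The number of `n`-step self-avoiding walks in `G` starting at `v`. -/
noncomputable def sawCount {V : Type*} (G : SimpleGraph V) (v : V) (n : ℕ) : ℕ :=
  Nat.card {p : Σ u : V, G.Walk v u // p.2.IsPath ∧ p.2.length = n}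

/-- The supremum over vertices of the number of `n`-step self-avoiding walks. -/
noncomputable def sawSup {V : Type*} (G : SimpleGraph V) (n : ℕ) : ℕ :=
  sSup (Set.range fun v => sawCount G v n)


namespace SimpleGraph.Walk

variable {V : Type*} {G : SimpleGraph V}

/-- Take the first `n` darts of a walk. -/
def wtake {u v : V} : (p : G.Walk u v) → (n : ℕ) → G.Walk u (p.getVert n)
  | .nil, _ => .nil
  | p, 0 => Walk.nil.copy rfl (p.getVert_zero).symm
  | .cons h q, (n + 1) => Walk.cons h (wtake q n)

@[simp] lemma wtake_nil {u : V} (n : ℕ) : (Walk.nil : G.Walk u u).wtake n = Walk.nil := by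
  cases n <;> rfl

lemma wtake_zero {u v : V} (p : G.Walk u v) :
    p.wtake 0 = Walk.nil.copy rfl (p.getVert_zero).symm := by
  cases p <;> rfl

lemma wtake_cons_succ {u x v : V} (h : G.Adj u x) (q : G.Walk x v) (n : ℕ) :
    (Walk.cons h q).wtake (n+1) = Walk.cons h (q.wtake n) := rfl

lemma wtake_append_drop {u v : V} (p : G.Walk u v) (n : ℕ) :
    (p.wtake n).append (p.drop n) = p := by
  induction p generalizing n with
  | nil => simp [Walk.drop]
  | cons h q ih =>
    cases n with
    | zero =>
      simp [wtake_zero, Walk.drop]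
    | succ n =>
      rw [wtake_cons_succ]
      show Walk.cons h ((q.wtake n).append (q.drop n)) = _
      have hc : ((q.drop n).copy (getVert_cons_succ q h).symm rfl) = q.drop n :=
        Walk.copy_rfl_rfl _
      rw [ih n]

lemma length_wtake {u v : V} (p : G.Walk u v) (n : ℕ) (hn : n ≤ p.length) :
    (p.wtake n).length = n := by
  induction p generalizing n with
  | nil => simp at hn; simp [hn]
  | cons h q ih =>
    cases n with
    | zero => simp [wtake_zero]
    | succ n => simp [wtake_cons_succ, ih n (by simpa using hn)]


lemma length_drop' {u v : V} (p : G.Walk u v) (n : ℕ) (hn : n ≤ p.length) :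
    (p.drop n).length = p.length - n := by
  have h := congrArg Walk.length (wtake_append_drop p n)
  rw [Walk.length_append, length_wtake _ _ hn] at h
  omega

lemma IsPath.wtake' {u v : V} {p : G.Walk u v} (hp : p.IsPath) (n : ℕ) :
    (p.wtake n).IsPath := by
  rw [← wtake_append_drop p n] at hp
  exact hp.of_append_left

lemma IsPath.drop' {u v : V} {p : G.Walk u v} (hp : p.IsPath) (n : ℕ) :
    (p.drop n).IsPath := by
  rw [← wtake_append_drop p n] at hp
  exact hp.of_append_right

lemma getVert_length_append {u x b : V} (p : G.Walk u x) (q : G.Walk x b) :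
    (p.append q).getVert p.length = x := by
  rw [getVert_append]
  simp

lemma getVert_append_right {u x b : V} (p : G.Walk u x) (q : G.Walk x b) (i : ℕ) :
    (p.append q).getVert (p.length + i) = q.getVert i := by
  rw [getVert_append]
  simp

lemma getVert_ext {v₁ x₁ : V} (p : G.Walk v₁ x₁) :
    ∀ {v₂ x₂ : V} (q : G.Walk v₂ x₂), p.length = q.length →
    (∀ i, p.getVert i = q.getVert i) → v₁ = v₂ ∧ x₁ = x₂ ∧ HEq p q := by
  induction p with
  | nil =>
    intro v₂ x₂ q hlen hvert
    cases q with
    | nil =>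
      have h0 := hvert 0
      simp only [getVert_zero] at h0
      subst h0
      exact ⟨rfl, rfl, HEq.rfl⟩
    | cons h q => simp at hlen
  | cons h p ih =>
    intro v₂ x₂ q hlen hvert
    cases q with
    | nil => simp at hlen
    | cons h' q' =>
      have h0 := hvert 0
      simp only [getVert_zero] at h0
      subst h0
      have h1 := hvert 1
      simp only [getVert_cons_succ, getVert_zero] at h1
      subst h1
      obtain ⟨-, rfl, hheq⟩ := ih q' (by simpa using hlen)
        (fun i => by simpa using hvert (i+1))
      rw [heq_iff_eq] at hheq
      subst hheq
      exact ⟨rfl, rfl, HEq.rfl⟩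


lemma getVert_wtake {u v : V} (p : G.Walk u v) (n : ℕ) (i : ℕ) (hi : i ≤ n) :
    (p.wtake n).getVert i = p.getVert i := by
  induction p generalizing n i with
  | nil => simp
  | cons h q ih =>
    cases n with
    | zero =>
      interval_cases i
      simp [wtake_zero]
    | succ n =>
      rw [wtake_cons_succ]
      cases i with
      | zero => simp
      | succ i => simpa using ih n i (by omega)

lemma getVert_drop' {u v : V} (p : G.Walk u v) (n : ℕ) (hn : n ≤ p.length) (i : ℕ) :
    (p.drop n).getVert i = p.getVert (n + i) := by
  have h2 := getVert_append_right (p.wtake n) (p.drop n) i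
  rw [length_wtake p n hn, wtake_append_drop] at h2
  exact h2.symm

lemma getVert_append_left {u x b : V} (p : G.Walk u x) (q : G.Walk x b) (i : ℕ)
    (hi : i ≤ p.length) :
    (p.append q).getVert i = p.getVert i := by
  rcases lt_or_eq_of_le hi with h | h
  · rw [getVert_append]; simp [h]
  · subst h
    rw [getVert_length_append, getVert_length]

end SimpleGraph.Walk

section CountingInfra

open Finset in
lemma nat_card_le_fiber_sum {α : Type*} [Finite α] {ι : Type*} [Fintype ι]
    (g : α → ι) (B : ι → ℕ) (h : ∀ i, Nat.card {a // g a = i} ≤ B i) :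
    Nat.card α ≤ ∑ i, B i := by
  classical
  have e : α ≃ Σ i, {a // g a = i} := (Equiv.sigmaFiberEquiv g).symm
  rw [Nat.card_congr e]
  letI : ∀ i, Fintype {a // g a = i} := fun i => Fintype.ofFinite _
  rw [Nat.card_eq_fintype_card, Fintype.card_sigma]
  refine Finset.sum_le_sum fun i _ => ?_
  rw [← Nat.card_eq_fintype_card]
  exact h i

end CountingInfra

namespace SimpleGraph.Walk

lemma getVert_map' {V W : Type*} {G : SimpleGraph V} {G' : SimpleGraph W}
    (f : G →g G') {u v : V} (p : G.Walk u v) (i : ℕ) :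
    (p.map f).getVert i = f (p.getVert i) := by
  induction p generalizing i with
  | nil => rfl
  | cons h q ih =>
    cases i with
    | zero => simp
    | succ i => simpa using ih i

end SimpleGraph.Walk



noncomputable def sawCount' {V : Type*} (G : SimpleGraph V) (v : V) (n : ℕ) : ℕ :=
  Nat.card {p : Σ u : V, G.Walk v u // p.2.IsPath ∧ p.2.length = n}

section SAW

open SimpleGraph Walk

variable {V : Type*} {G : SimpleGraph V}

/-- The type of self-avoiding walks of length `n` from `v`. -/
abbrev SAWType (G : SimpleGraph V) (v : V) (n : ℕ) :=
  {p : Σ u : V, G.Walk v u // p.2.IsPath ∧ p.2.length = n}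

lemma sawExt {v : V} {n : ℕ} {a b : SAWType G v n}
    (h : ∀ i, a.1.2.getVert i = b.1.2.getVert i) : a = b := by
  obtain ⟨⟨u₁, p₁⟩, hp₁, hl₁⟩ := a
  obtain ⟨⟨u₂, p₂⟩, hp₂, hl₂⟩ := b
  obtain ⟨-, h2, h3⟩ := Walk.getVert_ext p₁ p₂ (hl₁.trans hl₂.symm) h
  subst h2
  rw [heq_iff_eq] at h3
  subst h3
  rfl

lemma finite_reach (hdeg : ∀ v : V, (G.neighborSet v).Finite) (v : V) :
    ∀ n : ℕ, {u : V | ∃ p : G.Walk v u, p.length ≤ n}.Finite := by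
  intro n
  induction n with
  | zero =>
    apply Set.Finite.subset (Set.finite_singleton v)
    rintro u ⟨p, hp⟩
    cases p with
    | nil => rfl
    | cons h q => simp at hp
  | succ n ih =>
    apply Set.Finite.subset (ih.union (Set.Finite.biUnion ih fun y _ => hdeg y))
    rintro u ⟨p, hp⟩
    by_cases hle : p.length ≤ n
    · exact Or.inl ⟨p, hle⟩
    · have hl : p.length = n + 1 := by omega
      right
      cases hrev : p.reverse with
      | nil =>
        exfalso
        have := congrArg Walk.length hrev
        rw [Walk.length_reverse] at this
        simp [hl] at this
      | @cons _ y _ hadj q =>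
        have hq : q.length = n := by
          have := congrArg Walk.length hrev
          rw [Walk.length_reverse] at this
          simp [hl] at this
          omega
        exact Set.mem_biUnion
          (show y ∈ {u : V | ∃ p : G.Walk v u, p.length ≤ n} from ⟨q.reverse, by simp [hq]⟩)
          (show u ∈ G.neighborSet y from hadj.symm)

lemma finite_sawType (hdeg : ∀ v : V, (G.neighborSet v).Finite) (v : V) (n : ℕ) :
    Finite (SAWType G v n) := by
  haveI := (finite_reach hdeg v n).to_subtype
  refine Finite.of_injective
    (fun p (i : Fin (n + 1)) =>
      (⟨p.1.2.getVert i, p.1.2.wtake i, by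
        rw [Walk.length_wtake p.1.2 i (by rw [p.2.2]; omega)]
        omega⟩ : {u : V | ∃ p : G.Walk v u, p.length ≤ n})) ?_
  intro a b h
  apply sawExt
  intro j
  rcases le_or_gt j n with hj | hj
  · exact congrArg Subtype.val (congrFun h ⟨j, by omega⟩)
  · have ha := congrArg Subtype.val (congrFun h ⟨n, by omega⟩)
    simp only at ha
    rw [a.1.2.getVert_of_length_le (by rw [a.2.2]; omega),
        b.1.2.getVert_of_length_le (by rw [b.2.2]; omega)]
    rw [a.1.2.getVert_of_length_le (le_of_eq a.2.2),
        b.1.2.getVert_of_length_le (le_of_eq b.2.2)] at ha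
    exact ha

lemma sawCount'_pos (hconn : G.Connected) (hinf : Infinite V)
    (hdeg : ∀ v : V, (G.neighborSet v).Finite) (v : V) (n : ℕ) :
    1 ≤ sawCount' G v n := by
  classical
  haveI := finite_sawType hdeg v n
  have hne : Nonempty (SAWType G v n) := by
    obtain ⟨u, hu⟩ := ((finite_reach hdeg v n).infinite_compl).nonempty
    obtain ⟨q0⟩ := hconn.preconnected v u
    have hq : q0.bypass.IsPath := q0.bypass_isPath
    have hlen : n ≤ q0.bypass.length := by
      by_contra hc
      exact hu ⟨q0.bypass, by omega⟩
    exact ⟨⟨⟨_, q0.bypass.wtake n⟩, hq.wtake' n, Walk.length_wtake _ _ hlen⟩⟩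
  exact Nat.card_pos

lemma sawCount'_le_iso (hdeg : ∀ v : V, (G.neighborSet v).Finite)
    (φ : G ≃g G) (v : V) (n : ℕ) :
    sawCount' G v n ≤ sawCount' G (φ v) n := by
  haveI := finite_sawType hdeg (φ v) n
  refine Nat.card_le_card_of_injective
    (fun p => ⟨⟨φ p.1.1, p.1.2.map φ.toHom⟩,
      Walk.map_isPath_of_injective φ.injective p.2.1,
      by rw [Walk.length_map]; exact p.2.2⟩) ?_
  intro a b h
  apply sawExt
  intro i
  have := congrArg (fun z : SAWType G (φ v) n => z.1.2.getVert i) h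
  simp only [Walk.getVert_map'] at this
  exact φ.injective this

lemma sawCount'_iso (hdeg : ∀ v : V, (G.neighborSet v).Finite)
    (φ : G ≃g G) (v : V) (n : ℕ) :
    sawCount' G (φ v) n = sawCount' G v n := by
  refine le_antisymm ?_ (sawCount'_le_iso hdeg φ v n)
  have h := sawCount'_le_iso hdeg φ.symm (φ v) n
  rwa [RelIso.symm_apply_apply] at h

noncomputable def sawSup' {V : Type*} (G : SimpleGraph V) (n : ℕ) : ℕ :=
  sSup (Set.range fun v => sawCount' G v n)

section SUP

variable (hdeg : ∀ v : V, (G.neighborSet v).Finite)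
  {W : Finset V} (hW : ∀ v : V, ∃ φ : G ≃g G, φ v ∈ W)

include hdeg hW

lemma bddAbove_sawRange (n : ℕ) :
    BddAbove (Set.range fun v => sawCount' G v n) := by
  refine (((W.finite_toSet).image fun w => sawCount' G w n).subset ?_).bddAbove
  rintro _ ⟨v, rfl⟩
  obtain ⟨φ, hφ⟩ := hW v
  exact ⟨φ v, hφ, sawCount'_iso hdeg φ v n⟩

lemma sawCount'_le_sup (u : V) (n : ℕ) : sawCount' G u n ≤ sawSup' G n :=
  le_csSup (bddAbove_sawRange hdeg hW n) ⟨u, rfl⟩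

lemma exists_sawSup' [Nonempty V] (n : ℕ) :
    ∃ w ∈ W, sawCount' G w n = sawSup' G n := by
  have hmem := Nat.sSup_mem (s := Set.range fun v => sawCount' G v n)
    (Set.range_nonempty _) (bddAbove_sawRange hdeg hW n)
  obtain ⟨v, hv⟩ := hmem
  obtain ⟨φ, hφ⟩ := hW v
  exact ⟨φ v, hφ, by rw [sawCount'_iso hdeg φ v n]; exact hv⟩

lemma sawCount'_add_le (v : V) (m n : ℕ) :
    sawCount' G v (m + n) ≤ sawCount' G v m * sawSup' G n := by
  haveI := finite_sawType hdeg v (m + n)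
  haveI := finite_sawType hdeg v m
  letI : Fintype (SAWType G v m) := Fintype.ofFinite _
  have key := nat_card_le_fiber_sum (α := SAWType G v (m + n)) (ι := SAWType G v m)
    (fun π => ⟨⟨π.1.2.getVert m, π.1.2.wtake m⟩, π.2.1.wtake' m,
      Walk.length_wtake _ _ (by rw [π.2.2]; omega)⟩)
    (fun _ => sawSup' G n) ?_
  · calc sawCount' G v (m + n) ≤ ∑ _q : SAWType G v m, sawSup' G n := key
      _ = Nat.card (SAWType G v m) * sawSup' G n := by
          rw [Finset.sum_const, Finset.card_univ, smul_eq_mul, Nat.card_eq_fintype_card]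
      _ = sawCount' G v m * sawSup' G n := rfl
  · intro q
    haveI := finite_sawType hdeg q.1.1 n
    refine le_trans (Nat.card_le_card_of_injective
      (fun a => (⟨⟨a.1.1.1, (a.1.1.2.drop m).copy
          (congrArg (fun z : SAWType G v m => z.1.1) a.2) rfl⟩,
        by simp only [Walk.isPath_copy]; exact a.1.2.1.drop' m,
        by rw [Walk.length_copy, Walk.length_drop' _ _ (by rw [a.1.2.2]; omega), a.1.2.2]
           omega⟩ : SAWType G q.1.1 n)) ?_) (sawCount'_le_sup hdeg hW q.1.1 n)
    intro a b h
    refine Subtype.ext (sawExt fun j => ?_)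
    rcases le_or_gt j m with hj | hj
    · have ha := congrArg (fun z : SAWType G v m => z.1.2.getVert j) (a.2.trans b.2.symm)
      simp only at ha
      rwa [Walk.getVert_wtake _ m j hj, Walk.getVert_wtake _ m j hj] at ha
    · have ha := congrArg (fun z : SAWType G q.1.1 n => z.1.2.getVert (j - m)) h
      simp only [Walk.getVert_copy] at ha
      rw [Walk.getVert_drop' _ m (by rw [a.1.2.2]; omega),
          Walk.getVert_drop' _ m (by rw [b.1.2.2]; omega)] at ha
      have hjm : m + (j - m) = j := by omega
      rwa [hjm] at ha

lemma sawSup'_add_le [Nonempty V] (m n : ℕ) :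
    sawSup' G (m + n) ≤ sawSup' G m * sawSup' G n := by
  refine csSup_le (Set.range_nonempty _) ?_
  rintro _ ⟨v, rfl⟩
  exact (sawCount'_add_le hdeg hW v m n).trans
    (Nat.mul_le_mul_right _ (sawCount'_le_sup hdeg hW v m))

lemma sawSup'_pos (hconn : G.Connected) (hinf : Infinite V) (n : ℕ) :
    1 ≤ sawSup' G n := by
  haveI := hconn.nonempty
  exact le_trans (sawCount'_pos hconn hinf hdeg (Classical.arbitrary V) n)
    (sawCount'_le_sup hdeg hW _ n)

end SUP

lemma exists_front {v w : V} (γ : G.Walk v w) (hγ : γ.IsPath) (L : List V)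
    (hw : w ∈ L) :
    ∃ s : ℕ, s ≤ γ.length ∧ γ.getVert s ∈ L ∧
      ∃ front : G.Walk v (γ.getVert s), front.IsPath ∧ front.length = s ∧
        front.support ⊆ γ.support ∧
        (∀ y ∈ front.support, y ∈ L → y = γ.getVert s) := by
  induction γ with
  | nil =>
    refine ⟨0, le_refl _, hw, Walk.nil, Walk.IsPath.nil, rfl, by simp, ?_⟩
    intro y hy _
    replace hy : y = _ := List.mem_singleton.1 hy
    simp [hy]
  | @cons u z w h q ih =>
    by_cases hu : u ∈ L
    · refine ⟨0, by simp, by simpa using hu, Walk.nil, Walk.IsPath.nil, rfl,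
        fun y hy => by rw [List.mem_singleton.1 hy]; simp, ?_⟩
      intro y hy _
      replace hy : y = _ := List.mem_singleton.1 hy
      simp [hy]
    · rw [Walk.cons_isPath_iff] at hγ
      obtain ⟨s, hs, hmem, front, hfp, hfl, hfsub, hfirst⟩ := ih hγ.1 hw
      refine ⟨s + 1, by simp; omega, by simpa using hmem,
        Walk.cons h front, ?_, by simp [hfl], ?_, ?_⟩
      · refine (Walk.cons_isPath_iff h front).2 ?_
        exact ⟨hfp, fun hc => hγ.2 (hfsub hc)⟩
      · intro y hy
        simp only [Walk.support_cons, List.mem_cons] at ⊢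
        replace hy : y = u ∨ y ∈ front.support := List.mem_cons.1 hy
        rcases hy with rfl | hy
        · exact Or.inl rfl
        · exact Or.inr (hfsub hy)
      · intro y hy hyL
        replace hy : y = u ∨ y ∈ front.support := List.mem_cons.1 hy
        rcases hy with rfl | hy
        · exact absurd hyL hu
        · exact hfirst y hy hyL

lemma append_isPath {v x t : V} {front : G.Walk v x} {c : G.Walk x t}
    (hf : front.IsPath) (hc : c.IsPath) {L : List V}
    (hsub : c.support ⊆ L)
    (hfirst : ∀ y ∈ front.support, y ∈ L → y = x) :
    (front.append c).IsPath := by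
  rw [Walk.isPath_def, Walk.support_append, List.nodup_append]
  refine ⟨hf.support_nodup, (List.tail_sublist _).nodup hc.support_nodup, ?_⟩
  intro y hy z hyt hyz
  subst hyz
  have hyc : y ∈ c.support := (List.tail_sublist _).subset hyt
  have hyx : y = x := hfirst y hy (hsub hyc)
  subst hyx
  have := hc.support_nodup
  rw [c.support_eq_cons, List.nodup_cons] at this
  exact this.1 hyt

lemma surgery (hdeg : ∀ v : V, (G.neighborSet v).Finite)
    {W : Finset V} (hW : ∀ v : V, ∃ φ : G ≃g G, φ v ∈ W)
    {v w : V} (γ : G.Walk v w) (hγ : γ.IsPath) (n : ℕ) :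
    ∃ s ℓ : ℕ, s ≤ γ.length ∧ ℓ ≤ n ∧ n ≤ 2 * ℓ ∧
      sawCount' G w n ≤ 2 * (γ.length + 1) * (n + 1) *
        (sawCount' G v (s + ℓ) * sawSup' G (n - ℓ)) := by
  classical
  haveI := finite_sawType hdeg w n
  have H : ∀ π : SAWType G w n, ∃ s : ℕ, s ≤ γ.length ∧ γ.getVert s ∈ π.1.2.support ∧
      ∃ front : G.Walk v (γ.getVert s), front.IsPath ∧ front.length = s ∧
        front.support ⊆ γ.support ∧
        (∀ y ∈ front.support, y ∈ π.1.2.support → y = γ.getVert s) :=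
    fun π => exists_front γ hγ _ π.1.2.start_mem_support
  choose S hS hmem F hF1 hF2 _hF3 hF4 using H
  set A : (π : SAWType G w n) → G.Walk w (γ.getVert (S π)) :=
    fun π => π.1.2.takeUntil _ (hmem π) with hA
  set B : (π : SAWType G w n) → G.Walk (γ.getVert (S π)) π.1.1 :=
    fun π => π.1.2.dropUntil _ (hmem π) with hB
  have hAB : ∀ π, (A π).append (B π) = π.1.2 := fun π => π.1.2.take_spec (hmem π)
  have hKn : ∀ π, (A π).length ≤ n := fun π => by
    have h := Walk.length_takeUntil_le π.1.2 (hmem π)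
    rw [π.2.2] at h; exact h
  have hKB : ∀ π, (B π).length = n - (A π).length := fun π => by
    have h := congrArg Walk.length (hAB π)
    rw [Walk.length_append, π.2.2] at h
    omega
  have hApath : ∀ π, (A π).IsPath := fun π => π.2.1.takeUntil _
  have hBpath : ∀ π, (B π).IsPath := fun π => π.2.1.dropUntil _
  set Lf : SAWType G w n → ℕ := fun π => if n ≤ 2 * (A π).length then (A π).length else n - (A π).length with hLf
  have hLf1 : ∀ π, Lf π ≤ n := fun π => by
    have := hKn π; dsimp only [Lf]; split <;> omega
  have hLf2 : ∀ π, n ≤ 2 * Lf π := fun π => by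
    have := hKn π; dsimp only [Lf]; split <;> omega
  set data : SAWType G w n → (Fin (γ.length + 1) × {ℓ : Fin (n + 1) // n ≤ 2 * (ℓ : ℕ)} × Bool) := fun π =>
    (⟨S π, by have := hS π; omega⟩,
     ⟨⟨Lf π, by have := hLf1 π; omega⟩, hLf2 π⟩,
     if n ≤ 2 * (A π).length then true else false) with hdata_def
  set fbnd : (Fin (γ.length + 1) × {ℓ : Fin (n + 1) // n ≤ 2 * (ℓ : ℕ)} × Bool) → ℕ := fun i =>
    sawCount' G v ((i.1 : ℕ) + ((i.2.1 : Fin (n+1)) : ℕ)) *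
      sawSup' G (n - ((i.2.1 : Fin (n+1)) : ℕ)) with hfbnd
  have key : sawCount' G w n ≤ ∑ i : (Fin (γ.length + 1) × {ℓ : Fin (n + 1) // n ≤ 2 * (ℓ : ℕ)} × Bool), fbnd i := by
    refine nat_card_le_fiber_sum data fbnd ?_
    rintro ⟨s₀, ⟨ℓ₀f, hℓ₀⟩, dir₀⟩
    haveI := finite_sawType hdeg v ((s₀ : ℕ) + (ℓ₀f : ℕ))
    haveI := finite_sawType hdeg (γ.getVert (s₀ : ℕ)) (n - (ℓ₀f : ℕ))
    have hcast : ∀ (π : SAWType G w n),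
        data π = (s₀, ⟨ℓ₀f, hℓ₀⟩, dir₀) → γ.getVert (S π) = γ.getVert (s₀ : ℕ) := by
      intro π hd
      have : S π = (s₀ : ℕ) := congrArg (fun z : (Fin (γ.length + 1) × {ℓ : Fin (n + 1) // n ≤ 2 * (ℓ : ℕ)} × Bool) => (z.1 : ℕ)) hd
      rw [this]
    -- the injection from the fiber into the product
    refine le_trans (Nat.card_le_card_of_injective
      (f := fun a : {π : SAWType G w n // data π = (s₀, ⟨ℓ₀f, hℓ₀⟩, dir₀)} =>
        if h2 : n ≤ 2 * (A a.1).length then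
          ((⟨⟨w, (F a.1).append (A a.1).reverse⟩,
            append_isPath (hF1 a.1) (hApath a.1).reverse
              (fun y hy => by
                rw [Walk.support_reverse, List.mem_reverse] at hy
                exact Walk.support_takeUntil_subset _ _ hy)
              (hF4 a.1),
            by
              have hs : S a.1 = (s₀ : ℕ) := congrArg (fun z : (Fin (γ.length + 1) × {ℓ : Fin (n + 1) // n ≤ 2 * (ℓ : ℕ)} × Bool) => (z.1 : ℕ)) a.2
              have hl : Lf a.1 = (ℓ₀f : ℕ) :=
                congrArg (fun z : (Fin (γ.length + 1) × {ℓ : Fin (n + 1) // n ≤ 2 * (ℓ : ℕ)} × Bool) => ((z.2.1 : Fin (n+1)) : ℕ)) a.2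
              rw [Walk.length_append, Walk.length_reverse, hF2]
              dsimp only [Lf] at hl
              rw [if_pos h2] at hl
              omega⟩ : SAWType G v ((s₀ : ℕ) + (ℓ₀f : ℕ))),
           (⟨⟨a.1.1.1, (B a.1).copy (hcast a.1 a.2) rfl⟩,
            by rw [Walk.isPath_copy]; exact hBpath a.1,
            by
              have hl : Lf a.1 = (ℓ₀f : ℕ) :=
                congrArg (fun z : (Fin (γ.length + 1) × {ℓ : Fin (n + 1) // n ≤ 2 * (ℓ : ℕ)} × Bool) => ((z.2.1 : Fin (n+1)) : ℕ)) a.2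
              dsimp only [Lf] at hl
              rw [if_pos h2] at hl
              rw [Walk.length_copy, hKB]
              omega⟩ : SAWType G (γ.getVert (s₀ : ℕ)) (n - (ℓ₀f : ℕ))))
        else
          ((⟨⟨a.1.1.1, (F a.1).append (B a.1)⟩,
            append_isPath (hF1 a.1) (hBpath a.1)
              (fun y hy => Walk.support_dropUntil_subset _ _ hy)
              (hF4 a.1),
            by
              have hs : S a.1 = (s₀ : ℕ) := congrArg (fun z : (Fin (γ.length + 1) × {ℓ : Fin (n + 1) // n ≤ 2 * (ℓ : ℕ)} × Bool) => (z.1 : ℕ)) a.2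
              have hl : Lf a.1 = (ℓ₀f : ℕ) :=
                congrArg (fun z : (Fin (γ.length + 1) × {ℓ : Fin (n + 1) // n ≤ 2 * (ℓ : ℕ)} × Bool) => ((z.2.1 : Fin (n+1)) : ℕ)) a.2
              rw [Walk.length_append, hF2, hKB]
              dsimp only [Lf] at hl
              rw [if_neg h2] at hl
              omega⟩ : SAWType G v ((s₀ : ℕ) + (ℓ₀f : ℕ))),
           (⟨⟨w, (A a.1).reverse.copy (hcast a.1 a.2) rfl⟩,
            by rw [Walk.isPath_copy]; exact (hApath a.1).reverse,
            by
              have hl : Lf a.1 = (ℓ₀f : ℕ) :=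
                congrArg (fun z : (Fin (γ.length + 1) × {ℓ : Fin (n + 1) // n ≤ 2 * (ℓ : ℕ)} × Bool) => ((z.2.1 : Fin (n+1)) : ℕ)) a.2
              dsimp only [Lf] at hl
              rw [if_neg h2] at hl
              have := hKn a.1
              rw [Walk.length_copy, Walk.length_reverse]
              omega⟩ : SAWType G (γ.getVert (s₀ : ℕ)) (n - (ℓ₀f : ℕ)))))
      ?_) ?_
    · -- injectivity
      intro a b hab
      have hdir : (if n ≤ 2 * (A a.1).length then true else false)
          = (if n ≤ 2 * (A b.1).length then true else false) := by
        have h1 : (if n ≤ 2 * (A a.1).length then true else false) = dir₀ :=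
          congrArg (fun z : (Fin (γ.length + 1) × {ℓ : Fin (n + 1) // n ≤ 2 * (ℓ : ℕ)} × Bool) => z.2.2) a.2
        have h2 : (if n ≤ 2 * (A b.1).length then true else false) = dir₀ :=
          congrArg (fun z : (Fin (γ.length + 1) × {ℓ : Fin (n + 1) // n ≤ 2 * (ℓ : ℕ)} × Bool) => z.2.2) b.2
        rw [h1, h2]
      have hla : Lf a.1 = (ℓ₀f : ℕ) :=
        congrArg (fun z : (Fin (γ.length + 1) × {ℓ : Fin (n + 1) // n ≤ 2 * (ℓ : ℕ)} × Bool) => ((z.2.1 : Fin (n+1)) : ℕ)) a.2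
      have hlb : Lf b.1 = (ℓ₀f : ℕ) :=
        congrArg (fun z : (Fin (γ.length + 1) × {ℓ : Fin (n + 1) // n ≤ 2 * (ℓ : ℕ)} × Bool) => ((z.2.1 : Fin (n+1)) : ℕ)) b.2
      have hsa : S a.1 = (s₀ : ℕ) := congrArg (fun z : (Fin (γ.length + 1) × {ℓ : Fin (n + 1) // n ≤ 2 * (ℓ : ℕ)} × Bool) => (z.1 : ℕ)) a.2
      have hsb : S b.1 = (s₀ : ℕ) := congrArg (fun z : (Fin (γ.length + 1) × {ℓ : Fin (n + 1) // n ≤ 2 * (ℓ : ℕ)} × Bool) => (z.1 : ℕ)) b.2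
      by_cases h2a : n ≤ 2 * (A a.1).length
      · have h2b : n ≤ 2 * (A b.1).length := by
          by_contra hc
          rw [if_pos h2a, if_neg hc] at hdir
          exact Bool.noConfusion hdir
        dsimp only at hab
        rw [dif_pos h2a, dif_pos h2b] at hab
        have hρ := congrArg Prod.fst hab
        have hlost := congrArg Prod.snd hab
        simp only at hρ hlost
        -- common value of K
        have hka : (A a.1).length = (ℓ₀f : ℕ) := by
          dsimp only [Lf] at hla; rwa [if_pos h2a] at hla
        have hkb : (A b.1).length = (ℓ₀f : ℕ) := by
          dsimp only [Lf] at hlb; rwa [if_pos h2b] at hlb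
        refine Subtype.ext (sawExt fun j => ?_)
        have hja := congrArg (fun p => Walk.getVert p j) (hAB a.1).symm
        have hjb := congrArg (fun p => Walk.getVert p j) (hAB b.1).symm
        rw [hja, hjb]
        rcases le_or_gt j (ℓ₀f : ℕ) with hj | hj
        · rw [Walk.getVert_append_left _ _ j (by omega),
              Walk.getVert_append_left _ _ j (by omega)]
          have e1 : (A a.1).getVert j = (A a.1).reverse.getVert ((ℓ₀f : ℕ) - j) := by
            rw [Walk.getVert_reverse]
            congr 1
            omega
          have e2 : (A b.1).getVert j = (A b.1).reverse.getVert ((ℓ₀f : ℕ) - j) := by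
            rw [Walk.getVert_reverse]
            congr 1
            omega
          rw [e1, e2]
          have f1 := Walk.getVert_append_right (F a.1) (A a.1).reverse ((ℓ₀f : ℕ) - j)
          have f2 := Walk.getVert_append_right (F b.1) (A b.1).reverse ((ℓ₀f : ℕ) - j)
          have ea : (F a.1).length + ((ℓ₀f : ℕ) - j) = (s₀ : ℕ) + ((ℓ₀f : ℕ) - j) := by
            rw [hF2, hsa]
          have eb : (F b.1).length + ((ℓ₀f : ℕ) - j) = (s₀ : ℕ) + ((ℓ₀f : ℕ) - j) := by
            rw [hF2, hsb]
          rw [ea] at f1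
          rw [eb] at f2
          rw [← f1, ← f2]
          exact congrArg (fun z : SAWType G v ((s₀ : ℕ) + (ℓ₀f : ℕ)) =>
            z.1.2.getVert ((s₀ : ℕ) + ((ℓ₀f : ℕ) - j))) hρ
        · rw [Walk.getVert_append, Walk.getVert_append]
          rw [if_neg (by omega), if_neg (by omega)]
          have g1 := congrArg (fun z : SAWType G (γ.getVert (s₀ : ℕ)) (n - (ℓ₀f : ℕ)) =>
            z.1.2.getVert (j - (ℓ₀f : ℕ))) hlost
          simp only [Walk.getVert_copy] at g1
          rw [hka, hkb]
          exact g1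
      · have h2b : ¬ n ≤ 2 * (A b.1).length := by
          by_contra hc
          rw [if_neg h2a, if_pos hc] at hdir
          exact Bool.noConfusion hdir
        dsimp only at hab
        rw [dif_neg h2a, dif_neg h2b] at hab
        have hρ := congrArg Prod.fst hab
        have hlost := congrArg Prod.snd hab
        simp only at hρ hlost
        have hka : (A a.1).length = n - (ℓ₀f : ℕ) := by
          dsimp only [Lf] at hla; rw [if_neg h2a] at hla
          have := hKn a.1; omega
        have hkb : (A b.1).length = n - (ℓ₀f : ℕ) := by
          dsimp only [Lf] at hlb; rw [if_neg h2b] at hlb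
          have := hKn b.1; omega
        refine Subtype.ext (sawExt fun j => ?_)
        have hja := congrArg (fun p => Walk.getVert p j) (hAB a.1).symm
        have hjb := congrArg (fun p => Walk.getVert p j) (hAB b.1).symm
        rw [hja, hjb]
        rcases le_or_gt j (n - (ℓ₀f : ℕ)) with hj | hj
        · rw [Walk.getVert_append_left _ _ j (by omega),
              Walk.getVert_append_left _ _ j (by omega)]
          have e1 : (A a.1).getVert j = (A a.1).reverse.getVert ((n - (ℓ₀f : ℕ)) - j) := by
            rw [Walk.getVert_reverse]
            congr 1
            omega
          have e2 : (A b.1).getVert j = (A b.1).reverse.getVert ((n - (ℓ₀f : ℕ)) - j) := by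
            rw [Walk.getVert_reverse]
            congr 1
            omega
          rw [e1, e2]
          have g1 := congrArg (fun z : SAWType G (γ.getVert (s₀ : ℕ)) (n - (ℓ₀f : ℕ)) =>
            z.1.2.getVert ((n - (ℓ₀f : ℕ)) - j)) hlost
          simp only [Walk.getVert_copy] at g1
          exact g1
        · rw [Walk.getVert_append, Walk.getVert_append]
          rw [if_neg (by omega), if_neg (by omega)]
          have f1 := Walk.getVert_append_right (F a.1) (B a.1) (j - (A a.1).length)
          have f2 := Walk.getVert_append_right (F b.1) (B b.1) (j - (A b.1).length)
          rw [hka] at f1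
          rw [hkb] at f2
          have ea : (F a.1).length + (j - (n - (ℓ₀f : ℕ))) = (s₀ : ℕ) + (j - (n - (ℓ₀f : ℕ))) := by
            rw [hF2, hsa]
          have eb : (F b.1).length + (j - (n - (ℓ₀f : ℕ))) = (s₀ : ℕ) + (j - (n - (ℓ₀f : ℕ))) := by
            rw [hF2, hsb]
          rw [ea] at f1
          rw [eb] at f2
          rw [hka, hkb, ← f1, ← f2]
          exact congrArg (fun z : SAWType G v ((s₀ : ℕ) + (ℓ₀f : ℕ)) =>
            z.1.2.getVert ((s₀ : ℕ) + (j - (n - (ℓ₀f : ℕ))))) hρ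
    · -- card of the product
      rw [Nat.card_prod]
      refine Nat.mul_le_mul_left _ ?_
      exact sawCount'_le_sup hdeg hW _ _
  -- now extract the maximal term
  have hne : Nonempty (Fin (γ.length + 1) × {ℓ : Fin (n + 1) // n ≤ 2 * (ℓ : ℕ)} × Bool) := ⟨⟨0, ⟨⟨n, by omega⟩, by simp; omega⟩, true⟩⟩
  obtain ⟨i₀, -, hmax⟩ := Finset.exists_max_image (Finset.univ : Finset (Fin (γ.length + 1) × {ℓ : Fin (n + 1) // n ≤ 2 * (ℓ : ℕ)} × Bool)) fbnd
    ⟨Classical.arbitrary (Fin (γ.length + 1) × {ℓ : Fin (n + 1) // n ≤ 2 * (ℓ : ℕ)} × Bool), Finset.mem_univ _⟩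
  have hsum : ∑ i : (Fin (γ.length + 1) × {ℓ : Fin (n + 1) // n ≤ 2 * (ℓ : ℕ)} × Bool), fbnd i ≤ Fintype.card (Fin (γ.length + 1) × {ℓ : Fin (n + 1) // n ≤ 2 * (ℓ : ℕ)} × Bool) * fbnd i₀ := by
    have := Finset.sum_le_card_nsmul (Finset.univ : Finset (Fin (γ.length + 1) × {ℓ : Fin (n + 1) // n ≤ 2 * (ℓ : ℕ)} × Bool)) fbnd (fbnd i₀)
      (fun x _ => hmax x (Finset.mem_univ x))
    simpa [Finset.card_univ, smul_eq_mul] using this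
  have hcard : Fintype.card (Fin (γ.length + 1) × {ℓ : Fin (n + 1) // n ≤ 2 * (ℓ : ℕ)} × Bool) ≤ 2 * (γ.length + 1) * (n + 1) := by
    rw [Fintype.card_prod, Fintype.card_prod, Fintype.card_fin, Fintype.card_bool]
    have hsub : Fintype.card {ℓ : Fin (n + 1) // n ≤ 2 * (ℓ : ℕ)} ≤ n + 1 := by
      refine le_trans (Fintype.card_subtype_le _) ?_
      simp
    calc (γ.length + 1) * (Fintype.card {ℓ : Fin (n + 1) // n ≤ 2 * (ℓ : ℕ)} * 2)
        ≤ (γ.length + 1) * ((n + 1) * 2) := by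
          exact Nat.mul_le_mul_left _ (Nat.mul_le_mul_right _ hsub)
      _ = 2 * (γ.length + 1) * (n + 1) := by ring
  refine ⟨(i₀.1 : ℕ), ((i₀.2.1 : Fin (n+1)) : ℕ), i₀.1.is_le,
    (i₀.2.1 : Fin (n+1)).is_le, i₀.2.1.2, ?_⟩
  calc sawCount' G w n ≤ ∑ i : (Fin (γ.length + 1) × {ℓ : Fin (n + 1) // n ≤ 2 * (ℓ : ℕ)} × Bool), fbnd i := key
    _ ≤ Fintype.card (Fin (γ.length + 1) × {ℓ : Fin (n + 1) // n ≤ 2 * (ℓ : ℕ)} × Bool) * fbnd i₀ := hsum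
    _ ≤ 2 * (γ.length + 1) * (n + 1) * fbnd i₀ :=
        Nat.mul_le_mul_right _ hcard
    _ = _ := rfl

end SAW

set_option maxHeartbeats 1000000 in
open Filter Topology in
theorem main' {V : Type*} (G : SimpleGraph V)
    (hinf : Infinite V) (hconn : G.Connected)
    (hdeg : ∀ v : V, (G.neighborSet v).Finite)
    (hquasi : ∃ W : Finset V, ∀ v : V, ∃ φ : G ≃g G, φ v ∈ W) :
    ∃ μ : ℝ,
      (∀ v : V,
        Filter.Tendsto (fun n : ℕ => (sawCount' G v n : ℝ) ^ (1 / (n : ℝ)))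
          Filter.atTop (nhds μ)) ∧
      Filter.Tendsto (fun n : ℕ => (sawSup' G n : ℝ) ^ (1 / (n : ℝ)))
        Filter.atTop (nhds μ) := by
  classical
  obtain ⟨W, hW⟩ := hquasi
  haveI : Nonempty V := hconn.nonempty
  have hΛ1 : ∀ n, 1 ≤ sawSup' G n := fun n => sawSup'_pos hdeg hW hconn hinf n
  have hΛpos : ∀ n, (0:ℝ) < (sawSup' G n : ℝ) := fun n => by exact_mod_cast hΛ1 n
  have hc1 : ∀ (v : V) n, 1 ≤ sawCount' G v n := fun v n => sawCount'_pos hconn hinf hdeg v n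
  have hcpos : ∀ (v : V) n, (0:ℝ) < (sawCount' G v n : ℝ) := fun v n => by exact_mod_cast hc1 v n
  have hcΛ : ∀ (v : V) n, sawCount' G v n ≤ sawSup' G n := fun v n => sawCount'_le_sup hdeg hW v n
  have hsub : Subadditive (fun n => Real.log (sawSup' G n)) := by
    intro m n
    rw [← Real.log_mul (ne_of_gt (hΛpos m)) (ne_of_gt (hΛpos n))]
    have hle : (sawSup' G (m+n) : ℝ) ≤ (sawSup' G m : ℝ) * (sawSup' G n : ℝ) := by
      exact_mod_cast sawSup'_add_le hdeg hW m n
    exact Real.log_le_log (hΛpos _) hle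
  have hu0 : ∀ n, 0 ≤ Real.log (sawSup' G n) := fun n => Real.log_nonneg (by exact_mod_cast hΛ1 n)
  have hbdd : BddBelow (Set.range fun n : ℕ => Real.log (sawSup' G n) / n) := by
    refine ⟨0, ?_⟩
    rintro x ⟨n, rfl⟩
    exact div_nonneg (hu0 n) (Nat.cast_nonneg n)
  set L := hsub.lim with hLdef
  have hLt : Filter.Tendsto (fun n : ℕ => Real.log (sawSup' G n) / n) Filter.atTop (nhds L) :=
    hsub.tendsto_lim hbdd
  have hL0 : 0 ≤ L := ge_of_tendsto' hLt (fun n => div_nonneg (hu0 n) (Nat.cast_nonneg n))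
  have hrpow : ∀ (f : ℕ → ℕ), (∀ n, 1 ≤ f n) →
      ∀ n : ℕ, ((f n : ℝ)) ^ (1/(n:ℝ)) = Real.exp (Real.log (f n) / n) := by
    intro f hf n
    rw [Real.rpow_def_of_pos (by exact_mod_cast hf n), mul_one_div]
  -- Fact B : exp (m L) ≤ Λ m
  have hB : ∀ m : ℕ, m ≠ 0 → Real.exp ((m:ℝ) * L) ≤ (sawSup' G m : ℝ) := by
    intro m hm
    have h1 := hsub.lim_le_div hbdd hm
    have hm' : (0:ℝ) < (m:ℝ) := by exact_mod_cast Nat.pos_of_ne_zero hm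
    rw [le_div_iff₀ hm'] at h1
    rw [← Real.exp_log (hΛpos m)]
    exact Real.exp_le_exp.2 (by linarith)
  -- Fact C
  have hC : ∀ ε : ℝ, 0 < ε → ∃ C : ℝ, 1 ≤ C ∧
      ∀ j : ℕ, (sawSup' G j : ℝ) ≤ C * Real.exp ((L+ε) * j) := by
    intro ε hε
    have hev : ∀ᶠ j : ℕ in Filter.atTop, Real.log (sawSup' G j) / (j:ℝ) < L + ε :=
      hLt.eventually_lt_const (by linarith)
    obtain ⟨J, hJ⟩ := Filter.eventually_atTop.1 (hev.and (Filter.eventually_ge_atTop 1))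
    have hsumnn : (0:ℝ) ≤ ∑ k ∈ Finset.range J, (sawSup' G k : ℝ) :=
      Finset.sum_nonneg fun k _ => by positivity
    refine ⟨1 + ∑ k ∈ Finset.range J, (sawSup' G k : ℝ), by linarith, ?_⟩
    intro j
    have hexp1 : (1:ℝ) ≤ Real.exp ((L+ε) * j) :=
      Real.one_le_exp (mul_nonneg (by linarith) (Nat.cast_nonneg j))
    rcases lt_or_ge j J with hj | hj
    · have hmem : (sawSup' G j : ℝ) ≤ ∑ k ∈ Finset.range J, (sawSup' G k : ℝ) :=
        Finset.single_le_sum (f := fun k => (sawSup' G k : ℝ)) (fun k _ => by positivity) (Finset.mem_range.2 hj)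
      calc (sawSup' G j : ℝ) ≤ 1 + ∑ k ∈ Finset.range J, (sawSup' G k : ℝ) := by linarith
        _ ≤ _ := le_mul_of_one_le_right (by linarith) hexp1
    · obtain ⟨h1, h2⟩ := hJ j hj
      have hj0 : (0:ℝ) < (j:ℝ) := by exact_mod_cast h2
      rw [div_lt_iff₀ hj0] at h1
      have h3 : (sawSup' G j : ℝ) ≤ Real.exp ((L+ε)*j) := by
        rw [← Real.exp_log (hΛpos j)]
        exact Real.exp_le_exp.2 (by linarith)
      exact h3.trans (le_mul_of_one_le_left (Real.exp_nonneg _) (by linarith))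
  refine ⟨Real.exp L, ?_, ?_⟩
  · -- per-vertex limit
    intro v
    suffices hlog : Filter.Tendsto (fun m : ℕ => Real.log (sawCount' G v m) / m)
        Filter.atTop (nhds L) by
      exact ((Real.continuous_exp.tendsto L).comp hlog).congr
        (fun n => (hrpow _ (hc1 v) n).symm)
    -- choice of connecting paths
    have hpath : ∀ w : V, ∃ p : G.Walk v w, p.IsPath :=
      fun w => ⟨(hconn.preconnected v w).some.bypass, SimpleGraph.Walk.bypass_isPath _⟩
    choose P hP using hpath
    set D : ℕ := W.sup fun w => (P w).length with hD
    have hPD : ∀ w ∈ W, (P w).length ≤ D := fun w hw => by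
      rw [hD]; exact Finset.le_sup (f := fun w => (P w).length) hw
    -- key lower bound
    have hkey : ∀ ε : ℝ, 0 < ε → ∃ K : ℝ, 1 ≤ K ∧ ∀ m : ℕ, 1 ≤ m →
        Real.exp ((m:ℝ)*L - ε*(m:ℝ) - (D:ℝ)*(L+ε)) / (K * (2*(m:ℝ)+1))
          ≤ (sawCount' G v m : ℝ) := by
      intro ε hε
      obtain ⟨C, hC1, hCle⟩ := hC ε hε
      have hK1 : (1:ℝ) ≤ 2*((D:ℝ)+1)*C^2 := by nlinarith [sq_nonneg C, Nat.cast_nonneg (α := ℝ) D]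
      refine ⟨2*((D:ℝ)+1)*C^2, hK1, ?_⟩
      intro m hm
      obtain ⟨w, hwW, hwmax⟩ := exists_sawSup' hdeg hW (2*m)
      obtain ⟨s, ℓ, hs, hln, h2l, hineq⟩ := surgery hdeg hW (P w) (hP w) (2*m)
      have hsD : s ≤ D := le_trans hs (hPD w hwW)
      have hml : m ≤ ℓ := by omega
      have hg : (P w).length ≤ D := hPD w hwW
      -- cast the surgery inequality
      have h1 : (sawSup' G (2*m) : ℝ) ≤ 2*((P w).length+1)*(2*(m:ℝ)+1) *
          ((sawCount' G v (s+ℓ) : ℝ) * (sawSup' G (2*m-ℓ) : ℝ)) := by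
        rw [hwmax] at hineq
        have := (Nat.cast_le (α := ℝ)).2 hineq
        push_cast at this
        convert this using 2 <;> push_cast <;> ring
      -- step down
      have h2 : (sawCount' G v (s+ℓ) : ℝ) ≤
          (sawCount' G v m : ℝ) * (sawSup' G (s+ℓ-m) : ℝ) := by
        have := sawCount'_add_le hdeg hW v m (s+ℓ-m)
        rw [show m + (s+ℓ-m) = s+ℓ by omega] at this
        exact_mod_cast this
      have h3 : (sawSup' G (s+ℓ-m) : ℝ) ≤ C * Real.exp ((L+ε) * ((s+ℓ-m : ℕ):ℝ)) := hCle _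
      have h4 : (sawSup' G (2*m-ℓ) : ℝ) ≤ C * Real.exp ((L+ε) * ((2*m-ℓ : ℕ):ℝ)) := hCle _
      have hB2 : Real.exp ((2*(m:ℝ))*L) ≤ (sawSup' G (2*m) : ℝ) := by
        have := hB (2*m) (by omega)
        convert this using 3
        push_cast
        ring
      -- combine
      have hchain : Real.exp ((2*(m:ℝ))*L) ≤ (2*((D:ℝ)+1)*C^2 * (2*(m:ℝ)+1)) *
          ((sawCount' G v m : ℝ) * Real.exp ((L+ε) * ((m:ℝ)+(D:ℝ)))) := by
        have e5 : ((s+ℓ-m : ℕ):ℝ) + ((2*m-ℓ : ℕ):ℝ) = ((s : ℕ):ℝ) + (m:ℝ) := by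
          push_cast [Nat.cast_sub (by omega : m ≤ s + ℓ), Nat.cast_sub (by omega : ℓ ≤ 2*m)]
          ring
        calc Real.exp ((2*(m:ℝ))*L) ≤ (sawSup' G (2*m) : ℝ) := hB2
          _ ≤ 2*((P w).length+1)*(2*(m:ℝ)+1) *
              ((sawCount' G v (s+ℓ) : ℝ) * (sawSup' G (2*m-ℓ) : ℝ)) := h1
          _ ≤ 2*((D:ℝ)+1)*(2*(m:ℝ)+1) *
              ((sawCount' G v (s+ℓ) : ℝ) * (sawSup' G (2*m-ℓ) : ℝ)) := by
            gcongr
          _ ≤ 2*((D:ℝ)+1)*(2*(m:ℝ)+1) *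
              (((sawCount' G v m : ℝ) * (sawSup' G (s+ℓ-m) : ℝ)) * (sawSup' G (2*m-ℓ) : ℝ)) := by
            gcongr
          _ ≤ 2*((D:ℝ)+1)*(2*(m:ℝ)+1) *
              (((sawCount' G v m : ℝ) * (C * Real.exp ((L+ε) * ((s+ℓ-m : ℕ):ℝ)))) *
                (C * Real.exp ((L+ε) * ((2*m-ℓ : ℕ):ℝ)))) := by
            gcongr <;> first | exact h3 | exact h4 | positivity
          _ = (2*((D:ℝ)+1)*C^2 * (2*(m:ℝ)+1)) * ((sawCount' G v m : ℝ) *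
              (Real.exp ((L+ε) * ((s+ℓ-m : ℕ):ℝ)) * Real.exp ((L+ε) * ((2*m-ℓ : ℕ):ℝ)))) := by
            ring
          _ = (2*((D:ℝ)+1)*C^2 * (2*(m:ℝ)+1)) * ((sawCount' G v m : ℝ) *
              Real.exp ((L+ε) * (((s : ℕ):ℝ) + (m:ℝ)))) := by
            rw [← Real.exp_add, ← mul_add, e5]
          _ ≤ (2*((D:ℝ)+1)*C^2 * (2*(m:ℝ)+1)) * ((sawCount' G v m : ℝ) *
              Real.exp ((L+ε) * ((m:ℝ)+(D:ℝ)))) := by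
            have hsD' : ((s:ℕ):ℝ) ≤ (D:ℝ) := by exact_mod_cast hsD
            have hmono : (L+ε) * (((s:ℕ):ℝ) + (m:ℝ)) ≤ (L+ε) * ((m:ℝ)+(D:ℝ)) :=
              mul_le_mul_of_nonneg_left (by linarith) (by linarith)
            gcongr <;> first | positivity | exact Real.exp_le_exp.2 hmono | exact hmono
      rw [div_le_iff₀ (by positivity)]
      have hY : Real.exp ((m:ℝ)*L - ε*(m:ℝ) - (D:ℝ)*(L+ε)) *
          Real.exp ((L+ε) * ((m:ℝ)+(D:ℝ))) = Real.exp ((2*(m:ℝ))*L) := by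
        rw [← Real.exp_add]
        congr 1
        ring
      have := hchain
      rw [← hY] at this
      have hexppos : (0:ℝ) < Real.exp ((L+ε) * ((m:ℝ)+(D:ℝ))) := Real.exp_pos _
      calc Real.exp ((m:ℝ)*L - ε*(m:ℝ) - (D:ℝ)*(L+ε))
          = Real.exp ((m:ℝ)*L - ε*(m:ℝ) - (D:ℝ)*(L+ε)) * Real.exp ((L+ε) * ((m:ℝ)+(D:ℝ))) /
            Real.exp ((L+ε) * ((m:ℝ)+(D:ℝ))) := by field_simp
        _ ≤ (2*((D:ℝ)+1)*C^2 * (2*(m:ℝ)+1)) * ((sawCount' G v m : ℝ) *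
              Real.exp ((L+ε) * ((m:ℝ)+(D:ℝ)))) / Real.exp ((L+ε) * ((m:ℝ)+(D:ℝ))) := by
            gcongr
        _ = (sawCount' G v m : ℝ) * (2*((D:ℝ)+1)*C^2 * (2*(m:ℝ)+1)) := by
            field_simp
    -- the log-limit via order topology
    rw [tendsto_order]
    constructor
    · -- lower bounds
      intro b hb
      set ε : ℝ := (L - b) / 3 with hεdef
      have hε : 0 < ε := by simp only [hεdef]; linarith
      obtain ⟨K, hK1, hKle⟩ := hkey ε hε
      -- the remainder term tends to 0
      have hlogm : Filter.Tendsto (fun m : ℕ => Real.log (2*(m:ℝ)+1) / m)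
          Filter.atTop (nhds 0) := by
        have h0 : Filter.Tendsto (fun x : ℝ => Real.log x / x) Filter.atTop (nhds 0) :=
          Real.isLittleO_log_id_atTop.tendsto_div_nhds_zero
        have h1 : Filter.Tendsto (fun m : ℕ => 2*(m:ℝ)+1) Filter.atTop Filter.atTop := by
          apply Filter.tendsto_atTop_mono (fun m => by push_cast; linarith : ∀ m : ℕ, (m:ℝ) ≤ 2*(m:ℝ)+1)
          exact tendsto_natCast_atTop_atTop
        have h2 : Filter.Tendsto (fun m : ℕ => Real.log (2*(m:ℝ)+1) / (2*(m:ℝ)+1))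
            Filter.atTop (nhds 0) := h0.comp h1
        have h3 : Filter.Tendsto (fun m : ℕ => 3 * (Real.log (2*(m:ℝ)+1) / (2*(m:ℝ)+1)))
            Filter.atTop (nhds 0) := by
          have := h2.const_mul (3:ℝ)
          simpa using this
        refine tendsto_of_tendsto_of_tendsto_of_le_of_le' tendsto_const_nhds h3 ?_ ?_
        · filter_upwards [Filter.eventually_ge_atTop 1] with m hm
          have hm1 : (1:ℝ) ≤ (m:ℝ) := by exact_mod_cast hm
          have : (0:ℝ) ≤ Real.log (2*(m:ℝ)+1) := Real.log_nonneg (by linarith)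
          positivity
        · filter_upwards [Filter.eventually_ge_atTop 1] with m hm
          have hm1 : (1:ℝ) ≤ (m:ℝ) := by exact_mod_cast hm
          have hlognn : (0:ℝ) ≤ Real.log (2*(m:ℝ)+1) := Real.log_nonneg (by linarith)
          rw [div_le_iff₀ (by linarith : (0:ℝ) < (m:ℝ)), mul_comm (3:ℝ) _,
            div_mul_eq_mul_div, div_mul_eq_mul_div, le_div_iff₀ (by linarith)]
          nlinarith [mul_nonneg hlognn (by linarith : (0:ℝ) ≤ (m:ℝ) - 1)]
      have hrem : Filter.Tendsto
          (fun m : ℕ => ((D:ℝ)*(L+ε) + Real.log K + Real.log (2*(m:ℝ)+1)) / m)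
          Filter.atTop (nhds 0) := by
        have hconst := tendsto_const_div_atTop_nhds_zero_nat ((D:ℝ)*(L+ε) + Real.log K)
        have := hconst.add hlogm
        simp only [add_zero] at this
        refine this.congr fun m => ?_
        rw [← add_div]
      have hev : ∀ᶠ m : ℕ in Filter.atTop,
          ((D:ℝ)*(L+ε) + Real.log K + Real.log (2*(m:ℝ)+1)) / m < ε :=
        hrem.eventually_lt_const hε
      filter_upwards [hev, Filter.eventually_ge_atTop 1] with m hm hm1
      have hm0 : (0:ℝ) < (m:ℝ) := by exact_mod_cast hm1
      have hlb := hKle m hm1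
      have hclb : Real.exp ((m:ℝ)*L - ε*(m:ℝ) - (D:ℝ)*(L+ε)) / (K * (2*(m:ℝ)+1))
          ≤ (sawCount' G v m : ℝ) := hlb
      have hpos : (0:ℝ) < Real.exp ((m:ℝ)*L - ε*(m:ℝ) - (D:ℝ)*(L+ε)) / (K * (2*(m:ℝ)+1)) := by
        positivity
      have hlog1 : Real.log (Real.exp ((m:ℝ)*L - ε*(m:ℝ) - (D:ℝ)*(L+ε)) / (K * (2*(m:ℝ)+1)))
          ≤ Real.log (sawCount' G v m) := Real.log_le_log hpos hclb
      rw [Real.log_div (ne_of_gt (Real.exp_pos _)) (by positivity), Real.log_exp,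
        Real.log_mul (by positivity) (by positivity)] at hlog1
      have hKnn : 0 ≤ Real.log K := Real.log_nonneg hK1
      -- divide by m
      have h7 : ((m:ℝ)*L - ε*(m:ℝ) - ((D:ℝ)*(L+ε) + Real.log K + Real.log (2*(m:ℝ)+1))) / m
          ≤ Real.log (sawCount' G v m) / m := by
        apply div_le_div_of_nonneg_right _ (Nat.cast_nonneg m)
        linarith [hlog1]
      have h8 : ((m:ℝ)*L - ε*(m:ℝ) - ((D:ℝ)*(L+ε) + Real.log K + Real.log (2*(m:ℝ)+1))) / m
          = L - ε - ((D:ℝ)*(L+ε) + Real.log K + Real.log (2*(m:ℝ)+1)) / m := by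
        field_simp
      rw [h8] at h7
      have hb3 : b = L - 3*ε := by rw [hεdef]; ring
      have h9 : b < L - ε - ((D:ℝ)*(L+ε) + Real.log K + Real.log (2*(m:ℝ)+1)) / m := by
        rw [hb3]
        linarith [hm]
      exact lt_of_lt_of_le h9 h7
    · -- upper bounds
      intro b hb
      have hev : ∀ᶠ m : ℕ in Filter.atTop, Real.log (sawSup' G m) / m < b :=
        hLt.eventually_lt_const hb
      filter_upwards [hev] with m hm
      refine lt_of_le_of_lt ?_ hm
      apply div_le_div_of_nonneg_right _ (Nat.cast_nonneg m)
      exact Real.log_le_log (hcpos v m) (by exact_mod_cast hcΛ v m)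
  · -- the sup limit
    have : Filter.Tendsto (fun n : ℕ => Real.exp (Real.log (sawSup' G n) / n))
        Filter.atTop (nhds (Real.exp L)) :=
      (Real.continuous_exp.tendsto L).comp hLt
    exact this.congr (fun n => (hrpow _ hΛ1 n).symm)


theorem tendsto_sawCount_rpow_of_quasiTransitive
    {V : Type*} (G : SimpleGraph V)
    (hinf : Infinite V) (hconn : G.Connected)
    (hdeg : ∀ v : V, (G.neighborSet v).Finite)
    (hquasi : ∃ W : Finset V, ∀ v : V, ∃ φ : G ≃g G, φ v ∈ W) :
    ∃ μ : ℝ,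
      (∀ v : V,
        Filter.Tendsto (fun n : ℕ => (sawCount G v n : ℝ) ^ (1 / (n : ℝ)))
          Filter.atTop (nhds μ)) ∧
      Filter.Tendsto (fun n : ℕ => (sawSup G n : ℝ) ^ (1 / (n : ℝ)))
        Filter.atTop (nhds μ) := by
  have h := main' G hinf hconn hdeg hquasi
  obtain ⟨μ, h1, h2⟩ := h
  have hc : ∀ (v : V) (n : ℕ), sawCount G v n = sawCount' G v n := fun _ _ => rfl
  have hs : ∀ n : ℕ, sawSup G n = sawSup' G n := fun _ => rfl
  refine ⟨μ, fun v => ?_, ?_⟩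
  · simpa only [hc] using h1 v
  · simpa only [hs] using h2
end

section
/- Let G be an infinite, connected simple graph with finite vertex-degrees, and assume there exists a vertex v with limsup_{n→∞} σ_n(v)^{1/n} < ∞. Then limsup_{n→∞} σ_n(u)^{1/n} = limsup_{n→∞} σ_n(v)^{1/n} for all vertices u and v. -/
open Filter Topology
open scoped ENNReal

/-- `limsup_{n→∞} σ_n(v)^{1/n}`, computed in `ℝ≥0∞`. -/
noncomputable def sawLimsup {V : Type*} (G : SimpleGraph V) (v : V) : ℝ≥0∞ :=
  Filter.limsup (fun n : ℕ => (sawCount G v n : ℝ≥0∞) ^ (1 / (n : ℝ))) Filter.atTop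

namespace SawProof

open SimpleGraph
open scoped NNReal

variable {V : Type*} {G : SimpleGraph V}

lemma walkLen_finite (hdeg : ∀ v : V, (G.neighborSet v).Finite) :
    ∀ (n : ℕ) (v : V), Finite {p : Σ u : V, G.Walk v u // p.2.length = n} := by
  intro n
  induction n with
  | zero =>
    intro v
    refine Finite.of_injective (fun _ => (0 : Fin 1)) ?_
    rintro ⟨⟨u, p⟩, hp⟩ ⟨⟨u', p'⟩, hp'⟩ -
    cases p with
    | nil =>
      cases p' with
      | nil => rfl
      | cons h q => simp at hp'
    | cons h q => simp at hp
  | succ n ih =>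
    intro v
    have : Finite (Σ w : G.neighborSet v, {p : Σ u : V, G.Walk w.1 u // p.2.length = n}) := by
      have := fun v => (hdeg v).to_subtype
      infer_instance
    refine Finite.of_surjective
      (fun x : Σ w : G.neighborSet v, {p : Σ u : V, G.Walk w.1 u // p.2.length = n} =>
        (⟨⟨x.2.1.1, Walk.cons x.1.2 x.2.1.2⟩, by exact congrArg (· + 1) x.2.2⟩ :
          {p : Σ u : V, G.Walk v u // p.2.length = n + 1})) ?_
    rintro ⟨⟨u, p⟩, hp⟩
    cases p with
    | nil => simp at hp
    | cons h q =>
      exact ⟨⟨⟨_, h⟩, ⟨⟨u, q⟩, by simpa using hp⟩⟩, rfl⟩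

lemma sawSet_finite (hdeg : ∀ v : V, (G.neighborSet v).Finite) (v : V) (n : ℕ) :
    Finite {p : Σ u : V, G.Walk v u // p.2.IsPath ∧ p.2.length = n} := by
  have := walkLen_finite hdeg n v
  exact Finite.of_injective (fun p => (⟨p.1, p.2.2⟩ : {p : Σ u : V, G.Walk v u // p.2.length = n}))
    (by rintro ⟨p, hp⟩ ⟨q, hq⟩ h; simpa using h)

lemma saw_step_down {v : V} {n : ℕ}
    (h : Nonempty {p : Σ u : V, G.Walk v u // p.2.IsPath ∧ p.2.length = n + 1}) :
    Nonempty {p : Σ u : V, G.Walk v u // p.2.IsPath ∧ p.2.length = n} := by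
  obtain ⟨⟨u, p⟩, hp, hl⟩ := h
  have hrp : p.reverse.IsPath := hp.reverse
  have hrl : p.reverse.length = n + 1 := by simpa using hl
  cases hq : p.reverse with
  | nil => rw [hq] at hrl; simp at hrl
  | cons h r =>
    rw [hq] at hrp hrl
    exact ⟨⟨_, r.reverse⟩, (Walk.IsPath.of_cons hrp).reverse, by simpa using hrl⟩

lemma saw_nonempty [Infinite V] (hconn : G.Connected)
    (hdeg : ∀ v : V, (G.neighborSet v).Finite) (v : V) (n : ℕ) :
    Nonempty {p : Σ u : V, G.Walk v u // p.2.IsPath ∧ p.2.length = n} := by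
  classical
  by_contra hne
  have key : ∀ m, ¬ Nonempty {p : Σ u : V, G.Walk v u // p.2.IsPath ∧ p.2.length = n + m} := by
    intro m
    induction m with
    | zero => simpa using hne
    | succ m ih => intro h; exact ih (saw_step_down h)
  have hlen : ∀ (u : V) (p : G.Walk v u), p.IsPath → p.length < n := by
    intro u p hp
    by_contra hle
    push_neg at hle
    obtain ⟨m, hm⟩ := Nat.exists_eq_add_of_le hle
    exact key m ⟨⟨u, p⟩, hp, hm⟩
  have hfin : (Set.univ : Set V).Finite := by
    have hsub : (Set.univ : Set V) ⊆
        ⋃ k ∈ Finset.range n, Set.range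
          (fun q : {p : Σ u : V, G.Walk v u // p.2.IsPath ∧ p.2.length = k} => q.1.1) := by
      intro w _
      obtain ⟨p⟩ := (hconn v w)
      refine Set.mem_iUnion₂.2 ⟨p.toPath.1.length, ?_, ⟨⟨⟨w, p.toPath.1⟩, p.toPath.2, rfl⟩, rfl⟩⟩
      simpa using hlen w p.toPath.1 p.toPath.2
    refine Set.Finite.subset ?_ hsub
    refine Set.Finite.biUnion (Finset.range n).finite_toSet (fun k _ => ?_)
    have := sawSet_finite hdeg v k
    exact Set.finite_range _
  rw [Set.finite_univ_iff] at hfin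
  exact not_finite V

lemma sawCount_pos [Infinite V] (hconn : G.Connected)
    (hdeg : ∀ v : V, (G.neighborSet v).Finite) (v : V) (n : ℕ) :
    0 < sawCount G v n := by
  have h1 := saw_nonempty hconn hdeg v n
  have h2 := sawSet_finite hdeg v n
  rw [sawCount]; exact Nat.card_pos

open scoped Classical in
noncomputable def sawSplit {u v : V} (hadj : G.Adj u v) (n : ℕ)
    (p : {p : Σ x : V, G.Walk v x // p.2.IsPath ∧ p.2.length = n}) :
    {q : Σ x : V, G.Walk u x // q.2.IsPath ∧ q.2.length = n + 1} ⊕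
      (Σ k : Fin (n + 1), {q : Σ x : V, G.Walk u x // q.2.IsPath ∧ q.2.length = k} ×
        {q : Σ x : V, G.Walk u x // q.2.IsPath ∧ q.2.length = n - k}) :=
  if h : u ∈ p.1.2.support then
    Sum.inr ⟨⟨(p.1.2.takeUntil u h).length,
        Nat.lt_succ_of_le (by
          have h1 := Walk.length_takeUntil_le p.1.2 h
          have h2 := p.2.2
          omega)⟩,
      ⟨⟨⟨v, (p.1.2.takeUntil u h).reverse⟩, (p.2.1.takeUntil h).reverse, by simp⟩,
       ⟨⟨p.1.1, p.1.2.dropUntil u h⟩, p.2.1.dropUntil h, by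
          have h1 := congrArg Walk.length (p.1.2.take_spec h)
          rw [Walk.length_append] at h1
          have h2 := p.2.2
          simp only [Fin.val_mk]
          omega⟩⟩⟩
  else
    Sum.inl ⟨⟨p.1.1, Walk.cons hadj p.1.2⟩, p.2.1.cons h, by simp [p.2.2]⟩

lemma sawSplit_injective {u v : V} (hadj : G.Adj u v) (n : ℕ) :
    Function.Injective (sawSplit (G := G) hadj n) := by
  classical
  rintro ⟨⟨x, p⟩, hp, hl⟩ ⟨⟨x', p'⟩, hp', hl'⟩ heq
  unfold sawSplit at heq
  by_cases h : u ∈ p.support <;> by_cases h' : u ∈ p'.support <;>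
    simp only [dif_pos, dif_neg, h, h'] at heq
  · -- both split
    have hF := congrArg (Sum.elim
        (fun _ => (none : Option ((Σ x : V, G.Walk u x) × (Σ x : V, G.Walk u x))))
        (fun s => some (s.2.1.1, s.2.2.1))) heq
    simp only [Sum.elim_inr, Option.some.injEq, Prod.mk.injEq] at hF
    obtain ⟨e1, e2⟩ := hF
    have ht : p.takeUntil u h = p'.takeUntil u h' := by
      have hrev : (p.takeUntil u h).reverse = (p'.takeUntil u h').reverse :=
        eq_of_heq (Sigma.mk.inj_iff.mp e1).2
      simpa using congrArg Walk.reverse hrev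
    obtain ⟨hx, hd⟩ := Sigma.mk.inj_iff.mp e2
    subst hx
    have hdrop : p.dropUntil u h = p'.dropUntil u h' := eq_of_heq hd
    have hpp : p = p' := by rw [← p.take_spec h, ← p'.take_spec h', ht, hdrop]
    exact Subtype.ext (Sigma.ext rfl (heq_of_eq hpp))
  · exact absurd heq (by simp)
  · exact absurd heq (by simp)
  · -- both cons
    obtain ⟨hx, hw⟩ := Sigma.mk.inj_iff.mp (Subtype.ext_iff.mp (Sum.inl.inj heq))
    subst hx
    have hcc : Walk.cons hadj p = Walk.cons hadj p' := eq_of_heq hw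
    simp only [Walk.cons.injEq, heq_eq_eq, true_and] at hcc
    exact Subtype.ext (Sigma.ext rfl (heq_of_eq hcc))

lemma saw_ineq {u v : V} (hadj : G.Adj u v) (hdeg : ∀ v : V, (G.neighborSet v).Finite) (n : ℕ) :
    sawCount G v n ≤ sawCount G u (n + 1) +
      ∑ k ∈ Finset.range (n + 1), sawCount G u k * sawCount G u (n - k) := by
  classical
  haveI hA : ∀ m : ℕ, Finite {q : Σ x : V, G.Walk u x // q.2.IsPath ∧ q.2.length = m} :=
    sawSet_finite hdeg u
  haveI hAf : ∀ m : ℕ, Fintype {q : Σ x : V, G.Walk u x // q.2.IsPath ∧ q.2.length = m} :=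
    fun m => Fintype.ofFinite _
  have hle : sawCount G v n ≤ Nat.card
      ({q : Σ x : V, G.Walk u x // q.2.IsPath ∧ q.2.length = n + 1} ⊕
        (Σ k : Fin (n + 1), {q : Σ x : V, G.Walk u x // q.2.IsPath ∧ q.2.length = k} ×
          {q : Σ x : V, G.Walk u x // q.2.IsPath ∧ q.2.length = n - k})) :=
    Nat.card_le_card_of_injective _ (sawSplit_injective hadj n)
  refine hle.trans (le_of_eq ?_)
  rw [Nat.card_sum]
  congr 1
  rw [Nat.card_eq_fintype_card, Fintype.card_sigma]
  rw [Fin.sum_univ_eq_sum_range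
    (fun k => Fintype.card ({q : Σ x : V, G.Walk u x // q.2.IsPath ∧ q.2.length = k} ×
      {q : Σ x : V, G.Walk u x // q.2.IsPath ∧ q.2.length = n - k}))]
  refine Finset.sum_congr rfl fun k _ => ?_
  rw [Fintype.card_prod, sawCount, sawCount, Nat.card_eq_fintype_card, Nat.card_eq_fintype_card]

lemma tendsto_nat_rpow_two_div :
    Tendsto (fun n : ℕ => ((n : ℝ≥0∞)) ^ (2 / (n : ℝ))) atTop (𝓝 1) := by
  have hreal : Tendsto (fun x : ℝ => x ^ (2 / x)) atTop (𝓝 1) := by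
    have := tendsto_rpow_div_mul_add 2 1 0 zero_ne_one
    simpa using this
  have hnat : Tendsto (fun n : ℕ => ((n : ℝ)) ^ (2 / (n : ℝ))) atTop (𝓝 1) :=
    hreal.comp tendsto_natCast_atTop_atTop
  have hnn : Tendsto (fun n : ℕ => ((n : ℝ≥0)) ^ (2 / (n : ℝ))) atTop (𝓝 (1 : ℝ≥0)) := by
    rw [← NNReal.tendsto_coe]
    convert hnat using 2 with n
    all_goals simp [NNReal.coe_rpow]
  have h2 := ENNReal.tendsto_coe.mpr hnn
  refine Tendsto.congr (fun n => ?_) (by simpa using h2)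
  rw [ENNReal.coe_rpow_of_nonneg _ (by positivity)]
  norm_cast

lemma limsup_rpow_le_of_growth {σ : ℕ → ℕ} {D a : ℝ≥0∞}
    (hDt : D < ⊤) (ha1 : 1 ≤ a) (hat : a < ⊤)
    (hb : ∀ n : ℕ, (σ n : ℝ≥0∞) ≤ D * (n + 1) * a ^ n) :
    Filter.limsup (fun n : ℕ => (σ n : ℝ≥0∞) ^ (1 / (n : ℝ))) atTop ≤ a := by
  obtain ⟨M, hM⟩ := ENNReal.exists_nat_gt hDt.ne
  have hev : ∀ᶠ n : ℕ in atTop,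
      (σ n : ℝ≥0∞) ^ (1 / (n : ℝ)) ≤ ((n : ℝ≥0∞)) ^ (2 / (n : ℝ)) * a := by
    filter_upwards [eventually_ge_atTop (max (2 * M) 1)] with n hn
    have hn1 : 1 ≤ n := le_trans (le_max_right _ _) hn
    have hnM : 2 * M ≤ n := le_trans (le_max_left _ _) hn
    have hnR : (n : ℝ) ≠ 0 := Nat.cast_ne_zero.mpr (by omega)
    have hDn : D * (↑n + 1) ≤ ((n : ℝ≥0∞)) ^ (2 : ℕ) := by
      calc D * ((n : ℝ≥0∞) + 1) ≤ (M : ℝ≥0∞) * ((n : ℝ≥0∞) + (n : ℝ≥0∞)) := by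
            refine mul_le_mul' hM.le (add_le_add le_rfl ?_)
            exact_mod_cast Nat.one_le_cast.mpr hn1
        _ = (((2 * M) * n : ℕ) : ℝ≥0∞) := by push_cast; ring
        _ ≤ ((n * n : ℕ) : ℝ≥0∞) := by exact_mod_cast Nat.mul_le_mul_right n hnM
        _ = ((n : ℝ≥0∞)) ^ (2 : ℕ) := by push_cast; ring
    have han : (a ^ (n : ℕ)) ^ (1 / (n : ℝ)) = a := by
      rw [← ENNReal.rpow_natCast a n, ← ENNReal.rpow_mul, mul_one_div,
        div_self hnR, ENNReal.rpow_one]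
    calc (σ n : ℝ≥0∞) ^ (1 / (n : ℝ))
        ≤ (D * (↑n + 1) * a ^ n) ^ (1 / (n : ℝ)) :=
          ENNReal.rpow_le_rpow (hb n) (by positivity)
      _ = (D * (↑n + 1)) ^ (1 / (n : ℝ)) * (a ^ n) ^ (1 / (n : ℝ)) :=
          ENNReal.mul_rpow_of_nonneg _ _ (by positivity)
      _ ≤ (((n : ℝ≥0∞)) ^ (2 : ℕ)) ^ (1 / (n : ℝ)) * a := by
          rw [han]; exact mul_le_mul' (ENNReal.rpow_le_rpow hDn (by positivity)) le_rfl
      _ = ((n : ℝ≥0∞)) ^ (2 / (n : ℝ)) * a := by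
          rw [← ENNReal.rpow_natCast (n : ℝ≥0∞) 2, ← ENNReal.rpow_mul]
          norm_num [div_eq_mul_inv]
  have hT : Tendsto (fun n : ℕ => ((n : ℝ≥0∞)) ^ (2 / (n : ℝ)) * a) atTop (𝓝 a) := by
    have := ENNReal.Tendsto.mul_const (b := a) tendsto_nat_rpow_two_div (Or.inl one_ne_zero)
    simpa using this
  calc Filter.limsup (fun n : ℕ => (σ n : ℝ≥0∞) ^ (1 / (n : ℝ))) atTop
      ≤ Filter.limsup (fun n : ℕ => ((n : ℝ≥0∞)) ^ (2 / (n : ℝ)) * a) atTop :=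
        Filter.limsup_le_limsup hev
    _ = a := hT.limsup_eq

lemma one_le_sawLimsup [Infinite V] (hconn : G.Connected)
    (hdeg : ∀ v : V, (G.neighborSet v).Finite) (u : V) : 1 ≤ sawLimsup G u := by
  have h : ∀ᶠ n : ℕ in atTop, (1 : ℝ≥0∞) ≤ (sawCount G u n : ℝ≥0∞) ^ (1 / (n : ℝ)) := by
    refine Eventually.of_forall fun n => ?_
    have h1 : (1 : ℝ≥0∞) ≤ (sawCount G u n : ℝ≥0∞) := by
      exact_mod_cast sawCount_pos hconn hdeg u n
    calc (1 : ℝ≥0∞) = 1 ^ (1 / (n : ℝ)) := (ENNReal.one_rpow _).symm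
      _ ≤ _ := ENNReal.rpow_le_rpow h1 (by positivity)
  calc (1 : ℝ≥0∞) = Filter.limsup (fun _ : ℕ => (1 : ℝ≥0∞)) atTop := (Filter.limsup_const 1).symm
    _ ≤ sawLimsup G u := Filter.limsup_le_limsup h

lemma sawLimsup_le_of_adj [Infinite V] (hconn : G.Connected)
    (hdeg : ∀ v : V, (G.neighborSet v).Finite) {u v : V} (hadj : G.Adj u v) :
    sawLimsup G v ≤ sawLimsup G u := by
  rcases eq_top_or_lt_top (sawLimsup G u) with htop | hL
  · rw [htop]; exact le_top
  have hone : 1 ≤ sawLimsup G u := one_le_sawLimsup hconn hdeg u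
  refine ENNReal.le_of_forall_pos_le_add fun ε hε _ => ?_
  set a : ℝ≥0∞ := sawLimsup G u + ε with ha
  have haL : sawLimsup G u < a :=
    ENNReal.lt_add_right hL.ne (by exact_mod_cast hε.ne')
  have ha1 : 1 ≤ a := le_trans hone le_self_add
  have hat : a < ⊤ := ENNReal.add_lt_top.mpr ⟨hL, ENNReal.coe_lt_top⟩
  obtain ⟨N, hN⟩ := eventually_atTop.1 (Filter.eventually_lt_of_limsup_lt haL)
  set C : ℝ≥0∞ := max 1 (((Finset.range (N + 1)).sup (sawCount G u) : ℕ) : ℝ≥0∞) with hC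
  have hC1 : 1 ≤ C := le_max_left _ _
  have hCt : C < ⊤ := by
    rw [hC]
    exact max_lt ENNReal.one_lt_top (ENNReal.natCast_lt_top _)
  have hCk : ∀ k : ℕ, (sawCount G u k : ℝ≥0∞) ≤ C * a ^ k := by
    intro k
    rcases lt_or_ge k (N + 1) with hk | hk
    · calc (sawCount G u k : ℝ≥0∞)
          ≤ (((Finset.range (N + 1)).sup (sawCount G u) : ℕ) : ℝ≥0∞) := by
            exact_mod_cast Finset.le_sup (Finset.mem_range.2 hk)
        _ ≤ C := le_max_right _ _
        _ ≤ C * a ^ k := le_mul_of_one_le_right' (one_le_pow_of_one_le' ha1 k)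
    · have h1 : (sawCount G u k : ℝ≥0∞) ^ (1 / (k : ℝ)) ≤ a := (hN k (by omega)).le
      have hkR : (k : ℝ) ≠ 0 := Nat.cast_ne_zero.mpr (by omega)
      have hx : (sawCount G u k : ℝ≥0∞) = ((sawCount G u k : ℝ≥0∞) ^ (1 / (k : ℝ))) ^ (k : ℕ) := by
        rw [← ENNReal.rpow_natCast (_ ^ (1 / (k : ℝ))) k, ← ENNReal.rpow_mul,
          one_div_mul_cancel hkR, ENNReal.rpow_one]
      calc (sawCount G u k : ℝ≥0∞) = ((sawCount G u k : ℝ≥0∞) ^ (1 / (k : ℝ))) ^ (k : ℕ) := hx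
        _ ≤ a ^ k := pow_le_pow_left' h1 k
        _ ≤ C * a ^ k := le_mul_of_one_le_left' hC1
  set D : ℝ≥0∞ := C * a + C * C with hD
  have hDt : D < ⊤ := by
    rw [hD]
    exact ENNReal.add_lt_top.mpr ⟨ENNReal.mul_lt_top hCt hat, ENNReal.mul_lt_top hCt hCt⟩
  have hbn : ∀ n : ℕ, (sawCount G v n : ℝ≥0∞) ≤ D * (n + 1) * a ^ n := by
    intro n
    have h0 : (sawCount G v n : ℝ≥0∞) ≤ (sawCount G u (n + 1) : ℝ≥0∞) +
        ∑ k ∈ Finset.range (n + 1), (sawCount G u k : ℝ≥0∞) * (sawCount G u (n - k) : ℝ≥0∞) := by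
      exact_mod_cast saw_ineq hadj hdeg n
    calc (sawCount G v n : ℝ≥0∞)
        ≤ (sawCount G u (n + 1) : ℝ≥0∞) +
          ∑ k ∈ Finset.range (n + 1), (sawCount G u k : ℝ≥0∞) * (sawCount G u (n - k) : ℝ≥0∞) := h0
      _ ≤ C * a ^ (n + 1) + ∑ k ∈ Finset.range (n + 1), (C * a ^ k) * (C * a ^ (n - k)) := by
          refine add_le_add (hCk (n + 1)) (Finset.sum_le_sum fun k _ => ?_)
          exact mul_le_mul' (hCk k) (hCk (n - k))
      _ = C * a ^ (n + 1) + ((n : ℝ≥0∞) + 1) * (C * C * a ^ n) := by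
          have hsum : ∑ k ∈ Finset.range (n + 1), (C * a ^ k) * (C * a ^ (n - k))
              = (n + 1) • (C * C * a ^ n) := by
            calc ∑ k ∈ Finset.range (n + 1), (C * a ^ k) * (C * a ^ (n - k))
                = ∑ _k ∈ Finset.range (n + 1), C * C * a ^ n := by
                  refine Finset.sum_congr rfl fun k hk => ?_
                  have hkn : k ≤ n := by have := Finset.mem_range.1 hk; omega
                  have hpow : a ^ k * a ^ (n - k) = a ^ n := by rw [← pow_add]; congr 1; omega
                  calc (C * a ^ k) * (C * a ^ (n - k)) = C * C * (a ^ k * a ^ (n - k)) := by ring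
                    _ = C * C * a ^ n := by rw [hpow]
              _ = (n + 1) • (C * C * a ^ n) := by rw [Finset.sum_const, Finset.card_range]
          rw [hsum, nsmul_eq_mul]
          push_cast
          ring
      _ ≤ D * ((n : ℝ≥0∞) + 1) * a ^ n := by
          have h1 : C * a ^ (n + 1) ≤ (C * a) * ((n : ℝ≥0∞) + 1) * a ^ n := by
            rw [pow_succ]
            calc C * (a ^ n * a) = (C * a) * a ^ n := by ring
              _ ≤ (C * a) * (((n : ℝ≥0∞) + 1) * a ^ n) :=
                  mul_le_mul' le_rfl (le_mul_of_one_le_left' (by simp))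
              _ = (C * a) * ((n : ℝ≥0∞) + 1) * a ^ n := by ring
          have h2 : ((n : ℝ≥0∞) + 1) * (C * C * a ^ n) = (C * C) * ((n : ℝ≥0∞) + 1) * a ^ n := by
            ring
          calc C * a ^ (n + 1) + ((n : ℝ≥0∞) + 1) * (C * C * a ^ n)
              ≤ (C * a) * ((n : ℝ≥0∞) + 1) * a ^ n + (C * C) * ((n : ℝ≥0∞) + 1) * a ^ n := by
                rw [h2]; exact add_le_add h1 le_rfl
            _ = D * ((n : ℝ≥0∞) + 1) * a ^ n := by rw [hD]; ring
  calc sawLimsup G v ≤ a := limsup_rpow_le_of_growth hDt ha1 hat hbn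
    _ = sawLimsup G u + ε := ha

lemma sawLimsup_adj_eq [Infinite V] (hconn : G.Connected)
    (hdeg : ∀ v : V, (G.neighborSet v).Finite) {u v : V} (hadj : G.Adj u v) :
    sawLimsup G u = sawLimsup G v :=
  le_antisymm (sawLimsup_le_of_adj hconn hdeg hadj.symm) (sawLimsup_le_of_adj hconn hdeg hadj)

end SawProof

theorem sawLimsup_eq_of_finite
    {V : Type*} (G : SimpleGraph V)
    (hinf : Infinite V) (hconn : G.Connected)
    (hdeg : ∀ v : V, (G.neighborSet v).Finite)
    (hfin : ∃ v : V, sawLimsup G v < ⊤) :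
    ∀ u v : V, sawLimsup G u = sawLimsup G v := by
  haveI := hinf
  intro u v
  obtain ⟨w⟩ := hconn.preconnected u v
  induction w with
  | nil => rfl
  | cons h p ih => exact (SawProof.sawLimsup_adj_eq hconn hdeg h).trans ih
end

section
/- Let G be an infinite, connected simple graph with finite vertex-degrees, assume there exists a vertex with finite limsup_{n→∞} σ_n(·)^{1/n}, and let μ = lim_{n→∞} (sup_v σ_n(v))^{1/n}. If liminf_{n→∞} σ_n(v)^{1/n} = μ for some vertex v, then liminf_{n→∞} σ_n(u)^{1/n} = μ for every vertex u. -/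
open Filter Topology
open scoped ENNReal

/-- `liminf_{n→∞} σ_n(v)^{1/n}`, computed in `ℝ≥0∞`. -/
noncomputable def sawLiminf {V : Type*} (G : SimpleGraph V) (v : V) : ℝ≥0∞ :=
  Filter.liminf (fun n : ℕ => (sawCount G v n : ℝ≥0∞) ^ (1 / (n : ℝ))) Filter.atTop

/-- `sup_v σ_n(v)`, computed in `ℝ≥0∞`. -/
noncomputable def sawSupE {V : Type*} (G : SimpleGraph V) (n : ℕ) : ℝ≥0∞ :=
  ⨆ v : V, (sawCount G v n : ℝ≥0∞)

namespace SAWaux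

/-! ### Combinatorial part -/

variable {V : Type*} {G : SimpleGraph V}

/-- take the first `n` darts of a walk -/
def takeW {u v : V} (p : G.Walk u v) (n : ℕ) : G.Walk u (p.getVert n) :=
  match n, p with
  | 0, p => SimpleGraph.Walk.nil.copy rfl (p.getVert_zero).symm
  | _+1, SimpleGraph.Walk.nil => SimpleGraph.Walk.nil
  | n+1, SimpleGraph.Walk.cons h q => SimpleGraph.Walk.cons h (takeW q n)

lemma takeW_append_drop {u v : V} (p : G.Walk u v) (n : ℕ) :
    (takeW p n).append (p.drop n) = p := by
  induction p generalizing n with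
  | nil => cases n <;> simp [takeW, SimpleGraph.Walk.drop]
  | cons h q ih =>
    cases n with
    | zero => simp [takeW, SimpleGraph.Walk.drop]
    | succ n =>
      show (SimpleGraph.Walk.cons h (takeW q n)).append
        ((q.drop n).copy (SimpleGraph.Walk.getVert_cons_succ _ h).symm rfl) = _
      have hc : (q.drop n).copy (SimpleGraph.Walk.getVert_cons_succ (n := n) q h).symm rfl
          = q.drop n := SimpleGraph.Walk.copy_rfl_rfl _
      exact congrArg (SimpleGraph.Walk.cons h) (ih n)

lemma length_takeW {u v : V} (p : G.Walk u v) (n : ℕ) (hn : n ≤ p.length) :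
    (takeW p n).length = n := by
  induction p generalizing n with
  | nil => cases n with
    | zero => simp [takeW]
    | succ n => simp at hn
  | cons h q ih =>
    cases n with
    | zero => simp [takeW]
    | succ n =>
      show (SimpleGraph.Walk.cons h (takeW q n)).length = n + 1
      rw [SimpleGraph.Walk.length_cons, ih n (by simpa using hn)]

/-- the type of `n`-step self-avoiding walks from `x` -/
abbrev SAWt (G : SimpleGraph V) (x : V) (n : ℕ) :=
  {p : Σ y : V, G.Walk x y // p.2.IsPath ∧ p.2.length = n}

lemma sawCount_def (x : V) (n : ℕ) : sawCount G x n = Nat.card (SAWt G x n) := rfl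

lemma ball_finite (hdeg : ∀ v : V, (G.neighborSet v).Finite) :
    ∀ (n : ℕ) (x : V), {y | ∃ w : G.Walk x y, w.length ≤ n}.Finite := by
  intro n
  induction n with
  | zero =>
    intro x
    apply Set.Finite.subset (Set.finite_singleton x)
    rintro y ⟨w, hw⟩
    have := SimpleGraph.Walk.eq_of_length_eq_zero (Nat.le_zero.mp hw)
    simp [this]
  | succ n ih =>
    intro x
    apply Set.Finite.subset
      (Set.Finite.union (Set.finite_singleton x)
        (Set.Finite.biUnion (hdeg x) (fun z _ => ih z)))
    rintro y ⟨w, hw⟩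
    cases w with
    | nil => exact Or.inl rfl
    | @cons _ z _ h q =>
      exact Or.inr (Set.mem_biUnion h ⟨q, by simpa using hw⟩)

lemma finite_SAWt (hdeg : ∀ v : V, (G.neighborSet v).Finite) (x : V) (n : ℕ) :
    Finite (SAWt G x n) := by
  classical
  haveI : G.LocallyFinite := fun v => (hdeg v).fintype
  haveI : Finite {y | ∃ w : G.Walk x y, w.length ≤ n} := (ball_finite hdeg n x).to_subtype
  haveI : ∀ y : V, Finite {q : G.Walk x y // q.length = n} := by
    intro y
    haveI := G.fintypeSetWalkLength x y n
    exact Finite.of_equiv {p : G.Walk x y | p.length = n}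
      (Equiv.subtypeEquivRight (by simp))
  apply Finite.of_injective
    (β := Σ y : {y | ∃ w : G.Walk x y, w.length ≤ n}, {q : G.Walk x (y : V) // q.length = n})
    (fun p => ⟨⟨p.1.1, ⟨p.1.2, p.2.2.le⟩⟩, ⟨p.1.2, p.2.2⟩⟩)
  rintro ⟨⟨y₁, p₁⟩, h₁⟩ ⟨⟨y₂, p₂⟩, h₂⟩ hab
  obtain ⟨hfst, hsnd⟩ := Sigma.mk.inj_iff.mp hab
  have hy : y₁ = y₂ := congrArg Subtype.val hfst
  subst hy
  have : p₁ = p₂ := congrArg Subtype.val (eq_of_heq hsnd)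
  subst this
  rfl

variable (hdeg : ∀ v : V, (G.neighborSet v).Finite)
include hdeg

lemma count_split (x : V) (n k : ℕ) :
    (sawCount G x (n + k) : ℝ≥0∞) ≤ (sawCount G x n : ℝ≥0∞) * sawSupE G k := by
  classical
  haveI : ∀ (y : V) (m : ℕ), Finite (SAWt G y m) := fun y m => finite_SAWt hdeg y m
  haveI : ∀ (y : V) (m : ℕ), Fintype (SAWt G y m) := fun y m => Fintype.ofFinite _
  -- the injection
  let Φ : SAWt G x (n + k) → Σ q : SAWt G x n, SAWt G (q.1.1) k := fun p =>
    ⟨⟨⟨p.1.2.getVert n, takeW p.1.2 n⟩,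
      ⟨(takeW_append_drop p.1.2 n ▸ p.2.1).of_append_left,
        length_takeW _ _ (by rw [p.2.2]; omega)⟩⟩,
     ⟨⟨p.1.1, p.1.2.drop n⟩,
      ⟨(takeW_append_drop p.1.2 n ▸ p.2.1).of_append_right, by
        show (p.1.2.drop n).length = k
        have h1 := congrArg SimpleGraph.Walk.length (takeW_append_drop p.1.2 n)
        rw [SimpleGraph.Walk.length_append, length_takeW _ _ (by rw [p.2.2]; omega), p.2.2] at h1
        omega⟩⟩⟩
  have hinj : Function.Injective Φ := by
    have hR : ∀ p : SAWt G x (n + k),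
        (⟨(Φ p).2.1.1, (Φ p).1.1.2.append (Φ p).2.1.2⟩ : Σ y : V, G.Walk x y) = p.1 := by
      intro p
      show (⟨p.1.1, (takeW p.1.2 n).append (p.1.2.drop n)⟩ : Σ y : V, G.Walk x y) = p.1
      rw [takeW_append_drop]
    intro a b hab
    have h2 : (⟨(Φ a).2.1.1, (Φ a).1.1.2.append (Φ a).2.1.2⟩ : Σ y : V, G.Walk x y)
        = ⟨(Φ b).2.1.1, (Φ b).1.1.2.append (Φ b).2.1.2⟩ := by rw [hab]
    exact Subtype.ext ((hR a).symm.trans (h2.trans (hR b)))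
  calc (sawCount G x (n + k) : ℝ≥0∞)
      ≤ (Nat.card (Σ q : SAWt G x n, SAWt G (q.1.1) k) : ℝ≥0∞) := by
        exact_mod_cast Nat.card_le_card_of_injective Φ hinj
    _ ≤ (sawCount G x n : ℝ≥0∞) * sawSupE G k := by
        rw [Nat.card_eq_fintype_card, Fintype.card_sigma]
        push_cast
        calc (∑ q : SAWt G x n, (Fintype.card (SAWt G (q.1.1) k) : ℝ≥0∞))
            ≤ ∑ _q : SAWt G x n, sawSupE G k := by
              apply Finset.sum_le_sum
              intro q _
              have : (Fintype.card (SAWt G (q.1.1) k) : ℝ≥0∞) = (sawCount G (q.1.1) k : ℝ≥0∞) := by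
                rw [sawCount_def, Nat.card_eq_fintype_card]
              rw [this]
              exact le_iSup (fun y : V => (sawCount G y k : ℝ≥0∞)) q.1.1
          _ = (Fintype.card (SAWt G x n) : ℝ≥0∞) * sawSupE G k := by
              rw [Finset.sum_const, Finset.card_univ, nsmul_eq_mul]
          _ = (sawCount G x n : ℝ≥0∞) * sawSupE G k := by
              rw [sawCount_def, Nat.card_eq_fintype_card]

lemma count_nbr {u v : V} (huv : G.Adj u v) (n : ℕ) :
    (sawCount G v n : ℝ≥0∞) ≤ (sawCount G u (n + 1) : ℝ≥0∞)
      + ∑ t ∈ Finset.range (n + 1),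
          (sawCount G u t : ℝ≥0∞) * (sawCount G u (n - t) : ℝ≥0∞) := by
  classical
  haveI : ∀ (y : V) (m : ℕ), Finite (SAWt G y m) := fun y m => finite_SAWt hdeg y m
  haveI : ∀ (y : V) (m : ℕ), Fintype (SAWt G y m) := fun y m => Fintype.ofFinite _
  let Φ : SAWt G v n → SAWt G u (n + 1) ⊕ (Σ t : Fin (n + 1), SAWt G u t.1 × SAWt G u (n - t.1)) :=
    fun p =>
      if hu : u ∈ p.1.2.support then
        Sum.inr ⟨⟨(p.1.2.takeUntil u hu).length, by
            have := p.1.2.length_takeUntil_le hu; rw [p.2.2] at this; omega⟩,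
          ⟨⟨v, (p.1.2.takeUntil u hu).reverse⟩,
            ⟨(p.2.1.takeUntil hu).reverse, by simp⟩⟩,
          ⟨⟨p.1.1, p.1.2.dropUntil u hu⟩,
            ⟨p.2.1.dropUntil hu, by
              show (p.1.2.dropUntil u hu).length = n - (p.1.2.takeUntil u hu).length
              have h1 := congrArg SimpleGraph.Walk.length (p.1.2.take_spec hu)
              rw [SimpleGraph.Walk.length_append, p.2.2] at h1
              omega⟩⟩⟩
      else
        Sum.inl ⟨⟨p.1.1, p.1.2.cons huv⟩, ⟨p.2.1.cons hu, by simp [p.2.2]⟩⟩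
  let R : (SAWt G u (n + 1) ⊕ (Σ t : Fin (n + 1), SAWt G u t.1 × SAWt G u (n - t.1)))
      → Σ y : V, G.Walk v y :=
    fun z =>
      match z with
      | Sum.inl q =>
          if h : q.1.2.getVert 1 = v then ⟨q.1.1, (q.1.2.tail).copy h rfl⟩
          else ⟨v, SimpleGraph.Walk.nil⟩
      | Sum.inr ⟨_, A, B⟩ =>
          if h : A.1.1 = v then ⟨B.1.1, ((A.1.2.reverse).copy h rfl).append B.1.2⟩
          else ⟨v, SimpleGraph.Walk.nil⟩
  have hR : ∀ p : SAWt G v n, R (Φ p) = p.1 := by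
    intro p
    by_cases hu : u ∈ p.1.2.support
    · simp only [Φ]
      rw [dif_pos hu]
      simp only [R]
      rw [dif_pos trivial]
      show (⟨p.1.1, ((p.1.2.takeUntil u hu).reverse.reverse.copy rfl rfl).append
        (p.1.2.dropUntil u hu)⟩ : Σ y : V, G.Walk v y) = p.1
      rw [SimpleGraph.Walk.copy_rfl_rfl, SimpleGraph.Walk.reverse_reverse,
        p.1.2.take_spec hu]
    · simp only [Φ]
      rw [dif_neg hu]
      simp only [R]
      have hgv : (p.1.2.cons huv).getVert 1 = v := by
        rw [SimpleGraph.Walk.getVert_cons_succ, SimpleGraph.Walk.getVert_zero]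
      rw [dif_pos hgv, SimpleGraph.Walk.tail_cons]
      have key : ∀ {a b c d : V} (q : G.Walk a c) (h1 : a = b) (h2 : b = d) (h3 : c = c)
          (h4 : c = c), HEq ((q.copy h1 h3).copy h2 h4) q := by
        intro a b c d q h1 h2 h3 h4; subst h1 h2; rfl
      exact Sigma.ext rfl (key (d := v) p.1.2 _ _ rfl rfl)
  have hinj : Function.Injective Φ := by
    intro a b hab
    have h2 : R (Φ a) = R (Φ b) := by rw [hab]
    rw [hR a, hR b] at h2
    exact Subtype.ext h2
  have hle := Nat.card_le_card_of_injective Φ hinj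
  have hcard : Nat.card (SAWt G u (n + 1) ⊕ (Σ t : Fin (n + 1), SAWt G u t.1 × SAWt G u (n - t.1)))
      = sawCount G u (n + 1) + ∑ t ∈ Finset.range (n + 1), sawCount G u t * sawCount G u (n - t) := by
    rw [Nat.card_sum]
    congr 1
    rw [Nat.card_eq_fintype_card, Fintype.card_sigma]
    have : ∀ t : Fin (n + 1), Fintype.card (SAWt G u t.1 × SAWt G u (n - t.1))
        = sawCount G u t.1 * sawCount G u (n - t.1) := by
      intro t
      rw [Fintype.card_prod, sawCount_def, sawCount_def, Nat.card_eq_fintype_card,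
        Nat.card_eq_fintype_card]
    simp_rw [this]
    exact Fin.sum_univ_eq_sum_range (fun t => sawCount G u t * sawCount G u (n - t)) (n + 1)
  have h3 : sawCount G v n ≤ sawCount G u (n + 1)
      + ∑ t ∈ Finset.range (n + 1), sawCount G u t * sawCount G u (n - t) := by
    rw [sawCount_def]
    exact hle.trans hcard.le
  exact_mod_cast h3

omit hdeg

/-! ### Analytic bridging lemmas -/

/-- the normalized sequence -/
noncomputable def F (c : ℕ → ℕ) (n : ℕ) : ℝ≥0∞ := ((c n : ℝ≥0∞)) ^ (1 / (n : ℝ))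

lemma F_le_iff {c : ℕ → ℕ} {b : ℝ} (hb : 0 ≤ b) {n : ℕ} (hn : 1 ≤ n) :
    F c n ≤ ENNReal.ofReal b ↔ ((c n : ℝ) ≤ b ^ n) := by
  have hn0 : (n : ℝ) ≠ 0 := by positivity
  rw [show ENNReal.ofReal b = (ENNReal.ofReal (b ^ n)) ^ (1 / (n:ℝ)) by
    rw [ENNReal.ofReal_pow hb, ← ENNReal.rpow_natCast (ENNReal.ofReal b) n,
      ← ENNReal.rpow_mul]
    rw [mul_one_div, div_self hn0, ENNReal.rpow_one]]
  rw [F, ENNReal.rpow_le_rpow_iff (by positivity), ← ENNReal.ofReal_natCast,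
    ENNReal.ofReal_le_ofReal_iff (by positivity)]

lemma le_F_iff {c : ℕ → ℕ} {b : ℝ} (hb : 0 ≤ b) {n : ℕ} (hn : 1 ≤ n) :
    ENNReal.ofReal b ≤ F c n ↔ (b ^ n ≤ (c n : ℝ)) := by
  have hn0 : (n : ℝ) ≠ 0 := by positivity
  rw [show ENNReal.ofReal b = (ENNReal.ofReal (b ^ n)) ^ (1 / (n:ℝ)) by
    rw [ENNReal.ofReal_pow hb, ← ENNReal.rpow_natCast (ENNReal.ofReal b) n,
      ← ENNReal.rpow_mul]
    rw [mul_one_div, div_self hn0, ENNReal.rpow_one]]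
  rw [F, ENNReal.rpow_le_rpow_iff (by positivity), ← ENNReal.ofReal_natCast,
    ENNReal.ofReal_le_ofReal_iff (by positivity)]

lemma ev_pow_le_of_lt_liminf {c : ℕ → ℕ} {b : ℝ} (hb : 0 ≤ b)
    (h : ENNReal.ofReal b < Filter.liminf (F c) Filter.atTop) :
    ∀ᶠ n in atTop, b ^ n ≤ ((c n : ℝ)) := by
  filter_upwards [eventually_lt_of_lt_liminf h, eventually_ge_atTop 1] with n hn hn1
  exact (le_F_iff hb hn1).mp hn.le

lemma ev_le_pow_of_limsup_lt {c : ℕ → ℕ} {b : ℝ} (hb : 0 ≤ b)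
    (h : Filter.limsup (F c) Filter.atTop < ENNReal.ofReal b) :
    ∀ᶠ n in atTop, ((c n : ℝ)) ≤ b ^ n := by
  filter_upwards [eventually_lt_of_limsup_lt h, eventually_ge_atTop 1] with n hn hn1
  exact (F_le_iff hb hn1).mp hn.le

lemma freq_le_pow_of_liminf_lt {c : ℕ → ℕ} {b : ℝ} (hb : 0 ≤ b)
    (h : Filter.liminf (F c) Filter.atTop < ENNReal.ofReal b) :
    ∃ᶠ n in atTop, ((c n : ℝ)) ≤ b ^ n := by
  have h1 : ∃ᶠ n in atTop, F c n < ENNReal.ofReal b :=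
    frequently_lt_of_liminf_lt (by isBoundedDefault) h
  refine (h1.and_eventually (eventually_ge_atTop 1)).mono ?_
  rintro n ⟨hn, hn1⟩
  exact (F_le_iff hb hn1).mp hn.le

lemma ofReal_le_liminf_of_ev {c : ℕ → ℕ} {b : ℝ} (hb : 0 ≤ b)
    (h : ∀ᶠ n in atTop, b ^ n ≤ ((c n : ℝ))) :
    ENNReal.ofReal b ≤ Filter.liminf (F c) Filter.atTop := by
  apply le_liminf_of_le
  · isBoundedDefault
  · filter_upwards [h, eventually_ge_atTop 1] with n hn hn1
    exact (le_F_iff hb hn1).mpr hn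

lemma limsup_le_ofReal_of_ev {c : ℕ → ℕ} {b : ℝ} (hb : 0 ≤ b)
    (h : ∀ᶠ n in atTop, ((c n : ℝ)) ≤ b ^ n) :
    Filter.limsup (F c) Filter.atTop ≤ ENNReal.ofReal b := by
  apply limsup_le_of_le
  · isBoundedDefault
  · filter_upwards [h, eventually_ge_atTop 1] with n hn hn1
    exact (F_le_iff hb hn1).mpr hn

/-- polynomial versus geometric -/
lemma ev_linear_lt_pow {C r : ℝ} (hr : 1 < r) :
    ∀ᶠ n : ℕ in atTop, C * ((n : ℝ) + 2) < r ^ n := by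
  have h0 := tendsto_pow_const_div_const_pow_of_one_lt 1 hr
  have h1 : ∀ᶠ n : ℕ in atTop, ((n : ℝ)) ^ 1 / r ^ n < 1 / (3 * (|C| + 1)) := by
    refine h0.eventually (eventually_lt_nhds ?_)
    positivity
  filter_upwards [h1, eventually_ge_atTop 2] with n hn hn2
  have hrn : (0:ℝ) < r ^ n := by positivity
  have hn2' : (2:ℝ) ≤ (n:ℝ) := by exact_mod_cast hn2
  rw [div_lt_div_iff₀ hrn (by positivity), pow_one] at hn
  have hC : C ≤ |C| := le_abs_self C
  nlinarith [abs_nonneg C, pow_pos (lt_trans one_pos hr) n]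

lemma global_bound {c : ℕ → ℕ} {T : ℝ} (hT : 0 < T)
    (h : ∀ᶠ n in atTop, (c n : ℝ) ≤ T ^ n) :
    ∃ D : ℝ, 1 ≤ D ∧ ∀ n, (c n : ℝ) ≤ D * T ^ n := by
  obtain ⟨K, hK⟩ := eventually_atTop.mp h
  set c0 : ℝ := min 1 (T ^ K) with hc0def
  have hc0 : 0 < c0 := by positivity
  set S : ℝ := ∑ j ∈ Finset.range K, (c j : ℝ) with hSdef
  have hS0 : 0 ≤ S := Finset.sum_nonneg fun j _ => by positivity
  refine ⟨1 + S / c0, le_add_of_nonneg_right (by positivity), ?_⟩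
  intro n
  by_cases hn : K ≤ n
  · have h1 : (c n : ℝ) ≤ T ^ n := hK n hn
    nlinarith [pow_pos hT n, div_nonneg hS0 hc0.le]
  · push_neg at hn
    have h1 : (c n : ℝ) ≤ S :=
      Finset.single_le_sum (f := fun j => ((c j : ℝ))) (fun j _ => by positivity)
        (Finset.mem_range.mpr hn)
    have h2 : c0 ≤ T ^ n := by
      rcases le_or_gt 1 T with hT1 | hT1
      · exact le_trans (min_le_left _ _) (one_le_pow₀ hT1)
      · exact le_trans (min_le_right _ _) (pow_le_pow_of_le_one hT.le hT1.le hn.le)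
    calc (c n : ℝ) ≤ S := h1
      _ = (S / c0) * c0 := by field_simp
      _ ≤ (S / c0) * T ^ n := by
          apply mul_le_mul_of_nonneg_left h2 (by positivity)
      _ ≤ (1 + S / c0) * T ^ n := by
          apply mul_le_mul_of_nonneg_right _ (by positivity)
          linarith

lemma ennreal_root_le {x B : ℝ≥0∞} {k : ℕ} (hk : 1 ≤ k)
    (h : x ^ (1 / (k : ℝ)) ≤ B) : x ≤ B ^ k := by
  have hk0 : (k : ℝ) ≠ 0 := by positivity
  have := ENNReal.rpow_le_rpow h (z := (k : ℝ)) (by positivity)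
  rwa [← ENNReal.rpow_mul, one_div, inv_mul_cancel₀ hk0, ENNReal.rpow_one,
    ENNReal.rpow_natCast] at this

/-! ### Graph-level analytic lemmas -/

lemma sawLimsup_eq (u : V) :
    sawLimsup G u = Filter.limsup (F (sawCount G u)) Filter.atTop := rfl

lemma sawLiminf_eq (u : V) :
    sawLiminf G u = Filter.liminf (F (sawCount G u)) Filter.atTop := rfl

lemma sawLiminf_le_sawLimsup (u : V) : sawLiminf G u ≤ sawLimsup G u :=
  Filter.liminf_le_limsup

lemma sawLimsup_le_mu {μ : ℝ≥0∞}
    (hμ : Filter.Tendsto (fun n : ℕ => sawSupE G n ^ (1 / (n : ℝ)))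
      Filter.atTop (nhds μ)) (u : V) : sawLimsup G u ≤ μ := by
  have h1 : ∀ᶠ n in atTop,
      F (sawCount G u) n ≤ sawSupE G n ^ (1 / (n : ℝ)) :=
    Eventually.of_forall fun n =>
      ENNReal.rpow_le_rpow (le_iSup (fun y : V => ((sawCount G y n : ℝ≥0∞))) u) (by positivity)
  calc sawLimsup G u ≤ Filter.limsup (fun n : ℕ => sawSupE G n ^ (1 / (n : ℝ))) atTop :=
        Filter.limsup_le_limsup h1
    _ = μ := hμ.limsup_eq

variable (hdeg : ∀ v : V, (G.neighborSet v).Finite)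
include hdeg

lemma limsup_step {w x : V} (hwx : G.Adj w x) (hw : sawLimsup G w < ⊤) :
    sawLimsup G x < ⊤ := by
  set T : ℝ := (sawLimsup G w).toReal + 1 with hTdef
  have hT : 0 < T := by positivity
  have hlt : sawLimsup G w < ENNReal.ofReal T := by
    rw [ENNReal.lt_ofReal_iff_toReal_lt hw.ne]
    simp [hTdef]
  have hev := ev_le_pow_of_limsup_lt hT.le hlt
  obtain ⟨D, hD1, hD⟩ := global_bound hT hev
  have hbound : ∀ n, ((sawCount G x n : ℝ)) ≤ ((D * T + D ^ 2) * ((n : ℝ) + 2)) * T ^ n := by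
    intro n
    have hnbr : ((sawCount G x n : ℝ)) ≤ (sawCount G w (n + 1) : ℝ)
        + ∑ t ∈ Finset.range (n + 1), (sawCount G w t : ℝ) * (sawCount G w (n - t) : ℝ) := by
      exact_mod_cast count_nbr hdeg hwx n
    have h1 : (sawCount G w (n + 1) : ℝ) ≤ D * T ^ (n + 1) := hD (n + 1)
    have h2 : ∀ t ∈ Finset.range (n + 1),
        (sawCount G w t : ℝ) * (sawCount G w (n - t) : ℝ) ≤ D ^ 2 * T ^ n := by
      intro t ht
      have ht' : t ≤ n := Nat.lt_succ_iff.mp (Finset.mem_range.mp ht)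
      calc (sawCount G w t : ℝ) * (sawCount G w (n - t) : ℝ)
          ≤ (D * T ^ t) * (D * T ^ (n - t)) :=
            mul_le_mul (hD t) (hD (n - t)) (by positivity) (by positivity)
        _ = D ^ 2 * (T ^ t * T ^ (n - t)) := by ring
        _ = D ^ 2 * T ^ n := by rw [← pow_add, Nat.add_sub_cancel' ht']
    have h3 : ∑ t ∈ Finset.range (n + 1),
        (sawCount G w t : ℝ) * (sawCount G w (n - t) : ℝ)
        ≤ ((n : ℝ) + 1) * (D ^ 2 * T ^ n) := by
      have := Finset.sum_le_card_nsmul (Finset.range (n + 1)) _ _ h2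
      rwa [Finset.card_range, nsmul_eq_mul, Nat.cast_add, Nat.cast_one] at this
    have hTn : (0:ℝ) < T ^ n := by positivity
    calc ((sawCount G x n : ℝ)) ≤ D * T ^ (n + 1) + ((n : ℝ) + 1) * (D ^ 2 * T ^ n) := by
          refine hnbr.trans (add_le_add h1 h3)
      _ = (D * T + ((n : ℝ) + 1) * D ^ 2) * T ^ n := by rw [pow_succ]; ring
      _ ≤ ((D * T + D ^ 2) * ((n : ℝ) + 2)) * T ^ n := by
          apply mul_le_mul_of_nonneg_right _ hTn.le
          have hDT : (0:ℝ) ≤ D * T := mul_nonneg (by linarith) hT.le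
          nlinarith [mul_nonneg hDT (by positivity : (0:ℝ) ≤ (n:ℝ) + 1), sq_nonneg D]
  have hev2 : ∀ᶠ n in atTop, (sawCount G x n : ℝ) ≤ (2 * T) ^ n := by
    filter_upwards [ev_linear_lt_pow (C := D * T + D ^ 2) (r := 2) one_lt_two] with n hn
    calc (sawCount G x n : ℝ) ≤ ((D * T + D ^ 2) * ((n : ℝ) + 2)) * T ^ n := hbound n
      _ ≤ 2 ^ n * T ^ n := by
          apply mul_le_mul_of_nonneg_right hn.le (by positivity)
      _ = (2 * T) ^ n := (mul_pow 2 T n).symm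
  exact lt_of_le_of_lt (limsup_le_ofReal_of_ev (by positivity) hev2) ENNReal.ofReal_lt_top

set_option maxHeartbeats 2000000 in
lemma liminf_step {μ : ℝ≥0∞}
    (hμ : Filter.Tendsto (fun n : ℕ => sawSupE G n ^ (1 / (n : ℝ)))
      Filter.atTop (nhds μ))
    (hμ0 : μ ≠ 0) (hμtop : μ ≠ ⊤) {u v : V} (huv : G.Adj u v)
    (hv : sawLiminf G v = μ) : sawLiminf G u = μ := by
  have hupper : sawLiminf G u ≤ μ :=
    (sawLiminf_le_sawLimsup u).trans (sawLimsup_le_mu hμ u)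
  refine le_antisymm hupper ?_
  by_contra hne
  push_neg at hne
  have hlt : sawLiminf G u < μ := hne
  set m : ℝ := μ.toReal with hmdef
  have hm : 0 < m := ENNReal.toReal_pos hμ0 hμtop
  obtain ⟨a, ha0, hlam_a, ha_mu⟩ := (ENNReal.lt_iff_exists_real_btwn).mp hlt
  have ham : a < m := by
    rwa [ENNReal.ofReal_lt_iff_lt_toReal ha0 hμtop] at ha_mu
  set ε : ℝ := min ((m - a) / 8) (m / 8) with hεdef
  have hε : 0 < ε := lt_min (by linarith) (by linarith)
  have hε8a : 8 * ε ≤ m - a := by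
    have := min_le_left ((m - a) / 8) (m / 8); rw [← hεdef] at this; linarith
  have hε8m : 8 * ε ≤ m := by
    have := min_le_right ((m - a) / 8) (m / 8); rw [← hεdef] at this; linarith
  set A : ℝ := m - 2 * ε with hAdef
  have hA : 0 < A := by rw [hAdef]; linarith
  set γ : ℝ := m - ε / 8 with hγdef
  have hγpos : 0 < γ := by rw [hγdef]; linarith
  have hAγ : A < γ := by rw [hAdef, hγdef]; linarith
  have hγm : γ < m := by rw [hγdef]; linarith
  have hmε : 0 < m + ε := by linarith
  set Q : ℝ := Real.sqrt (A * (m + ε)) with hQdef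
  have hQpos : 0 < Q := Real.sqrt_pos.mpr (by positivity)
  have hQsq : Q ^ 2 = A * (m + ε) := Real.sq_sqrt (by positivity)
  have hQγ : Q < γ := by
    rw [hQdef, show γ = Real.sqrt (γ ^ 2) from (Real.sqrt_sq hγpos.le).symm]
    apply Real.sqrt_lt_sqrt (by positivity)
    rw [hAdef, hγdef]; nlinarith
  have hAmε : A ≤ m + ε := by rw [hAdef]; linarith
  have hc1 : a * (m + ε) ^ 2 ≤ A ^ 3 := by
    rw [hAdef]
    nlinarith [mul_le_mul_of_nonneg_right (show a ≤ m - 8 * ε by linarith) (sq_nonneg (m + ε)),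
      mul_pos (mul_pos hε hε) hm]
  -- filter facts
  have hofγ : ENNReal.ofReal γ < μ :=
    (ENNReal.ofReal_lt_iff_lt_toReal hγpos.le hμtop).mpr hγm
  have hvlow : ∀ᶠ n in atTop, γ ^ n ≤ (sawCount G v n : ℝ) := by
    apply ev_pow_le_of_lt_liminf hγpos.le
    rw [← sawLiminf_eq, hv]
    exact hofγ
  have hofmε : μ < ENNReal.ofReal (m + ε) := by
    rw [ENNReal.lt_ofReal_iff_toReal_lt hμtop]; linarith
  have huup : ∀ᶠ n in atTop, (sawCount G u n : ℝ) ≤ (m + ε) ^ n := by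
    apply ev_le_pow_of_limsup_lt hmε.le
    exact lt_of_le_of_lt (by rw [← sawLimsup_eq]; exact sawLimsup_le_mu hμ u) hofmε
  obtain ⟨D, hD1, hD⟩ := global_bound hmε huup
  have hSk : ∀ᶠ k in atTop, sawSupE G k ≤ ENNReal.ofReal ((m + ε) ^ k) := by
    have h1 : ∀ᶠ k : ℕ in atTop,
        sawSupE G k ^ (1 / (k : ℝ)) < ENNReal.ofReal (m + ε) := hμ.eventually_lt_const hofmε
    filter_upwards [h1, eventually_ge_atTop 1] with k hk hk1
    have := ennreal_root_le hk1 hk.le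
    rwa [← ENNReal.ofReal_pow hmε.le] at this
  obtain ⟨K3, hK3⟩ := eventually_atTop.mp hSk
  have hsplit : ∀ n k, K3 ≤ k →
      (sawCount G u (n + k) : ℝ) ≤ (sawCount G u n : ℝ) * (m + ε) ^ k := by
    intro n k hk
    have h3 : (sawCount G u (n + k) : ℝ≥0∞)
        ≤ (sawCount G u n : ℝ≥0∞) * ENNReal.ofReal ((m + ε) ^ k) :=
      le_trans (count_split hdeg u n k) (mul_le_mul_right (hK3 k hk) _)
    rw [← ENNReal.ofReal_natCast (sawCount G u (n + k)),
      ← ENNReal.ofReal_natCast (sawCount G u n),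
      ← ENNReal.ofReal_mul (by positivity)] at h3
    exact (ENNReal.ofReal_le_ofReal_iff (by positivity)).mp h3
  have hdip : ∃ᶠ n in atTop, (sawCount G u n : ℝ) ≤ a ^ n := by
    apply freq_le_pow_of_liminf_lt ha0
    rw [← sawLiminf_eq]
    exact hlam_a
  have hnbr : ∀ n : ℕ, (sawCount G v n : ℝ) ≤ (sawCount G u (n + 1) : ℝ)
      + ∑ t ∈ Finset.range (n + 1), (sawCount G u t : ℝ) * (sawCount G u (n - t) : ℝ) :=
    fun n => by exact_mod_cast count_nbr hdeg huv n
  set P : ℝ := max A Q with hPdef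
  have hPpos : 0 < P := lt_of_lt_of_le hA (le_max_left _ _)
  have hPγ : P < γ := max_lt hAγ hQγ
  have hq : 1 < γ / P := (one_lt_div hPpos).mpr hPγ
  -- combine eventual facts
  obtain ⟨K1, hK1⟩ := eventually_atTop.mp
    (hvlow.and (ev_linear_lt_pow (C := A + D) hq))
  -- pick a deep dip
  obtain ⟨n₀, hn₀ge, hn₀dip⟩ := frequently_atTop.mp hdip (max (2 * K3 + 2) (K1 + 1))
  have hn₀1 : 2 * K3 + 2 ≤ n₀ := le_trans (le_max_left _ _) hn₀ge
  have hn₀2 : K1 ≤ n₀ := by have := le_trans (le_max_right _ _) hn₀ge; omega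
  -- the dip window
  have hwin : ∀ M, n₀ + K3 ≤ M → M ≤ 3 * n₀ → (sawCount G u M : ℝ) ≤ A ^ M := by
    intro M hM1 hM2
    set s : ℕ := M - n₀ with hsdef
    have hs1 : K3 ≤ s := by omega
    have hs2 : s ≤ 2 * n₀ := by omega
    have hMs : M = n₀ + s := by omega
    have h1 : (sawCount G u M : ℝ) ≤ a ^ n₀ * (m + ε) ^ s := by
      rw [hMs]
      exact le_trans (hsplit n₀ s hs1) (mul_le_mul_of_nonneg_right hn₀dip (by positivity))
    have hZ : (0:ℝ) < (m + ε) ^ (2 * n₀ - s) := by positivity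
    have key : a ^ n₀ * (m + ε) ^ s * (m + ε) ^ (2 * n₀ - s)
        ≤ A ^ M * (m + ε) ^ (2 * n₀ - s) := by
      have e1 : a ^ n₀ * (m + ε) ^ s * (m + ε) ^ (2 * n₀ - s)
          = a ^ n₀ * (m + ε) ^ (2 * n₀) := by
        rw [mul_assoc, ← pow_add]
        congr 2
        omega
      have e2 : a ^ n₀ * (m + ε) ^ (2 * n₀) ≤ A ^ (3 * n₀) := by
        calc a ^ n₀ * (m + ε) ^ (2 * n₀) = (a * (m + ε) ^ 2) ^ n₀ := by
              rw [mul_pow, ← pow_mul, mul_comm 2 n₀]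
          _ ≤ (A ^ 3) ^ n₀ := pow_le_pow_left₀ (by positivity) hc1 n₀
          _ = A ^ (3 * n₀) := by rw [← pow_mul, mul_comm 3 n₀]
      have e3 : A ^ (3 * n₀) = A ^ M * A ^ (2 * n₀ - s) := by
        rw [← pow_add]; congr 1; omega
      have e4 : A ^ (2 * n₀ - s) ≤ (m + ε) ^ (2 * n₀ - s) :=
        pow_le_pow_left₀ hA.le hAmε _
      calc a ^ n₀ * (m + ε) ^ s * (m + ε) ^ (2 * n₀ - s)
          = a ^ n₀ * (m + ε) ^ (2 * n₀) := e1
        _ ≤ A ^ (3 * n₀) := e2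
        _ = A ^ M * A ^ (2 * n₀ - s) := e3
        _ ≤ A ^ M * (m + ε) ^ (2 * n₀ - s) :=
            mul_le_mul_of_nonneg_left e4 (by positivity)
    exact h1.trans (le_of_mul_le_mul_right key hZ)
  -- the contradiction index
  set n' : ℕ := 2 * (n₀ + K3) with hn'def
  have hn'K1 : K1 ≤ n' := by omega
  -- convolution bound
  have hmain : ∀ i j : ℕ, i + j = n' → i ≤ j →
      (sawCount G u i : ℝ) * (sawCount G u j : ℝ) ≤ D * Q ^ n' := by
    intro i j hij hile
    have hj1 : n₀ + K3 ≤ j := by omega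
    have hj2 : j ≤ 3 * n₀ := by omega
    have h1 : (sawCount G u i : ℝ) ≤ D * (m + ε) ^ i := hD i
    have h2 : (sawCount G u j : ℝ) ≤ A ^ j := hwin j hj1 hj2
    have h3 : (m + ε) ^ i * A ^ j ≤ Q ^ n' := by
      have hsq : ((m + ε) ^ i * A ^ j) ^ 2 ≤ (Q ^ n') ^ 2 := by
        have e1 : ((m + ε) ^ i * A ^ j) ^ 2 = A ^ (2 * j) * (m + ε) ^ (2 * i) := by
          rw [mul_pow, ← pow_mul, ← pow_mul]; ring_nf
        have e2 : (Q ^ n') ^ 2 = A ^ n' * (m + ε) ^ n' := by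
          rw [← pow_mul, mul_comm n' 2, pow_mul, hQsq, mul_pow]
        rw [e1, e2]
        have e3 : A ^ (2 * j) = A ^ n' * A ^ (j - i) := by
          rw [← pow_add]; congr 1; omega
        have e4 : (m + ε) ^ (j - i) * (m + ε) ^ (2 * i) = (m + ε) ^ n' := by
          rw [← pow_add]; congr 1; omega
        calc A ^ (2 * j) * (m + ε) ^ (2 * i)
            = A ^ n' * (A ^ (j - i) * (m + ε) ^ (2 * i)) := by rw [e3]; ring
          _ ≤ A ^ n' * ((m + ε) ^ (j - i) * (m + ε) ^ (2 * i)) := by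
              apply mul_le_mul_of_nonneg_left _ (by positivity)
              exact mul_le_mul_of_nonneg_right (pow_le_pow_left₀ hA.le hAmε _) (by positivity)
          _ = A ^ n' * (m + ε) ^ n' := by rw [e4]
      nlinarith [pow_nonneg (mul_nonneg (pow_nonneg hmε.le i) (pow_nonneg hA.le j)) 1,
        pow_nonneg hQpos.le n', pow_nonneg hmε.le i, pow_nonneg hA.le j,
        mul_nonneg (pow_nonneg hmε.le i) (pow_nonneg hA.le j)]
    calc (sawCount G u i : ℝ) * (sawCount G u j : ℝ)
        ≤ (D * (m + ε) ^ i) * A ^ j := by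
          apply mul_le_mul h1 h2 (by positivity) (by positivity)
      _ = D * ((m + ε) ^ i * A ^ j) := by ring
      _ ≤ D * Q ^ n' := mul_le_mul_of_nonneg_left h3 (by linarith)
  have hconv : ∀ t ∈ Finset.range (n' + 1),
      (sawCount G u t : ℝ) * (sawCount G u (n' - t) : ℝ) ≤ D * Q ^ n' := by
    intro t ht
    have ht' : t ≤ n' := Nat.lt_succ_iff.mp (Finset.mem_range.mp ht)
    rcases le_total t (n' - t) with hc | hc
    · exact hmain t (n' - t) (by omega) hc
    · rw [mul_comm]
      exact hmain (n' - t) t (by omega) hc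
  have hsum : ∑ t ∈ Finset.range (n' + 1),
      (sawCount G u t : ℝ) * (sawCount G u (n' - t) : ℝ)
      ≤ ((n' : ℝ) + 1) * (D * Q ^ n') := by
    have := Finset.sum_le_card_nsmul (Finset.range (n' + 1)) _ _ hconv
    rwa [Finset.card_range, nsmul_eq_mul, Nat.cast_add, Nat.cast_one] at this
  have hb1 : (sawCount G u (n' + 1) : ℝ) ≤ A ^ (n' + 1) :=
    hwin (n' + 1) (by omega) (by omega)
  have hγlow : γ ^ n' ≤ (sawCount G v n' : ℝ) := (hK1 n' hn'K1).1
  have hpoly : (A + D) * ((n' : ℝ) + 2) < (γ / P) ^ n' := (hK1 n' hn'K1).2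
  -- final chain
  have hfinal : γ ^ n' ≤ ((A + D) * ((n' : ℝ) + 2)) * P ^ n' := by
    have hAP : A ^ (n' + 1) ≤ A * P ^ n' := by
      rw [pow_succ, mul_comm (A ^ n') A]
      exact mul_le_mul_of_nonneg_left (pow_le_pow_left₀ hA.le (le_max_left _ _) _) hA.le
    have hQP : Q ^ n' ≤ P ^ n' := pow_le_pow_left₀ hQpos.le (le_max_right _ _) _
    have hPn : (0:ℝ) ≤ P ^ n' := by positivity
    calc γ ^ n' ≤ (sawCount G v n' : ℝ) := hγlow
      _ ≤ (sawCount G u (n' + 1) : ℝ) + ∑ t ∈ Finset.range (n' + 1),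
            (sawCount G u t : ℝ) * (sawCount G u (n' - t) : ℝ) := hnbr n'
      _ ≤ A * P ^ n' + ((n' : ℝ) + 1) * (D * P ^ n') := by
          apply add_le_add (hb1.trans hAP)
          refine hsum.trans ?_
          apply mul_le_mul_of_nonneg_left _ (by positivity)
          exact mul_le_mul_of_nonneg_left hQP (by linarith)
      _ = (A + ((n' : ℝ) + 1) * D) * P ^ n' := by ring
      _ ≤ ((A + D) * ((n' : ℝ) + 2)) * P ^ n' := by
          apply mul_le_mul_of_nonneg_right _ hPn
          have hDn : (0:ℝ) ≤ D * ((n' : ℝ) + 1) := mul_nonneg (by linarith) (by positivity)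
          nlinarith [mul_nonneg hA.le (Nat.cast_nonneg (α := ℝ) n'), hA.le]
  have hcontra : γ ^ n' < γ ^ n' := by
    calc γ ^ n' ≤ ((A + D) * ((n' : ℝ) + 2)) * P ^ n' := hfinal
      _ < (γ / P) ^ n' * P ^ n' := by
          apply mul_lt_mul_of_pos_right hpoly (by positivity)
      _ = γ ^ n' := by rw [div_pow]; field_simp
  exact absurd hcontra (lt_irrefl _)


omit hdeg

lemma prop_walk {P : V → Prop} (hstep : ∀ {a b : V}, G.Adj a b → P a → P b) :
    ∀ {x y : V}, G.Walk x y → P x → P y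
  | _, _, SimpleGraph.Walk.nil => id
  | _, _, SimpleGraph.Walk.cons h q => fun hx => prop_walk hstep q (hstep h hx)

end SAWaux

theorem sawLiminf_eq_mu_of_exists
    {V : Type*} (G : SimpleGraph V)
    (hinf : Infinite V) (hconn : G.Connected)
    (hdeg : ∀ v : V, (G.neighborSet v).Finite)
    (hfin : ∃ v : V, sawLimsup G v < ⊤)
    (μ : ℝ≥0∞)
    (hμ : Filter.Tendsto (fun n : ℕ => sawSupE G n ^ (1 / (n : ℝ)))
      Filter.atTop (nhds μ))
    (hv : ∃ v : V, sawLiminf G v = μ) :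
    ∀ u : V, sawLiminf G u = μ := by
  classical
  obtain ⟨v₀, hv₀⟩ := hv
  obtain ⟨w₀, hw₀⟩ := hfin
  have hfinall : ∀ x : V, sawLimsup G x < ⊤ := fun x =>
    SAWaux.prop_walk (fun hab ha => SAWaux.limsup_step hdeg hab ha)
      ((hconn.preconnected w₀ x).some) hw₀
  have hμtop : μ ≠ ⊤ := by
    have h1 : μ ≤ sawLimsup G v₀ := hv₀ ▸ SAWaux.sawLiminf_le_sawLimsup v₀
    exact (lt_of_le_of_lt h1 (hfinall v₀)).ne
  by_cases hμ0 : μ = 0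
  · intro u
    refine le_antisymm ?_ ?_
    · exact (SAWaux.sawLiminf_le_sawLimsup u).trans (SAWaux.sawLimsup_le_mu hμ u)
    · rw [hμ0]; exact zero_le
  · intro u
    exact SAWaux.prop_walk
      (fun hab ha => SAWaux.liminf_step hdeg hμ hμ0 hμtop hab.symm ha)
      ((hconn.preconnected v₀ u).some) hv₀
end

section
/- Let G be a simple graph with finite vertex-degrees and let u, v be adjacent vertices. Then for every n ≥ 1, σ_n(u) ≤ σ_{n+1}(v) + Σ_{m=1}^{n−1} σ_m(v)·σ_{n−m}(v) + σ_n(v). -/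
open SimpleGraph

/-- Auxiliary: the type of self-avoiding walks of length `k` from `w`. -/
abbrev SawT {V : Type*} (G : SimpleGraph V) (w : V) (k : ℕ) :=
  {p : Σ x : V, G.Walk w x // p.2.IsPath ∧ p.2.length = k}

lemma finite_walks {V : Type*} (G : SimpleGraph V)
    (hdeg : ∀ v : V, (G.neighborSet v).Finite) (n : ℕ) :
    ∀ w : V, Finite {p : Σ x : V, G.Walk w x // p.2.length = n} := by
  induction n with
  | zero =>
    intro w
    have : Subsingleton {p : Σ x : V, G.Walk w x // p.2.length = 0} := by
      constructor
      rintro ⟨⟨x, p⟩, hp⟩ ⟨⟨y, q⟩, hq⟩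
      cases p with
      | nil =>
        cases q with
        | nil => rfl
        | cons _ _ => simp at hq
      | cons _ _ => simp at hp
    exact Finite.of_subsingleton
  | succ n ih =>
    intro w
    haveI : ∀ x : V, Finite (G.neighborSet x) := fun x => (hdeg x).to_subtype
    haveI : ∀ x : G.neighborSet w, Finite {p : Σ y : V, G.Walk (x : V) y // p.2.length = n} :=
      fun x => ih x
    refine Finite.of_surjective
      (f := fun q : (Σ x : G.neighborSet w,
          {p : Σ y : V, G.Walk (x : V) y // p.2.length = n}) =>
        (⟨⟨q.2.1.1, Walk.cons q.1.2 q.2.1.2⟩, by exact congrArg Nat.succ q.2.2⟩ :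
          {p : Σ x : V, G.Walk w x // p.2.length = n + 1})) ?_
    rintro ⟨⟨x, p⟩, hp⟩
    cases p with
    | nil => simp at hp
    | cons h q => exact ⟨⟨⟨_, h⟩, ⟨⟨x, q⟩, by simpa using hp⟩⟩, rfl⟩

lemma finite_saw {V : Type*} (G : SimpleGraph V)
    (hdeg : ∀ v : V, (G.neighborSet v).Finite) (w : V) (n : ℕ) :
    Finite (SawT G w n) := by
  haveI := finite_walks G hdeg n w
  refine Finite.of_injective
    (fun p : SawT G w n =>
      (⟨p.1, p.2.2⟩ : {p : Σ x : V, G.Walk w x // p.2.length = n})) ?_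
  intro a b h
  rw [Subtype.mk.injEq] at h
  exact Subtype.ext h

open Classical in
/-- The classifying map for self-avoiding walks from `u`. -/
noncomputable def sawMap {V : Type*} (G : SimpleGraph V) (u v : V)
    (hadj : G.Adj u v) (n : ℕ) :
    SawT G u n →
      (SawT G v (n + 1) ⊕
        ((Σ m : (Finset.Ico 1 n), SawT G v m × SawT G v (n - m)) ⊕ SawT G v n)) := fun p =>
  if h : v ∈ p.1.2.support then
    if hx : p.1.1 = v then
      Sum.inr (Sum.inr ⟨⟨u, p.1.2.reverse.copy hx rfl⟩, by
        refine ⟨?_, ?_⟩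
        · simpa using p.2.1.reverse
        · simpa using p.2.2⟩)
    else
      Sum.inr (Sum.inl ⟨⟨(p.1.2.takeUntil v h).length, by
          have hsum : (p.1.2.takeUntil v h).length + (p.1.2.dropUntil v h).length = n := by
            rw [← Walk.length_append, Walk.take_spec]; exact p.2.2
          have h1 : 1 ≤ (p.1.2.takeUntil v h).length := by
            rcases Nat.eq_zero_or_pos (p.1.2.takeUntil v h).length with h0 | h0
            · exact absurd (Walk.eq_of_length_eq_zero h0) hadj.ne
            · exact h0
          have h2 : 1 ≤ (p.1.2.dropUntil v h).length := by
            rcases Nat.eq_zero_or_pos (p.1.2.dropUntil v h).length with h0 | h0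
            · exact absurd (Walk.eq_of_length_eq_zero h0).symm hx
            · exact h0
          exact Finset.mem_Ico.2 ⟨h1, by omega⟩⟩,
        ⟨⟨⟨u, (p.1.2.takeUntil v h).reverse⟩,
            ⟨(p.2.1.takeUntil h).reverse, by simp⟩⟩,
         ⟨⟨p.1.1, p.1.2.dropUntil v h⟩,
            ⟨p.2.1.dropUntil h, by
              show (p.1.2.dropUntil v h).length = n - (p.1.2.takeUntil v h).length
              have hsum : (p.1.2.takeUntil v h).length + (p.1.2.dropUntil v h).length = n := by
                rw [← Walk.length_append, Walk.take_spec]; exact p.2.2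
              omega⟩⟩⟩⟩)
  else
    Sum.inl ⟨⟨p.1.1, Walk.cons hadj.symm p.1.2⟩, ⟨p.2.1.cons h, by simp [p.2.2]⟩⟩

lemma sawMap_injective {V : Type*} (G : SimpleGraph V) (u v : V)
    (hadj : G.Adj u v) (n : ℕ) :
    Function.Injective (sawMap G u v hadj n) := by
  classical
  rintro ⟨⟨xa, pa⟩, hpa, hla⟩ ⟨⟨xb, pb⟩, hpb, hlb⟩ hab
  simp only [sawMap] at hab
  split_ifs at hab with h1 h2 h3 h4 h5 h6 h7 h8
  all_goals first
    | exact Sum.noConfusion hab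
    | exact Sum.noConfusion (Sum.inr.inj hab)
    | (simp at hab; done)
    | skip
  · -- both pass through v, both end at v
    subst h2
    subst h4
    have h2' : pa.reverse = pb.reverse := by
      simpa using congrArg Subtype.val (Sum.inr.inj (Sum.inr.inj hab))
    obtain rfl : pa = pb := Walk.reverse_injective h2'
    rfl
  · -- both pass through v, neither ends at v
    have hA := Sum.inl.inj (Sum.inr.inj hab)
    have hP := congrArg
      (fun q : (Σ m : (Finset.Ico 1 n), SawT G v m × SawT G v (n - m)) =>
        ((q.2.1 : Σ x : V, G.Walk v x), (q.2.2 : Σ x : V, G.Walk v x))) hA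
    simp only [Prod.mk.injEq] at hP
    obtain ⟨hP1, hP2⟩ := hP
    obtain rfl : xa = xb := congrArg Sigma.fst hP2
    have hd : pa.dropUntil v h1 = pb.dropUntil v h5 := by simpa using hP2
    have ht : pa.takeUntil v h1 = pb.takeUntil v h5 :=
      Walk.reverse_injective (by simpa using hP1)
    obtain rfl : pa = pb := by
      rw [← Walk.take_spec pa h1, ← Walk.take_spec pb h5, ht, hd]
    rfl
  · -- both avoid v
    have h' := congrArg Subtype.val (Sum.inl.inj hab)
    obtain rfl : xa = xb := congrArg Sigma.fst h'
    have hc : Walk.cons hadj.symm pa = Walk.cons hadj.symm pb := by simpa using h'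
    obtain rfl : pa = pb := by simpa using hc
    rfl
lemma my_card_sigma {ι : Type*} [Fintype ι] {α : ι → Type*} [∀ i, Finite (α i)] :
    Nat.card (Σ i, α i) = ∑ i, Nat.card (α i) := by
  letI : ∀ i, Fintype (α i) := fun i => Fintype.ofFinite _
  simp [Nat.card_eq_fintype_card, Fintype.card_sigma]

theorem sawCount_adj_ineq
    {V : Type*} (G : SimpleGraph V)
    (hdeg : ∀ v : V, (G.neighborSet v).Finite)
    (u v : V) (hadj : G.Adj u v) :
    ∀ n : ℕ, 1 ≤ n →
      sawCount G u n ≤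
        sawCount G v (n + 1) +
          (∑ m ∈ Finset.Ico 1 n, sawCount G v m * sawCount G v (n - m)) +
          sawCount G v n := by
  intro n _
  classical
  haveI : ∀ (w : V) (k : ℕ), Finite (SawT G w k) := fun w k => finite_saw G hdeg w k
  have key := Nat.card_le_card_of_injective _ (sawMap_injective G u v hadj n)
  have hcard :
      Nat.card (SawT G v (n + 1) ⊕
        ((Σ m : (Finset.Ico 1 n), SawT G v m × SawT G v (n - m)) ⊕ SawT G v n)) =
      sawCount G v (n + 1) +
        ((∑ m ∈ Finset.Ico 1 n, sawCount G v m * sawCount G v (n - m)) +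
          sawCount G v n) := by
    rw [Nat.card_sum, Nat.card_sum, my_card_sigma]
    have : ∀ m : (Finset.Ico 1 n),
        Nat.card (SawT G v m × SawT G v (n - m)) =
          sawCount G v m * sawCount G v (n - m) := by
      intro m
      rw [Nat.card_prod]
      rfl
    rw [Finset.sum_congr rfl (fun m _ => this m)]
    rw [Finset.sum_coe_sort (Finset.Ico 1 n) (fun m => sawCount G v m * sawCount G v (n - m))]
    rfl
  calc sawCount G u n ≤ _ := key
  _ = _ := hcard
  _ = _ := by ring
end

section
/- Let G be an infinite, connected simple graph with vertex-degrees bounded by some finite Δ, let μ = lim_{n→∞} (sup_v σ_n(v))^{1/n}, and write ulμ(w) = liminf_{n→∞} σ_n(w)^{1/n}. Then for any two adjacent vertices u and v, ulμ(u)² ≤ ulμ(v) · μ. -/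
open Filter Topology

/-- `liminf_{n→∞} σ_n(w)^{1/n}`. -/
noncomputable def ulMu {V : Type*} (G : SimpleGraph V) (w : V) : ℝ :=
  Filter.liminf (fun n : ℕ => (sawCount G w n : ℝ) ^ (1 / (n : ℝ))) Filter.atTop


namespace SAWP

variable {V : Type*} {G : SimpleGraph V}

abbrev SAWt (G : SimpleGraph V) (v : V) (n : ℕ) :=
  {p : Σ u : V, G.Walk v u // p.2.IsPath ∧ p.2.length = n}

noncomputable def sawCons {v : V} {n : ℕ} :
    SAWt G v (n+1) → Σ u : G.neighborSet v, SAWt G (u : V) n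
  | ⟨⟨x, SimpleGraph.Walk.cons h q⟩, hp⟩ =>
    ⟨⟨_, h⟩, ⟨⟨x, q⟩, ⟨((SimpleGraph.Walk.cons_isPath_iff h q).mp hp.1).1, by
        simpa using hp.2⟩⟩⟩

lemma sawCons_spec {v : V} {n : ℕ} : ∀ P : SAWt G v (n+1),
    P.1 = ⟨(sawCons P).2.1.1, SimpleGraph.Walk.cons (sawCons P).1.2 (sawCons P).2.1.2⟩
  | ⟨⟨_, SimpleGraph.Walk.cons _ _⟩, _⟩ => rfl

lemma sawCons_injective {v : V} {n : ℕ} :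
    Function.Injective (sawCons (G := G) (v := v) (n := n)) := by
  intro a b h
  apply Subtype.ext
  rw [sawCons_spec a, sawCons_spec b, h]

instance subsingleton_SAWt0 {v : V} : Subsingleton (SAWt G v 0) := by
  constructor
  rintro ⟨⟨x, p⟩, hp⟩ ⟨⟨y, q⟩, hq⟩
  have hx := (SimpleGraph.Walk.eq_of_length_eq_zero hp.2)
  have hy := (SimpleGraph.Walk.eq_of_length_eq_zero hq.2)
  subst hx; subst hy
  have hp' : p = SimpleGraph.Walk.nil := by
    exact SimpleGraph.Walk.nil_iff_eq_nil.mp (SimpleGraph.Walk.nil_iff_length_eq.mpr hp.2)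
  have hq' : q = SimpleGraph.Walk.nil := by
    exact SimpleGraph.Walk.nil_iff_eq_nil.mp (SimpleGraph.Walk.nil_iff_length_eq.mpr hq.2)
  subst hp'; subst hq'; rfl

lemma card_SAWt0 (v : V) : Nat.card (SAWt G v 0) = 1 :=
  Nat.card_of_subsingleton (⟨⟨v, SimpleGraph.Walk.nil⟩, ⟨SimpleGraph.Walk.IsPath.nil, rfl⟩⟩)

lemma finite_SAWt (hlf : ∀ w : V, (G.neighborSet w).Finite) :
    ∀ (n : ℕ) (v : V), Finite (SAWt G v n)
  | 0, v => inferInstance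
  | (n+1), v => by
    haveI : ∀ u : G.neighborSet v, Finite (SAWt G (u : V) n) :=
      fun u => finite_SAWt hlf n u
    haveI : Finite (G.neighborSet v) := (hlf v).to_subtype
    haveI : Finite (Σ u : G.neighborSet v, SAWt G (u : V) n) := inferInstance
    exact Finite.of_injective _ (sawCons_injective (G := G) (v := v) (n := n))

lemma card_SAWt_le {Δ : ℕ} (hlf : ∀ w : V, (G.neighborSet w).Finite)
    (hΔ : ∀ w : V, (G.neighborSet w).ncard ≤ Δ) :
    ∀ (n : ℕ) (v : V), Nat.card (SAWt G v n) ≤ Δ ^ n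
  | 0, v => by simp [card_SAWt0]
  | (n+1), v => by
    haveI hfin : ∀ u : G.neighborSet v, Finite (SAWt G (u : V) n) :=
      fun u => finite_SAWt hlf n u
    haveI : Finite (G.neighborSet v) := (hlf v).to_subtype
    haveI : Finite (Σ u : G.neighborSet v, SAWt G (u : V) n) := inferInstance
    calc Nat.card (SAWt G v (n+1))
        ≤ Nat.card (Σ u : G.neighborSet v, SAWt G (u : V) n) :=
          Nat.card_le_card_of_injective _ sawCons_injective
      _ ≤ Δ ^ (n+1) := by
          haveI := Fintype.ofFinite (G.neighborSet v)
          haveI : ∀ u : G.neighborSet v, Fintype (SAWt G (u : V) n) :=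
            fun u => Fintype.ofFinite _
          rw [Nat.card_eq_fintype_card, Fintype.card_sigma]
          calc ∑ u : G.neighborSet v, Fintype.card (SAWt G (u:V) n)
              ≤ ∑ _u : G.neighborSet v, Δ ^ n := by
                refine Finset.sum_le_sum fun u _ => ?_
                rw [← Nat.card_eq_fintype_card]
                exact card_SAWt_le hlf hΔ n u
            _ = Fintype.card (G.neighborSet v) * Δ ^ n := by
                simp [Finset.sum_const, Finset.card_univ, mul_comm]
            _ ≤ Δ * Δ ^ n := by
                have hcard : Fintype.card (G.neighborSet v) = (G.neighborSet v).ncard := by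
                  rw [← Nat.card_coe_set_eq, Nat.card_eq_fintype_card]
                exact Nat.mul_le_mul_right _ (hcard ▸ hΔ v)
            _ = Δ ^ (n+1) := by ring


lemma exists_split {v w : V} :
    ∀ (a b : ℕ) (p : G.Walk v w), p.length = a + b →
    ∃ t : (Σ x : V, G.Walk v x × G.Walk x w),
      p = t.2.1.append t.2.2 ∧ t.2.1.length = a ∧ t.2.2.length = b
  | 0, b, p, h => ⟨⟨v, SimpleGraph.Walk.nil, p⟩, by simp, rfl, by simpa using h⟩
  | (a+1), b, SimpleGraph.Walk.nil, h => by simp at h; omega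
  | (a+1), b, SimpleGraph.Walk.cons hadj q, h => by
    obtain ⟨⟨x, q1, q2⟩, h1, h2, h3⟩ := exists_split a b q (by simp at h; omega)
    exact ⟨⟨x, SimpleGraph.Walk.cons hadj q1, q2⟩, by simp [h1], by simp [h2], h3⟩

noncomputable def splitMap {v : V} (a b : ℕ) (P : SAWt G v (a+b)) :
    Σ q : SAWt G v a, SAWt G q.1.1 b :=
  let t := Classical.choose (exists_split a b P.1.2 P.2.2)
  let ht := Classical.choose_spec (exists_split a b P.1.2 P.2.2)
  ⟨⟨⟨t.1, t.2.1⟩, ⟨SimpleGraph.Walk.IsPath.of_append_left (ht.1 ▸ P.2.1), ht.2.1⟩⟩,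
   ⟨⟨P.1.1, t.2.2⟩, ⟨SimpleGraph.Walk.IsPath.of_append_right (ht.1 ▸ P.2.1), ht.2.2⟩⟩⟩

lemma splitMap_spec {v : V} (a b : ℕ) (P : SAWt G v (a+b)) :
    P.1 = ⟨(splitMap a b P).2.1.1, (splitMap a b P).1.1.2.append (splitMap a b P).2.1.2⟩ := by
  show Sigma.mk P.1.1 P.1.2 = _
  exact congrArg (Sigma.mk P.1.1) (Classical.choose_spec (exists_split a b P.1.2 P.2.2)).1

lemma splitMap_injective {v : V} (a b : ℕ) :
    Function.Injective (splitMap (G := G) (v := v) a b) := by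
  intro P1 P2 h
  apply Subtype.ext
  rw [splitMap_spec a b P1, splitMap_spec a b P2, h]

lemma count_submul (hlf : ∀ w : V, (G.neighborSet w).Finite) {v : V} (a b B : ℕ)
    (hB : ∀ w : V, Nat.card (SAWt G w b) ≤ B) :
    Nat.card (SAWt G v (a+b)) ≤ Nat.card (SAWt G v a) * B := by
  haveI : ∀ (n : ℕ) (w : V), Finite (SAWt G w n) := fun n w => finite_SAWt hlf n w
  haveI : Finite (Σ q : SAWt G v a, SAWt G q.1.1 b) := inferInstance
  calc Nat.card (SAWt G v (a+b))
      ≤ Nat.card (Σ q : SAWt G v a, SAWt G q.1.1 b) :=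
        Nat.card_le_card_of_injective _ (splitMap_injective a b)
    _ ≤ Nat.card (SAWt G v a) * B := by
        haveI := Fintype.ofFinite (SAWt G v a)
        haveI : ∀ q : SAWt G v a, Fintype (SAWt G q.1.1 b) := fun q => Fintype.ofFinite _
        rw [Nat.card_eq_fintype_card, Fintype.card_sigma]
        calc ∑ q : SAWt G v a, Fintype.card (SAWt G q.1.1 b)
            ≤ ∑ _q : SAWt G v a, B := by
              refine Finset.sum_le_sum fun q _ => ?_
              rw [← Nat.card_eq_fintype_card]; exact hB _
          _ = Fintype.card (SAWt G v a) * B := by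
              simp [Finset.sum_const, Finset.card_univ, mul_comm]
          _ = Nat.card (SAWt G v a) * B := by rw [Nat.card_eq_fintype_card]


lemma consMap_count {u v : V} (hadj : G.Adj v u) (hlf : ∀ w : V, (G.neighborSet w).Finite)
    (n : ℕ) :
    Nat.card {P : SAWt G u n // v ∉ P.1.2.support} ≤ Nat.card (SAWt G v (n+1)) := by
  haveI : ∀ (m : ℕ) (w : V), Finite (SAWt G w m) := fun m w => finite_SAWt hlf m w
  refine Nat.card_le_card_of_injective
    (fun P => (⟨⟨P.1.1.1, SimpleGraph.Walk.cons hadj P.1.1.2⟩,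
      ⟨(SimpleGraph.Walk.cons_isPath_iff hadj P.1.1.2).mpr ⟨P.1.2.1, P.2⟩,
       by simp [P.1.2.2]⟩⟩ : SAWt G v (n+1))) ?_
  rintro ⟨⟨⟨x1, w1⟩, hp1⟩, hv1⟩ ⟨⟨⟨x2, w2⟩, hp2⟩, hv2⟩ h
  have h1 := congrArg (fun Q => Q.1) h
  rw [Sigma.mk.inj_iff] at h1
  obtain ⟨hx, hw⟩ := h1
  subst hx
  rw [heq_iff_eq] at hw
  apply Subtype.ext; apply Subtype.ext
  simp only
  simp only [SimpleGraph.Walk.cons.injEq, heq_iff_eq, true_and] at hw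
  exact congrArg (Sigma.mk x1) hw


lemma through_count {u v : V} (hlf : ∀ w : V, (G.neighborSet w).Finite) (n : ℕ) :
    Nat.card {P : SAWt G u n // v ∈ P.1.2.support} ≤
      Nat.card (Σ l : Fin (n+1), SAWt G v (l : ℕ) × SAWt G v (n - (l : ℕ))) := by
  classical
  haveI : ∀ (m : ℕ) (w : V), Finite (SAWt G w m) := fun m w => finite_SAWt hlf m w
  have hlen : ∀ P : {P : SAWt G u n // v ∈ P.1.2.support},
      (P.1.1.2.takeUntil v P.2).length + (P.1.1.2.dropUntil v P.2).length = n := by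
    intro P
    rw [← SimpleGraph.Walk.length_append, SimpleGraph.Walk.take_spec]
    exact P.1.2.2
  refine Nat.card_le_card_of_injective (fun P =>
    (⟨⟨(P.1.1.2.takeUntil v P.2).length, by have := hlen P; omega⟩,
      (⟨⟨u, (P.1.1.2.takeUntil v P.2).reverse⟩,
        ⟨(P.1.2.1.takeUntil P.2).reverse, by simp⟩⟩,
       ⟨⟨P.1.1.1, P.1.1.2.dropUntil v P.2⟩,
        ⟨P.1.2.1.dropUntil P.2, by have := hlen P; simp; omega⟩⟩)⟩ :
      Σ l : Fin (n+1), SAWt G v (l : ℕ) × SAWt G v (n - (l : ℕ)))) ?_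
  intro P1 P2 h
  have hF := congrArg (fun t : (Σ l : Fin (n+1), SAWt G v (l : ℕ) × SAWt G v (n - (l : ℕ))) =>
    (⟨t.2.1.1.1, ⟨t.2.2.1.1, (t.2.1.1.2.reverse).append t.2.2.1.2⟩⟩ :
      Σ y : V, Σ z : V, G.Walk y z)) h
  simp only [SimpleGraph.Walk.reverse_reverse] at hF
  rw [SimpleGraph.Walk.take_spec _ P1.2, SimpleGraph.Walk.take_spec _ P2.2] at hF
  rw [Sigma.mk.inj_iff] at hF
  obtain ⟨-, hF⟩ := hF
  rw [heq_iff_eq, Sigma.mk.inj_iff] at hF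
  obtain ⟨hx, hw⟩ := hF
  apply Subtype.ext; apply Subtype.ext
  rcases P1 with ⟨⟨⟨x1, w1⟩, hp1⟩, hv1⟩
  rcases P2 with ⟨⟨⟨x2, w2⟩, hp2⟩, hv2⟩
  simp only at hx hw ⊢
  subst hx
  rw [heq_iff_eq] at hw
  exact congrArg (Sigma.mk x1) hw


lemma count_split {u v : V} (hadj : G.Adj v u) (hlf : ∀ w : V, (G.neighborSet w).Finite)
    (n : ℕ) :
    Nat.card (SAWt G u n) ≤ Nat.card (SAWt G v (n+1)) +
      ∑ l ∈ Finset.range (n+1), Nat.card (SAWt G v l) * Nat.card (SAWt G v (n - l)) := by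
  classical
  haveI : ∀ (m : ℕ) (w : V), Finite (SAWt G w m) := fun m w => finite_SAWt hlf m w
  have hpart : Nat.card (SAWt G u n) =
      Nat.card {P : SAWt G u n // v ∈ P.1.2.support} +
      Nat.card {P : SAWt G u n // v ∉ P.1.2.support} := by
    rw [← Nat.card_sum]
    exact Nat.card_congr (Equiv.sumCompl (fun P : SAWt G u n => v ∈ P.1.2.support)).symm
  rw [hpart]
  have h2 : Nat.card (Σ l : Fin (n+1), SAWt G v (l : ℕ) × SAWt G v (n - (l : ℕ))) =
      ∑ l ∈ Finset.range (n+1), Nat.card (SAWt G v l) * Nat.card (SAWt G v (n - l)) := by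
    haveI : ∀ m : ℕ, Fintype (SAWt G v m) := fun m => Fintype.ofFinite _
    rw [Nat.card_eq_fintype_card, Fintype.card_sigma, Fin.sum_univ_eq_sum_range
      (fun l => Fintype.card (SAWt G v l × SAWt G v (n - l)))]
    refine Finset.sum_congr rfl fun l _ => ?_
    rw [← Nat.card_eq_fintype_card, Nat.card_prod]
  rw [← h2, Nat.add_comm (Nat.card (SAWt G v (n+1)))]
  exact Nat.add_le_add (through_count hlf n) (consMap_count hadj hlf n)


lemma le_of_forall_pos_add' {a b : ℝ} (h : ∀ δ : ℝ, 0 < δ → a ≤ b + δ) : a ≤ b := by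
  by_contra hc
  push_neg at hc
  have := h ((a-b)/2) (by linarith)
  linarith

lemma rpow_recover {x : ℝ} (hx : 0 ≤ x) {m : ℕ} (hm : 1 ≤ m) {b : ℝ}
    (h : x ^ (1/(m:ℝ)) ≤ b) : x ≤ b ^ m := by
  have hm0 : (m:ℝ) ≠ 0 := Nat.cast_ne_zero.mpr (by omega)
  have hxx : (x ^ (1/(m:ℝ))) ^ m = x := by
    rw [← Real.rpow_natCast (x ^ (1/(m:ℝ))) m, ← Real.rpow_mul hx]
    rw [one_div, inv_mul_cancel₀ hm0, Real.rpow_one]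
  calc x = (x ^ (1/(m:ℝ))) ^ m := hxx.symm
    _ ≤ b ^ m := pow_le_pow_left₀ (Real.rpow_nonneg hx _) h m

end SAWP

set_option maxHeartbeats 2000000 in
theorem ulMu_sq_le_adj
    {V : Type*} (G : SimpleGraph V) (Δ : ℕ)
    (hinf : Infinite V) (hconn : G.Connected)
    (hdeg : ∀ v : V, (G.neighborSet v).Finite ∧ (G.neighborSet v).ncard ≤ Δ)
    (μ : ℝ)
    (hμ : Filter.Tendsto (fun n : ℕ => (sawSup G n : ℝ) ^ (1 / (n : ℝ)))
      Filter.atTop (nhds μ)) :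
    ∀ u v : V, G.Adj u v → (ulMu G u) ^ 2 ≤ ulMu G v * μ := by
  intro u v huv
  classical
  have hlf : ∀ w : V, (G.neighborSet w).Finite := fun w => (hdeg w).1
  have hΔ : ∀ w : V, (G.neighborSet w).ncard ≤ Δ := fun w => (hdeg w).2
  have hbdd : ∀ n : ℕ, BddAbove (Set.range fun w => sawCount G w n) := fun n =>
    ⟨Δ ^ n, by rintro x ⟨w, rfl⟩; exact SAWP.card_SAWt_le hlf hΔ n w⟩
  have hle_sup : ∀ (w : V) (n : ℕ), sawCount G w n ≤ sawSup G n := fun w n =>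
    le_csSup (hbdd n) ⟨w, rfl⟩
  have hsubmul : ∀ (w : V) (a b : ℕ), sawCount G w (a + b) ≤ sawCount G w a * sawSup G b :=
    fun w a b => SAWP.count_submul hlf a b _ (fun x => hle_sup x b)
  have hsplit : ∀ n, sawCount G u n ≤ sawCount G v (n+1) +
      ∑ l ∈ Finset.range (n+1), sawCount G v l * sawCount G v (n - l) :=
    fun n => SAWP.count_split huv.symm hlf n
  set f : ℕ → ℝ := fun n => (sawCount G u n : ℝ) ^ (1/(n:ℝ)) with hfdef
  set g : ℕ → ℝ := fun n => (sawCount G v n : ℝ) ^ (1/(n:ℝ)) with hgdef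
  set hh : ℕ → ℝ := fun n => (sawSup G n : ℝ) ^ (1/(n:ℝ)) with hhdef
  have hf0 : ∀ n, 0 ≤ f n := fun n => Real.rpow_nonneg (Nat.cast_nonneg _) _
  have hg0 : ∀ n, 0 ≤ g n := fun n => Real.rpow_nonneg (Nat.cast_nonneg _) _
  have hh0 : ∀ n, 0 ≤ hh n := fun n => Real.rpow_nonneg (Nat.cast_nonneg _) _
  have hμt : Filter.Tendsto hh Filter.atTop (nhds μ) := by
    simpa [hhdef, one_div] using hμ
  obtain ⟨M, hM⟩ := hμt.bddAbove_range
  have hMle : ∀ n, hh n ≤ M := fun n => hM ⟨n, rfl⟩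
  have hfh : ∀ n, f n ≤ hh n := fun n =>
    Real.rpow_le_rpow (Nat.cast_nonneg _) (Nat.cast_le.mpr (hle_sup u n)) (by positivity)
  have hgh : ∀ n, g n ≤ hh n := fun n =>
    Real.rpow_le_rpow (Nat.cast_nonneg _) (Nat.cast_le.mpr (hle_sup v n)) (by positivity)
  have hμ0 : 0 ≤ μ := ge_of_tendsto' hμt hh0
  have hulu : ulMu G u = Filter.liminf f Filter.atTop := rfl
  have hulv : ulMu G v = Filter.liminf g Filter.atTop := rfl
  have hgcobdd : Filter.IsCoboundedUnder (· ≥ ·) Filter.atTop g :=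
    Filter.isCoboundedUnder_ge_of_eventually_le Filter.atTop
      (Filter.Eventually.of_forall (fun n => le_trans (hgh n) (hMle n)))
  have hfbddbelow : Filter.atTop.IsBoundedUnder (· ≥ ·) f :=
    Filter.isBoundedUnder_of ⟨0, fun n => hf0 n⟩
  have hL0 : 0 ≤ ulMu G v := by
    rw [hulv]
    exact Filter.le_liminf_of_le hgcobdd (Filter.Eventually.of_forall hg0)
  have hfcobdd : Filter.IsCoboundedUnder (· ≥ ·) Filter.atTop f :=
    Filter.isCoboundedUnder_ge_of_eventually_le Filter.atTop
      (Filter.Eventually.of_forall (fun n => le_trans (hfh n) (hMle n)))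
  have hα0 : 0 ≤ ulMu G u := by
    rw [hulu]
    exact Filter.le_liminf_of_le hfcobdd (Filter.Eventually.of_forall hf0)
  set L := ulMu G v with hLdef
  -- main estimate
  have main : ∀ ε : ℝ, 0 < ε → ε ≤ 1 → ulMu G u ≤ Real.sqrt ((L+ε)*(μ+ε)) := by
    intro ε hε hε1
    have hμε : 0 < μ + ε := by linarith
    have hLε : 0 < L + ε := by linarith
    obtain ⟨C, hC1, hC⟩ : ∃ C : ℝ, 1 ≤ C ∧ ∀ m : ℕ, (sawSup G m : ℝ) ≤ C * (μ+ε)^m := by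
      have hev : ∀ᶠ m in Filter.atTop, hh m < μ + ε :=
        hμt.eventually (gt_mem_nhds (by linarith))
      obtain ⟨M₀, hM₀⟩ := Filter.eventually_atTop.mp hev
      set M₁ := max M₀ 1 with hM₁
      set c := min (μ+ε) 1 with hc
      have hc0 : 0 < c := lt_min hμε one_pos
      have hc1 : c ≤ 1 := min_le_right _ _
      set C0 : ℝ := 1 + ∑ m ∈ Finset.range M₁, (sawSup G m : ℝ) with hC0
      have hC0pos : 0 < C0 := by
        have : (0:ℝ) ≤ ∑ m ∈ Finset.range M₁, (sawSup G m : ℝ) :=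
          Finset.sum_nonneg fun i _ => Nat.cast_nonneg _
        linarith
      have hC0ge : ∀ m, m < M₁ → (sawSup G m : ℝ) ≤ C0 := by
        intro m hm
        have := Finset.single_le_sum (f := fun m => (sawSup G m : ℝ))
          (fun i _ => Nat.cast_nonneg _) (Finset.mem_range.mpr hm)
        linarith
      refine ⟨max 1 (C0 / c ^ M₁), le_max_left _ _, fun m => ?_⟩
      rcases lt_or_ge m M₁ with hm | hm
      · have h1 : c ^ M₁ ≤ (μ+ε)^m := by
          calc c ^ M₁ ≤ c ^ m := pow_le_pow_of_le_one hc0.le hc1 hm.le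
            _ ≤ (μ+ε)^m := pow_le_pow_left₀ hc0.le (min_le_left _ _) m
        have hcm : (0:ℝ) < c ^ M₁ := pow_pos hc0 M₁
        calc (sawSup G m : ℝ) ≤ C0 := hC0ge m hm
          _ = (C0 / c ^ M₁) * c ^ M₁ := by field_simp
          _ ≤ (C0 / c ^ M₁) * (μ+ε)^m := by
              apply mul_le_mul_of_nonneg_left h1 (by positivity)
          _ ≤ max 1 (C0 / c ^ M₁) * (μ+ε)^m :=
              mul_le_mul_of_nonneg_right (le_max_right _ _) (by positivity)
      · have h1 : hh m ≤ μ + ε := (hM₀ m (le_trans (le_max_left _ _) hm)).le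
        have h2 : (sawSup G m : ℝ) ≤ (μ+ε)^m :=
          SAWP.rpow_recover (Nat.cast_nonneg _) (le_trans (le_max_right _ _) hm) h1
        calc (sawSup G m:ℝ) ≤ (μ+ε)^m := h2
          _ ≤ max 1 (C0/c^M₁) * (μ+ε)^m := by
              nlinarith [pow_nonneg hμε.le m, le_max_left (1:ℝ) (C0/c^M₁)]
    set T := (L+ε)*(μ+ε) with hT
    have hT0 : (0:ℝ) ≤ T := by positivity
    set K := C*(μ+ε) + C^2 with hK
    have hK1 : 1 ≤ K := by nlinarith
    have hest : ∀ N : ℕ, 1 ≤ N → (sawCount G v N : ℝ) ≤ (L+ε)^N →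
        (sawCount G u (2*N) : ℝ) ≤ K * (2*(N:ℝ)+1) * T^N := by
      intro N hN hgood
      have hcast : (sawCount G u (2*N) : ℝ) ≤ (sawCount G v (2*N+1) : ℝ) +
          ∑ l ∈ Finset.range (2*N+1), (sawCount G v l : ℝ) * (sawCount G v (2*N - l) : ℝ) := by
        exact_mod_cast hsplit (2*N)
      have hterm1 : (sawCount G v (2*N+1) : ℝ) ≤ C*(μ+ε) * T^N := by
        have h1 : sawCount G v (2*N+1) ≤ sawCount G v N * sawSup G (N+1) := by
          have := hsubmul v N (N+1)
          have he : N + (N+1) = 2*N+1 := by omega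
          rwa [he] at this
        calc (sawCount G v (2*N+1) : ℝ) ≤ (sawCount G v N : ℝ) * (sawSup G (N+1) : ℝ) := by
                            exact_mod_cast h1
          _ ≤ (L+ε)^N * (C * (μ+ε)^(N+1)) :=
              mul_le_mul hgood (hC (N+1)) (Nat.cast_nonneg _) (by positivity)
          _ = C*(μ+ε) * T^N := by rw [hT, mul_pow]; ring
      have hterm2 : ∀ l ∈ Finset.range (2*N+1),
          (sawCount G v l : ℝ) * (sawCount G v (2*N - l) : ℝ) ≤ C^2 * T^N := by
        intro l hl
        rw [Finset.mem_range] at hl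
        rcases le_or_gt l N with hlN | hlN
        · have h1 : (sawCount G v l : ℝ) ≤ C * (μ+ε)^l :=
            le_trans (by exact_mod_cast hle_sup v l) (hC l)
          have h2 : sawCount G v (2*N - l) ≤ sawCount G v N * sawSup G (N - l) := by
            have := hsubmul v N (N - l)
            have he : N + (N - l) = 2*N - l := by omega
            rwa [he] at this
          have h3 : (sawCount G v (2*N-l) : ℝ) ≤ (L+ε)^N * (C * (μ+ε)^(N-l)) := by
            calc (sawCount G v (2*N-l):ℝ) ≤ (sawCount G v N:ℝ) * (sawSup G (N-l):ℝ) := by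
                                exact_mod_cast h2
              _ ≤ (L+ε)^N * (C*(μ+ε)^(N-l)) :=
                mul_le_mul hgood (hC _) (Nat.cast_nonneg _) (by positivity)
          calc (sawCount G v l : ℝ) * (sawCount G v (2*N - l) : ℝ)
              ≤ (C * (μ+ε)^l) * ((L+ε)^N * (C * (μ+ε)^(N-l))) :=
                mul_le_mul h1 h3 (Nat.cast_nonneg _) (by positivity)
            _ = C^2 * ((L+ε)^N * ((μ+ε)^l * (μ+ε)^(N-l))) := by ring
            _ = C^2 * T^N := by
                rw [← pow_add, show l + (N - l) = N by omega, hT, mul_pow]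
        · have h1 : sawCount G v l ≤ sawCount G v N * sawSup G (l - N) := by
            have := hsubmul v N (l - N)
            have he : N + (l - N) = l := by omega
            rwa [he] at this
          have h2 : (sawCount G v l : ℝ) ≤ (L+ε)^N * (C * (μ+ε)^(l-N)) := by
            calc (sawCount G v l:ℝ) ≤ (sawCount G v N:ℝ) * (sawSup G (l-N):ℝ) := by
                                exact_mod_cast h1
              _ ≤ (L+ε)^N * (C*(μ+ε)^(l-N)) :=
                mul_le_mul hgood (hC _) (Nat.cast_nonneg _) (by positivity)
          have h3 : (sawCount G v (2*N-l) : ℝ) ≤ C * (μ+ε)^(2*N-l) :=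
            le_trans (by exact_mod_cast hle_sup v (2*N-l)) (hC _)
          calc (sawCount G v l : ℝ) * (sawCount G v (2*N - l) : ℝ)
              ≤ ((L+ε)^N * (C * (μ+ε)^(l-N))) * (C * (μ+ε)^(2*N-l)) :=
                mul_le_mul h2 h3 (Nat.cast_nonneg _) (by positivity)
            _ = C^2 * ((L+ε)^N * ((μ+ε)^(l-N) * (μ+ε)^(2*N-l))) := by ring
            _ = C^2 * T^N := by
                rw [← pow_add, show (l - N) + (2*N - l) = N by omega, hT, mul_pow]
      have hsum : ∑ l ∈ Finset.range (2*N+1),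
          (sawCount G v l : ℝ) * (sawCount G v (2*N - l) : ℝ) ≤ (2*(N:ℝ)+1) * (C^2 * T^N) := by
        calc ∑ l ∈ Finset.range (2*N+1), (sawCount G v l : ℝ) * (sawCount G v (2*N - l):ℝ)
            ≤ ∑ _l ∈ Finset.range (2*N+1), C^2 * T^N := Finset.sum_le_sum hterm2
          _ = (2*(N:ℝ)+1) * (C^2*T^N) := by
              rw [Finset.sum_const, Finset.card_range, nsmul_eq_mul]
              push_cast; ring
      have hTN0 : (0:ℝ) ≤ T^N := by positivity
      have hN1 : (1:ℝ) ≤ 2*(N:ℝ)+1 := by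
        have : (0:ℝ) ≤ (N:ℝ) := Nat.cast_nonneg _
        linarith
      have hCμ0 : (0:ℝ) ≤ C*(μ+ε) := by positivity
      calc (sawCount G u (2*N) : ℝ)
          ≤ (sawCount G v (2*N+1) : ℝ) + ∑ l ∈ Finset.range (2*N+1),
             (sawCount G v l : ℝ) * (sawCount G v (2*N - l) : ℝ) := hcast
        _ ≤ C*(μ+ε)*T^N + (2*(N:ℝ)+1)*(C^2*T^N) := add_le_add hterm1 hsum
        _ ≤ K * (2*(N:ℝ)+1) * T^N := by
            rw [hK]
            nlinarith [mul_nonneg hCμ0 hTN0]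
    -- frequently good N
    have hfreqN : ∀ b : ℕ, ∃ N : ℕ, b ≤ N ∧ 1 ≤ N ∧ (sawCount G v N : ℝ) ≤ (L+ε)^N := by
      intro b
      have hlim : Filter.liminf g Filter.atTop < L + ε := by
        rw [← hulv]; linarith
      have hfreq := Filter.frequently_lt_of_liminf_lt hgcobdd hlim
      obtain ⟨N, hNb, hNlt⟩ := Filter.frequently_atTop.mp hfreq (max b 1)
      exact ⟨N, le_trans (le_max_left _ _) hNb, le_trans (le_max_right _ _) hNb,
        SAWP.rpow_recover (Nat.cast_nonneg _) (le_trans (le_max_right _ _) hNb) hNlt.le⟩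
    -- correction factor tends to 1
    have hq : Filter.Tendsto (fun N : ℕ => ((2*(N:ℝ)) ^ (1/(2*(N:ℝ))))^2)
        Filter.atTop (nhds 1) := by
      have h2N : Filter.Tendsto (fun N : ℕ => (2*(N:ℝ))) Filter.atTop Filter.atTop :=
        Filter.Tendsto.const_mul_atTop two_pos tendsto_natCast_atTop_atTop
      have h1 := tendsto_rpow_div.comp h2N
      have h2 := h1.pow 2
      simpa using h2
    have hcorr : ∀ δ' : ℝ, 0 < δ' → ∃ N₂ : ℕ, ∀ N ≥ N₂, 1 ≤ N →
        (K * (2*(N:ℝ)+1)) ^ (1/(2*(N:ℝ))) ≤ 1 + δ' := by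
      intro δ' hδ'
      have hev1 : ∀ᶠ N : ℕ in Filter.atTop, ((2*(N:ℝ)) ^ (1/(2*(N:ℝ))))^2 < 1 + δ' :=
        hq.eventually (gt_mem_nhds (by linarith))
      obtain ⟨N₂, hN₂⟩ := Filter.eventually_atTop.mp hev1
      obtain ⟨Nk, hNk⟩ := exists_nat_ge K
      refine ⟨max N₂ (Nk + 1), fun N hN hN1 => ?_⟩
      have hNN₂ : N₂ ≤ N := le_trans (le_max_left _ _) hN
      have hNKk : K ≤ (N:ℝ) := by
        have h1 : (Nk:ℝ) ≤ (N:ℝ) := by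
          have : Nk ≤ N := by omega
          exact_mod_cast this
        linarith
      have h2N0 : (0:ℝ) < 2*(N:ℝ) := by
        have : (1:ℝ) ≤ (N:ℝ) := by exact_mod_cast hN1
        linarith
      have hKN : K * (2*(N:ℝ)+1) ≤ (2*(N:ℝ))^(2:ℕ) := by
        have hN1' : (1:ℝ) ≤ (N:ℝ) := by exact_mod_cast hN1
        nlinarith
      have hstep : (K * (2*(N:ℝ)+1)) ^ (1/(2*(N:ℝ))) ≤
          ((2*(N:ℝ))^(2:ℕ)) ^ (1/(2*(N:ℝ))) := by
        apply Real.rpow_le_rpow (by nlinarith) hKN (by positivity)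
      have heq : ((2*(N:ℝ))^(2:ℕ)) ^ (1/(2*(N:ℝ))) = ((2*(N:ℝ)) ^ (1/(2*(N:ℝ))))^2 := by
        rw [← Real.rpow_natCast (2*(N:ℝ)) 2, ← Real.rpow_mul h2N0.le,
          ← Real.rpow_natCast ((2*(N:ℝ)) ^ (1/(2*(N:ℝ)))) 2, ← Real.rpow_mul h2N0.le]
        norm_num
        ring_nf
      rw [heq] at hstep
      exact le_trans hstep (hN₂ N hNN₂).le
    -- conclude α ≤ sqrt T
    rw [hulu]
    apply SAWP.le_of_forall_pos_add'
    intro δ hδ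
    have hsT0 : 0 ≤ Real.sqrt T := Real.sqrt_nonneg _
    set δ' := δ / (Real.sqrt T + 1) with hδ'd
    have hδ'0 : 0 < δ' := div_pos hδ (by linarith)
    obtain ⟨N₂, hN₂⟩ := hcorr δ' hδ'0
    apply Filter.liminf_le_of_frequently_le _ hfbddbelow
    rw [Filter.frequently_atTop]
    intro b
    obtain ⟨N, hNb, hN1, hgood⟩ := hfreqN (max b N₂)
    have hbN : b ≤ 2*N := by
      have := le_trans (le_max_left b N₂) hNb; omega
    refine ⟨2*N, hbN, ?_⟩
    have hN₂N : N₂ ≤ N := le_trans (le_max_right _ _) hNb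
    have hcorrN := hN₂ N hN₂N hN1
    have hb := hest N hN1 hgood
    have h2N0 : (0:ℝ) < 2*(N:ℝ) := by
      have : (1:ℝ) ≤ (N:ℝ) := by exact_mod_cast hN1
      linarith
    have hNne : (N:ℝ) ≠ 0 := by positivity
    have hfN : f (2*N) ≤ (K*(2*(N:ℝ)+1))^(1/(2*(N:ℝ))) * Real.sqrt T := by
      have hcastexp : ((2*N : ℕ):ℝ) = 2*(N:ℝ) := by push_cast; ring
      have hstep1 : f (2*N) ≤ (K * (2*(N:ℝ)+1) * T^N) ^ (1/(2*(N:ℝ))) := by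
        show (sawCount G u (2*N) : ℝ) ^ (1/((2*N : ℕ):ℝ)) ≤ _
        rw [hcastexp]
        exact Real.rpow_le_rpow (Nat.cast_nonneg _) hb (by positivity)
      have hsplit2 : (K * (2*(N:ℝ)+1) * T^N) ^ (1/(2*(N:ℝ))) =
          (K*(2*(N:ℝ)+1))^(1/(2*(N:ℝ))) * (T^N)^(1/(2*(N:ℝ))) := by
        apply Real.mul_rpow (by nlinarith) (by positivity)
      have hTN : (T^N : ℝ)^(1/(2*(N:ℝ))) = Real.sqrt T := by
        have hexp : (N:ℝ)*(1/(2*(N:ℝ))) = 1/2 := by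
          field_simp
        rw [← Real.rpow_natCast T N, ← Real.rpow_mul hT0, hexp, Real.sqrt_eq_rpow]
      rw [hsplit2, hTN] at hstep1
      exact hstep1
    calc f (2*N) ≤ (1+δ') * Real.sqrt T :=
          le_trans hfN (mul_le_mul_of_nonneg_right hcorrN hsT0)
      _ = Real.sqrt T + δ' * Real.sqrt T := by ring
      _ ≤ Real.sqrt T + δ := by
          have h1 : δ' * Real.sqrt T ≤ δ' * (Real.sqrt T + 1) := by nlinarith
          have h2 : δ' * (Real.sqrt T + 1) = δ := by
            rw [hδ'd]; field_simp
          linarith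
  -- final assembly
  have hsq : ∀ ε : ℝ, 0 < ε → ε ≤ 1 → (ulMu G u)^2 ≤ (L+ε)*(μ+ε) := by
    intro ε hε hε1
    have h1 := main ε hε hε1
    have hT0 : (0:ℝ) ≤ (L+ε)*(μ+ε) := by positivity
    calc (ulMu G u)^2 ≤ (Real.sqrt ((L+ε)*(μ+ε)))^2 := by
                        apply pow_le_pow_left₀ hα0 h1
      _ = (L+ε)*(μ+ε) := Real.sq_sqrt hT0
  apply SAWP.le_of_forall_pos_add'
  intro δ hδ
  have hLμ1 : (0:ℝ) < L + μ + 1 := by linarith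
  set ε := min 1 (δ / (L+μ+1)) with hε
  have hε0 : 0 < ε := lt_min one_pos (div_pos hδ hLμ1)
  have hε1 : ε ≤ 1 := min_le_left _ _
  have h2 := hsq ε hε0 hε1
  have h3 : (L+ε)*(μ+ε) ≤ L*μ + ε*(L+μ+1) := by nlinarith
  have h4 : ε * (L+μ+1) ≤ δ := by
    calc ε*(L+μ+1) ≤ (δ/(L+μ+1))*(L+μ+1) :=
          mul_le_mul_of_nonneg_right (min_le_right _ _) hLμ1.le
      _ = δ := by field_simp
  linarith
end

section
/- Let Δ ≥ 3 and let G be an infinite, connected, quasi-transitive simple graph in which every vertex has degree at most Δ and some vertex w has degree at most Δ−1. Then the connective constant satisfies μ(G) < Δ−1. -/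
open Filter Topology

set_option linter.unusedSectionVars false

namespace MuAux



variable {V : Type*} [DecidableEq V]

/-- endpoint of a continuation list, starting from `cur`. -/
def endpD : V → List V → V
  | cur, [] => cur
  | _, x :: l => endpD x l

/-- vertex before the endpoint (`o` if the list is empty). -/
def prevD : Option V → V → List V → Option V
  | o, _, [] => o
  | _, cur, x :: l => prevD (some cur) x l

/-- Finset of non-backtracking continuations of length `k` from `cur`,
with forbidden previous vertex `o`. -/
def extF (Nf : V → Finset V) : ℕ → Option V → V → Finset (List V)
  | 0, _, _ => {[]}
  | (k+1), o, cur =>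
    ((Nf cur).filter (fun x => some x ≠ o)).biUnion
      (fun x => (extF Nf k (some cur) x).image (x :: ·))

variable {Nf : V → Finset V}

@[simp] lemma mem_extF_zero {o : Option V} {cur : V} {l : List V} :
    l ∈ extF Nf 0 o cur ↔ l = [] := by
  simp [extF]

lemma mem_extF_succ {k : ℕ} {o : Option V} {cur : V} {l : List V} :
    l ∈ extF Nf (k+1) o cur ↔
      ∃ x, x ∈ Nf cur ∧ some x ≠ o ∧ ∃ rest, rest ∈ extF Nf k (some cur) x ∧ l = x :: rest := by
  simp only [extF, Finset.mem_biUnion, Finset.mem_filter, Finset.mem_image]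
  constructor
  · rintro ⟨x, ⟨hx, hxo⟩, rest, hrest, rfl⟩
    exact ⟨x, hx, hxo, rest, hrest, rfl⟩
  · rintro ⟨x, hx, hxo, rest, hrest, rfl⟩
    exact ⟨x, ⟨hx, hxo⟩, rest, hrest, rfl⟩

lemma length_of_mem_extF : ∀ {k : ℕ} {o : Option V} {cur : V} {l : List V},
    l ∈ extF Nf k o cur → l.length = k := by
  intro k
  induction k with
  | zero => intro o cur l hl; simp_all
  | succ k ih =>
    intro o cur l hl
    rw [mem_extF_succ] at hl
    obtain ⟨x, -, -, rest, hrest, rfl⟩ := hl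
    simp [ih hrest]

lemma card_extF_succ (k : ℕ) (o : Option V) (cur : V) :
    (extF Nf (k+1) o cur).card =
      ∑ x ∈ (Nf cur).filter (fun x => some x ≠ o), (extF Nf k (some cur) x).card := by
  rw [extF, Finset.card_biUnion]
  · refine Finset.sum_congr rfl fun x _ => ?_
    exact Finset.card_image_of_injective _ (fun a b h => by injection h)
  · intro x hx y hy hxy
    simp only [Function.onFun, Finset.disjoint_left]
    rintro a ha hb
    simp only [Finset.mem_image] at ha hb
    obtain ⟨r1, -, rfl⟩ := ha
    obtain ⟨r2, -, h2⟩ := hb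
    exact hxy (by injection h2 with h _; exact h.symm)

@[simp] lemma endpD_cons (cur x : V) (l : List V) : endpD cur (x :: l) = endpD x l := rfl

@[simp] lemma prevD_cons (o : Option V) (cur x : V) (l : List V) :
    prevD o cur (x :: l) = prevD (some cur) x l := rfl

lemma endpD_append (cur x : V) (q : List V) : endpD cur (q ++ [x]) = x := by
  induction q generalizing cur with
  | nil => rfl
  | cons z q ih => simpa using ih z

lemma prevD_append (o : Option V) (cur x : V) (q : List V) :
    prevD o cur (q ++ [x]) = some (endpD cur q) := by
  induction q generalizing o cur with
  | nil => rfl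
  | cons z q ih => simpa using ih (some cur) z

/-- snoc membership (forward direction). -/
lemma snoc_mem_extF : ∀ {a : ℕ} {o : Option V} {cur x : V} {q : List V},
    q ∈ extF Nf a o cur → x ∈ Nf (endpD cur q) → some x ≠ prevD o cur q →
    q ++ [x] ∈ extF Nf (a+1) o cur := by
  intro a
  induction a with
  | zero =>
    intro o cur x q hq hadj hne
    rw [mem_extF_zero] at hq; subst hq
    rw [mem_extF_succ]
    exact ⟨x, hadj, hne, [], by simp, rfl⟩
  | succ a ih =>
    intro o cur x q hq hadj hne
    rw [mem_extF_succ] at hq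
    obtain ⟨z, hz, hzo, rest, hrest, rfl⟩ := hq
    rw [mem_extF_succ]
    exact ⟨z, hz, hzo, rest ++ [x], ih hrest (by simpa using hadj) (by simpa using hne), by simp⟩

/-- snoc membership (converse). -/
lemma of_snoc_mem_extF : ∀ {q : List V} {a : ℕ} {o : Option V} {cur x : V},
    q ++ [x] ∈ extF Nf (a+1) o cur →
    q ∈ extF Nf a o cur ∧ x ∈ Nf (endpD cur q) ∧ some x ≠ prevD o cur q := by
  intro q
  induction q with
  | nil =>
    intro a o cur x h
    rw [mem_extF_succ] at h
    obtain ⟨z, hz, hzo, rest, hrest, heq⟩ := h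
    simp only [List.nil_append, List.cons.injEq] at heq
    obtain ⟨rfl, rfl⟩ := heq
    have : a = 0 := by have := length_of_mem_extF hrest; simp at this; omega
    subst this
    exact ⟨by simp, hz, hzo⟩
  | cons z q ih =>
    intro a o cur x h
    rw [List.cons_append, mem_extF_succ] at h
    obtain ⟨z', hz, hzo, rest, hrest, heq⟩ := h
    simp only [List.cons.injEq] at heq
    obtain ⟨rfl, rfl⟩ := heq
    obtain ⟨a', rfl⟩ : ∃ a', a = a' + 1 := by
      have := length_of_mem_extF hrest
      simp at this
      exact ⟨q.length, by omega⟩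
    obtain ⟨h1, h2, h3⟩ := ih hrest
    refine ⟨?_, by simpa using h2, by simpa using h3⟩
    rw [mem_extF_succ]
    exact ⟨z, hz, hzo, q, h1, rfl⟩


lemma take_mem_extF : ∀ (k : ℕ) {j : ℕ} {o : Option V} {cur : V} {l : List V},
    l ∈ extF Nf (k + j) o cur → l.take k ∈ extF Nf k o cur := by
  intro k
  induction k with
  | zero => intro j o cur l _; simp
  | succ k ih =>
    intro j o cur l hl
    have : (k + 1) + j = (k + j) + 1 := by omega
    rw [this, mem_extF_succ] at hl
    obtain ⟨x, hx, hxo, rest, hrest, rfl⟩ := hl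
    rw [List.take_succ_cons, mem_extF_succ]
    exact ⟨x, hx, hxo, rest.take k, ih hrest, rfl⟩

lemma drop_mem_extF : ∀ (k : ℕ) {j : ℕ} {o : Option V} {cur : V} {l : List V},
    l ∈ extF Nf (k + j) o cur →
    l.drop k ∈ extF Nf j (prevD o cur (l.take k)) (endpD cur (l.take k)) := by
  intro k
  induction k with
  | zero => intro j o cur l hl; simpa [prevD, endpD] using hl
  | succ k ih =>
    intro j o cur l hl
    have : (k + 1) + j = (k + j) + 1 := by omega
    rw [this, mem_extF_succ] at hl
    obtain ⟨x, hx, hxo, rest, hrest, rfl⟩ := hl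
    rw [List.take_succ_cons, List.drop_succ_cons, endpD_cons, prevD_cons]
    exact ih hrest

/-- the state after a nonempty continuation is an adjacent pair. -/
lemma state_adj_of_mem_extF {a : ℕ} {o : Option V} {cur : V} {l : List V}
    (hl : l ∈ extF Nf (a + 1) o cur) :
    ∃ w, prevD o cur l = some w ∧ endpD cur l ∈ Nf w := by
  obtain ⟨q, x, rfl⟩ : ∃ q x, l = q ++ [x] := by
    rcases List.eq_nil_or_concat l with h | ⟨q, x, h⟩
    · exact absurd (length_of_mem_extF hl) (by simp [h])
    · exact ⟨q, x, by rw [h, List.concat_eq_append]⟩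
  obtain ⟨-, h2, -⟩ := of_snoc_mem_extF hl
  exact ⟨endpD cur q, prevD_append .., by rw [endpD_append]; exact h2⟩

section Counting

variable {D : ℕ} (hNfcard : ∀ v : V, (Nf v).card ≤ D + 1)
  (hNfsym : ∀ {x y : V}, x ∈ Nf y → y ∈ Nf x)

include hNfcard hNfsym

/-- basic per-step bound. -/
lemma card_extF_le : ∀ (k : ℕ) {p cur : V}, p ∈ Nf cur →
    (extF Nf k (some p) cur).card ≤ D ^ k := by
  intro k
  induction k with
  | zero => intro p cur _; simp [extF]
  | succ k ih =>
    intro p cur hp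
    rw [card_extF_succ]
    calc ∑ x ∈ (Nf cur).filter (fun x => some x ≠ some p), (extF Nf k (some cur) x).card
        ≤ ∑ x ∈ (Nf cur).filter (fun x => some x ≠ some p), D ^ k := by
          refine Finset.sum_le_sum fun x hx => ?_
          exact ih (hNfsym (Finset.mem_filter.mp hx).1)
      _ = ((Nf cur).filter (fun x => some x ≠ some p)).card * D ^ k := by
          rw [Finset.sum_const, smul_eq_mul]
      _ ≤ D * D ^ k := by
          refine Nat.mul_le_mul_right _ ?_
          have hsub : (Nf cur).filter (fun x => some x ≠ some p) ⊆ (Nf cur).erase p := by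
            intro x hx
            rw [Finset.mem_filter] at hx
            exact Finset.mem_erase.mpr ⟨by simpa using hx.2, hx.1⟩
          have := Finset.card_le_card hsub
          rw [Finset.card_erase_of_mem hp] at this
          have := hNfcard cur
          omega
      _ = D ^ (k + 1) := by ring

/-- witness at depth d ⇒ improved bound. -/
lemma card_extF_witness : ∀ (d : ℕ) {e : ℕ} {p cur : V}, p ∈ Nf cur →
    ∀ {s : List V}, s ∈ extF Nf d (some p) cur → (Nf (endpD cur s)).card ≤ D →
    (extF Nf (d + 1 + e) (some p) cur).card + D ^ e ≤ D ^ (d + 1 + e) := by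
  intro d
  induction d with
  | zero =>
    intro e p cur hp s hs hsmall
    rw [mem_extF_zero] at hs; subst hs
    have h1e : 1 + e = e + 1 := by omega
    rw [zero_add, h1e, card_extF_succ]
    have hsub : (Nf cur).filter (fun x => some x ≠ some p) ⊆ (Nf cur).erase p := by
      intro x hx
      rw [Finset.mem_filter] at hx
      exact Finset.mem_erase.mpr ⟨by simpa using hx.2, hx.1⟩
    have hcard : ((Nf cur).filter (fun x => some x ≠ some p)).card + 1 ≤ D := by
      have := Finset.card_le_card hsub
      rw [Finset.card_erase_of_mem hp] at this
      have h2 : (Nf cur).card ≤ D := hsmall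
      have h3 : 1 ≤ (Nf cur).card := Finset.card_pos.mpr ⟨p, hp⟩
      omega
    calc (∑ x ∈ (Nf cur).filter (fun x => some x ≠ some p),
            (extF Nf e (some cur) x).card) + D ^ e
        ≤ ((Nf cur).filter (fun x => some x ≠ some p)).card * D ^ e + D ^ e := by
          have : ∑ x ∈ (Nf cur).filter (fun x => some x ≠ some p),
              (extF Nf e (some cur) x).card
              ≤ ((Nf cur).filter (fun x => some x ≠ some p)).card * D ^ e := by
            rw [← smul_eq_mul, ← Finset.sum_const]
            refine Finset.sum_le_sum fun x hx => ?_
            exact card_extF_le hNfcard hNfsym e (hNfsym (Finset.mem_filter.mp hx).1)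
          omega
      _ = (((Nf cur).filter (fun x => some x ≠ some p)).card + 1) * D ^ e := by ring
      _ ≤ D * D ^ e := Nat.mul_le_mul_right _ hcard
      _ = D ^ (e + 1) := by rw [pow_succ, mul_comm]
  | succ d ih =>
    intro e p cur hp s hs hsmall
    rw [mem_extF_succ] at hs
    obtain ⟨x, hx, hxp, s', hs', rfl⟩ := hs
    have hxfilt : x ∈ (Nf cur).filter (fun y => some y ≠ some p) :=
      Finset.mem_filter.mpr ⟨hx, hxp⟩
    have harith : (d + 1 + 1 + e) = (d + 1 + e) + 1 := by omega
    rw [harith, card_extF_succ]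
    rw [← Finset.sum_erase_add _ _ hxfilt]
    have hterm : (extF Nf (d + 1 + e) (some cur) x).card + D ^ e ≤ D ^ (d + 1 + e) :=
      ih (hNfsym hx) hs' (by simpa using hsmall)
    have hrest : ∑ y ∈ ((Nf cur).filter (fun y => some y ≠ some p)).erase x,
        (extF Nf (d + 1 + e) (some cur) y).card
        ≤ (((Nf cur).filter (fun y => some y ≠ some p)).erase x).card * D ^ (d + 1 + e) := by
      rw [← smul_eq_mul, ← Finset.sum_const]
      refine Finset.sum_le_sum fun y hy => ?_
      exact card_extF_le hNfcard hNfsym _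
        (hNfsym (Finset.mem_filter.mp (Finset.mem_of_mem_erase hy)).1)
    have hcardfilt : ((Nf cur).filter (fun y => some y ≠ some p)).card ≤ D := by
      have hsub : (Nf cur).filter (fun y => some y ≠ some p) ⊆ (Nf cur).erase p := by
        intro y hy
        rw [Finset.mem_filter] at hy
        exact Finset.mem_erase.mpr ⟨by simpa using hy.2, hy.1⟩
      have := Finset.card_le_card hsub
      rw [Finset.card_erase_of_mem hp] at this
      have := hNfcard cur
      omega
    have hecard : (((Nf cur).filter (fun y => some y ≠ some p)).erase x).card + 1 ≤ D := by
      rw [Finset.card_erase_of_mem hxfilt]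
      have : 1 ≤ ((Nf cur).filter (fun y => some y ≠ some p)).card :=
        Finset.card_pos.mpr ⟨x, hxfilt⟩
      omega
    calc (∑ y ∈ ((Nf cur).filter (fun y => some y ≠ some p)).erase x,
            (extF Nf (d + 1 + e) (some cur) y).card
          + (extF Nf (d + 1 + e) (some cur) x).card) + D ^ e
        ≤ (((Nf cur).filter (fun y => some y ≠ some p)).erase x).card * D ^ (d + 1 + e)
            + D ^ (d + 1 + e) := by omega
      _ = ((((Nf cur).filter (fun y => some y ≠ some p)).erase x).card + 1)
            * D ^ (d + 1 + e) := by ring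
      _ ≤ D * D ^ (d + 1 + e) := Nat.mul_le_mul_right _ hecard
      _ = D ^ (d + 1 + e + 1) := by rw [pow_succ, mul_comm]

end Counting

section WithGraph

variable {G : SimpleGraph V} (hNf : ∀ x y : V, x ∈ Nf y ↔ G.Adj y x)

include hNf

/-- cancellation: concatenating a walk onto a non-backtracking continuation and
reducing gives a non-backtracking continuation with the same final vertex. -/
lemma cancel : ∀ {y u : V} (c : G.Walk y u), ∀ (a : ℕ) (o : Option V) (cur : V) (q : List V),
    c.length ≤ a → q ∈ extF Nf a o cur → endpD cur q = y →
    ∃ d, d ≤ a + c.length ∧ ∃ s ∈ extF Nf d o cur, endpD cur s = u := by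
  intro y u c
  induction c with
  | nil => exact fun a o cur q _ hq hend => ⟨a, by omega, q, hq, hend⟩
  | @cons y y₁ u hadj c' ih =>
    intro a o cur q hlen hq hend
    simp only [SimpleGraph.Walk.length_cons] at hlen ⊢
    obtain ⟨q', b, rfl⟩ : ∃ q' b, q = q' ++ [b] := by
      rcases List.eq_nil_or_concat q with rfl | ⟨q', b, h⟩
      · have := length_of_mem_extF hq; simp at this; omega
      · exact ⟨q', b, by rw [h, List.concat_eq_append]⟩
    have hb : b = y := by rw [← hend, endpD_append]
    subst hb
    obtain ⟨a', rfl⟩ : ∃ a', a = a' + 1 := by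
      have := length_of_mem_extF hq
      exact ⟨q'.length, by simp at this; omega⟩
    obtain ⟨hq', hbadj, hbprev⟩ := of_snoc_mem_extF hq
    by_cases hcase : y₁ = endpD cur q'
    · obtain ⟨d, hd, s, hs, hse⟩ := ih a' o cur q' (by omega) hq' (by first | exact hcase | exact hcase.symm)
      exact ⟨d, by omega, s, hs, hse⟩
    · have hmem : (q' ++ [b]) ++ [y₁] ∈ extF Nf (a' + 1 + 1) o cur := by
        refine snoc_mem_extF hq ?_ ?_
        · rw [endpD_append, hNf]; exact hadj
        · rw [prevD_append]
          simpa using hcase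
      obtain ⟨d, hd, s, hs, hse⟩ :=
        ih (a' + 1 + 1) o cur ((q' ++ [b]) ++ [y₁]) (by omega) hmem (endpD_append ..)
      exact ⟨d, by omega, s, hs, hse⟩

variable {D R : ℕ} (hD : 1 ≤ D)
  (hNfcard : ∀ v : V, (Nf v).card ≤ D + 1)
  (hNfsym : ∀ {x y : V}, x ∈ Nf y → y ∈ Nf x)
  (hdens : ∀ y : V, ∃ u : V, (Nf u).card ≤ D ∧ ∃ c : G.Walk y u, c.length ≤ R)

include hD hNfcard hNfsym hdens

/-- block bound: over a window of length 2R+1, we lose at least one continuation. -/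
lemma card_extF_block {p cur : V} (hp : p ∈ Nf cur) :
    (extF Nf (2 * R + 1) (some p) cur).card + 1 ≤ D ^ (2 * R + 1) := by
  by_cases hne : (extF Nf (2 * R + 1) (some p) cur).Nonempty
  · obtain ⟨l, hl⟩ := hne
    have hl' : l ∈ extF Nf (R + (R + 1)) (some p) cur := by
      have : 2 * R + 1 = R + (R + 1) := by omega
      rwa [this] at hl
    have hq : l.take R ∈ extF Nf R (some p) cur := take_mem_extF R hl'
    obtain ⟨u, hsmall, c, hc⟩ := hdens (endpD cur (l.take R))
    obtain ⟨d, hd, s, hs, hse⟩ := cancel hNf c R (some p) cur (l.take R) hc hq rfl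
    have hdR : d ≤ 2 * R := by omega
    have hwit := card_extF_witness hNfcard hNfsym d (e := 2 * R - d) hp hs (by rw [hse]; exact hsmall)
    have harith : d + 1 + (2 * R - d) = 2 * R + 1 := by omega
    rw [harith] at hwit
    have : 1 ≤ D ^ (2 * R - d) := Nat.one_le_pow _ _ (by omega)
    omega
  · rw [Finset.not_nonempty_iff_eq_empty] at hne
    rw [hne]
    simp only [Finset.card_empty, zero_add]
    exact Nat.one_le_pow _ _ (by omega)

/-- main geometric bound. -/
lemma card_extF_main : ∀ (k : ℕ) {p cur : V}, p ∈ Nf cur →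
    (extF Nf k (some p) cur).card ≤
      (D ^ (2 * R + 1) - 1) ^ (k / (2 * R + 1)) * D ^ (k % (2 * R + 1)) := by
  intro k
  induction k using Nat.strong_induction_on with
  | _ k IH =>
  intro p cur hp
  set M := 2 * R + 1 with hM
  by_cases hk : k < M
  · rw [Nat.div_eq_of_lt hk, Nat.mod_eq_of_lt hk, pow_zero, one_mul]
    exact card_extF_le hNfcard hNfsym k hp
  · obtain ⟨t, rfl⟩ : ∃ t, k = M + t := ⟨k - M, by omega⟩
    have htlt : t < M + t := by omega
    -- splitting injection into a sigma finset
    have hsplit : (extF Nf (M + t) (some p) cur).card ≤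
        ∑ s ∈ extF Nf M (some p) cur,
          (extF Nf t (prevD (some p) cur s) (endpD cur s)).card := by
      rw [← Finset.card_sigma]
      refine Finset.card_le_card_of_injOn (fun l => ⟨l.take M, l.drop M⟩) ?_ ?_
      · intro l hl
        rw [Finset.mem_coe, Finset.mem_sigma]
        exact ⟨take_mem_extF M hl, drop_mem_extF M hl⟩
      · intro l1 h1 l2 h2 heq
        simp only [Sigma.mk.inj_iff] at heq
        rw [← List.take_append_drop M l1, ← List.take_append_drop M l2, heq.1,
          eq_of_heq heq.2]
    have hterm : ∀ s ∈ extF Nf M (some p) cur,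
        (extF Nf t (prevD (some p) cur s) (endpD cur s)).card ≤
          (D ^ M - 1) ^ (t / M) * D ^ (t % M) := by
      intro s hs
      have hs' : s ∈ extF Nf (2 * R + 1) (some p) cur := hs
      obtain ⟨w, hw, hadj⟩ := state_adj_of_mem_extF hs'
      rw [hw]
      exact IH t htlt (hNfsym hadj)
    calc (extF Nf (M + t) (some p) cur).card
        ≤ ∑ s ∈ extF Nf M (some p) cur,
            (extF Nf t (prevD (some p) cur s) (endpD cur s)).card := hsplit
      _ ≤ ∑ _s ∈ extF Nf M (some p) cur, (D ^ M - 1) ^ (t / M) * D ^ (t % M) :=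
          Finset.sum_le_sum hterm
      _ = (extF Nf M (some p) cur).card * ((D ^ M - 1) ^ (t / M) * D ^ (t % M)) := by
          rw [Finset.sum_const, smul_eq_mul]
      _ ≤ (D ^ M - 1) * ((D ^ M - 1) ^ (t / M) * D ^ (t % M)) := by
          refine Nat.mul_le_mul_right _ ?_
          have hB := card_extF_block hNf hD hNfcard hNfsym hdens hp
          rw [← hM] at hB
          omega
      _ = (D ^ M - 1) ^ ((M + t) / M) * D ^ ((M + t) % M) := by
          have h1 : (M + t) / M = t / M + 1 := by
            rw [add_comm M t, Nat.add_div_right _ (by omega)]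
          have h2 : (M + t) % M = t % M := by
            rw [add_comm M t, Nat.add_mod_right]
          rw [h1, h2, pow_succ]
          ring

end WithGraph

section Walks

variable {G : SimpleGraph V}

lemma sigma_eq_of_support_eq : ∀ {v a b : V} (p : G.Walk v a) (q : G.Walk v b),
    p.support = q.support → (⟨a, p⟩ : Σ u : V, G.Walk v u) = ⟨b, q⟩ := by
  intro v a b p q
  induction p generalizing b with
  | nil =>
    cases q with
    | nil => intro _; rfl
    | cons h' q' =>
      intro hs
      have := congrArg List.tail hs
      simp only [SimpleGraph.Walk.support_nil, SimpleGraph.Walk.support_cons,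
        List.tail_cons] at this
      exact absurd this.symm q'.support_ne_nil
  | @cons v x a h p' ih =>
    cases q with
    | nil =>
      intro hs
      have := congrArg List.tail hs
      simp only [SimpleGraph.Walk.support_nil, SimpleGraph.Walk.support_cons,
        List.tail_cons] at this
      exact absurd this p'.support_ne_nil
    | @cons _ x' _ h' q' =>
      intro hs
      simp only [SimpleGraph.Walk.support_cons, List.cons.injEq, true_and] at hs
      have hx : x = x' := by
        have h1 := p'.support_eq_cons
        have h2 := q'.support_eq_cons
        rw [h1, h2] at hs
        exact (List.cons.injEq .. ▸ hs).1
      subst hx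
      have := ih q' hs
      rw [Sigma.mk.inj_iff] at this
      obtain ⟨rfl, hpq⟩ := this
      rw [eq_of_heq hpq]

variable (hNf : ∀ x y : V, x ∈ Nf y ↔ G.Adj y x)
include hNf

lemma path_tail_mem_extF : ∀ {cur u : V} (p : G.Walk cur u), p.IsPath →
    ∀ o : Option V, (∀ z : V, o = some z → z ∉ p.support.tail) →
    p.support.tail ∈ extF Nf p.length o cur := by
  intro cur u p
  induction p with
  | nil => intro _ o _; simp
  | @cons cur x u h p' ih =>
    intro hp o ho
    have htail : (SimpleGraph.Walk.cons h p').support.tail = x :: p'.support.tail := by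
      rw [SimpleGraph.Walk.support_cons, List.tail_cons]
      exact p'.support_eq_cons
    rw [htail, SimpleGraph.Walk.length_cons, mem_extF_succ]
    refine ⟨x, (hNf x cur).mpr h, ?_, p'.support.tail, ?_, rfl⟩
    · intro hxo
      refine ho x hxo.symm ?_
      rw [htail]
      exact List.mem_cons_self
    · refine ih hp.of_cons (some cur) fun z hz => ?_
      obtain rfl : z = cur := by injection hz.symm
      have hnodup := hp.support_nodup
      rw [SimpleGraph.Walk.support_cons] at hnodup
      exact fun hmem => (List.nodup_cons.mp hnodup).1 (List.mem_of_mem_tail hmem)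

lemma sawCount_le_card_extF (v : V) (n : ℕ) :
    sawCount G v n ≤ (extF Nf n none v).card := by
  rw [sawCount, ← Nat.card_eq_finsetCard]
  refine Nat.card_le_card_of_injective
    (fun P => (⟨P.1.2.support.tail, ?_⟩ : {l // l ∈ extF Nf n none v})) ?_
  · have := path_tail_mem_extF hNf P.1.2 P.2.1 none (fun z hz => by simp at hz)
    rwa [P.2.2] at this
  · intro P Q hPQ
    simp only [Subtype.mk.injEq] at hPQ
    have hsup : P.1.2.support = Q.1.2.support := by
      rw [P.1.2.support_eq_cons, Q.1.2.support_eq_cons, hPQ]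
    have := sigma_eq_of_support_eq P.1.2 Q.1.2 hsup
    have h1 : P.1 = Q.1 := by
      rcases P with ⟨⟨a, p⟩, hP⟩; rcases Q with ⟨⟨b, q⟩, hQ⟩
      exact this
    exact Subtype.ext h1

end Walks
end MuAux

open MuAux in
theorem mu_lt_of_small_degree_vertex
    {V : Type*} (G : SimpleGraph V) (Δ : ℕ) (hΔ : 3 ≤ Δ)
    (hinf : Infinite V) (hconn : G.Connected)
    (hquasi : ∃ W : Finset V, ∀ v : V, ∃ φ : G ≃g G, φ v ∈ W)
    (hdeg : ∀ v : V, (G.neighborSet v).Finite ∧ (G.neighborSet v).ncard ≤ Δ)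
    (hw : ∃ w : V, (G.neighborSet w).ncard ≤ Δ - 1) :
    ∀ μ : ℝ,
      Filter.Tendsto (fun n : ℕ => (sawSup G n : ℝ) ^ (1 / (n : ℝ)))
        Filter.atTop (nhds μ) →
      μ < (Δ : ℝ) - 1 := by
  haveI := hinf
  letI : DecidableEq V := Classical.decEq V
  -- the finite neighborhood function
  set Nf : V → Finset V := fun v => (hdeg v).1.toFinset with hNfdef
  have hNf : ∀ x y : V, x ∈ Nf y ↔ G.Adj y x := by
    intro x y
    simp [hNfdef, Set.Finite.mem_toFinset, SimpleGraph.mem_neighborSet]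
  have hNfcard' : ∀ v : V, (Nf v).card = (G.neighborSet v).ncard := by
    intro v
    rw [Set.ncard_eq_toFinset_card _ (hdeg v).1]
  set D : ℕ := Δ - 1 with hDdef
  have hD2 : 2 ≤ D := by omega
  have hD : 1 ≤ D := by omega
  have hNfcard : ∀ v : V, (Nf v).card ≤ D + 1 := by
    intro v
    have := (hdeg v).2
    rw [hNfcard']
    omega
  have hNfsym : ∀ {x y : V}, x ∈ Nf y → y ∈ Nf x := by
    intro x y hxy
    rw [hNf] at *
    exact (hxy).symm
  -- degree is preserved by automorphisms
  have hiso : ∀ (φ : G ≃g G) (v : V),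
      (G.neighborSet (φ v)).ncard = (G.neighborSet v).ncard := by
    intro φ v
    have himg : G.neighborSet (φ v) = (φ : V → V) '' G.neighborSet v := by
      ext x
      simp only [SimpleGraph.mem_neighborSet, Set.mem_image]
      constructor
      · intro hadj
        refine ⟨φ.symm x, ?_, by simp⟩
        have : G.Adj (φ v) (φ (φ.symm x)) := by simpa using hadj
        exact φ.map_adj_iff.mp this
      · rintro ⟨y, hy, rfl⟩
        exact φ.map_adj_iff.mpr hy
    rw [himg, Set.ncard_image_of_injective _ φ.injective]
  -- density of small-degree vertices
  obtain ⟨W, hW⟩ := hquasi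
  obtain ⟨w, hwsmall⟩ := hw
  set R : ℕ := W.sup (fun x => G.dist x w) with hRdef
  have hdens : ∀ y : V, ∃ u : V, (Nf u).card ≤ D ∧ ∃ c : G.Walk y u, c.length ≤ R := by
    intro y
    obtain ⟨φ, hφ⟩ := hW y
    refine ⟨φ.symm w, ?_, ?_⟩
    · rw [hNfcard', hiso φ.symm w]
      omega
    · obtain ⟨c0, hc0⟩ := hconn.exists_walk_length_eq_dist (φ y) w
      refine ⟨(c0.map (φ.symm : G →g G)).copy (by simp) rfl, ?_⟩
      rw [SimpleGraph.Walk.length_copy, SimpleGraph.Walk.length_map, hc0]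
      exact Finset.le_sup (f := fun x => G.dist x w) hφ
  set M : ℕ := 2 * R + 1 with hMdef
  set A : ℕ := D ^ M - 1 with hAdef
  have hMpos : 0 < M := by omega
  have hDM : 2 ≤ D ^ M := le_trans hD2 (Nat.le_self_pow (by omega) D)
  have hA1 : 1 ≤ A := by omega
  set C : ℕ := (D + 1) * D ^ M with hCdef
  -- the natural-number count bound
  have hcount : ∀ n : ℕ, 1 ≤ n → sawSup G n ≤ C * A ^ ((n - 1) / M) := by
    intro n hn
    obtain ⟨m, rfl⟩ : ∃ m, n = m + 1 := ⟨n - 1, by omega⟩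
    have hbv : ∀ v : V, sawCount G v (m + 1) ≤ C * A ^ (m / M) := by
      intro v
      refine le_trans (sawCount_le_card_extF hNf v (m + 1)) ?_
      rw [card_extF_succ]
      have hfilt : (Nf v).filter (fun x => some x ≠ (none : Option V)) = Nf v := by
        apply Finset.filter_true_of_mem
        intro x _
        simp
      rw [hfilt]
      calc ∑ x ∈ Nf v, (extF Nf m (some v) x).card
          ≤ ∑ x ∈ Nf v, A ^ (m / M) * D ^ (m % M) := by
            refine Finset.sum_le_sum fun x hx => ?_
            exact card_extF_main hNf hD hNfcard hNfsym hdens m (hNfsym hx)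
        _ = (Nf v).card * (A ^ (m / M) * D ^ (m % M)) := by
            rw [Finset.sum_const, smul_eq_mul]
        _ ≤ (D + 1) * (A ^ (m / M) * D ^ M) := by
            refine Nat.mul_le_mul (hNfcard v) (Nat.mul_le_mul_left _ ?_)
            exact Nat.pow_le_pow_right hD (le_of_lt (Nat.mod_lt _ hMpos))
        _ = C * A ^ (m / M) := by rw [hCdef]; ring
    refine csSup_le (Set.range_nonempty _) ?_
    rintro b ⟨v, rfl⟩
    simpa using hbv v
  -- move to the reals
  intro μ hμ
  set ρ : ℝ := (A : ℝ) ^ (1 / (M : ℝ)) with hρdef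
  have hMne : (M : ℝ) ≠ 0 := by positivity
  have hAnn : (0 : ℝ) ≤ (A : ℝ) := Nat.cast_nonneg _
  have hρ1 : (1 : ℝ) ≤ ρ := by
    rw [hρdef]
    calc (1 : ℝ) = (1 : ℝ) ^ (1 / (M : ℝ)) := (Real.one_rpow _).symm
      _ ≤ (A : ℝ) ^ (1 / (M : ℝ)) := by
          refine Real.rpow_le_rpow (by norm_num) ?_ (by positivity)
          exact_mod_cast hA1
  have hρnn : (0 : ℝ) ≤ ρ := le_trans zero_le_one hρ1
  have hρM : ρ ^ (M : ℕ) = (A : ℝ) := by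
    rw [hρdef, ← Real.rpow_natCast ((A : ℝ) ^ (1 / (M : ℝ))) M, ← Real.rpow_mul hAnn]
    rw [one_div, inv_mul_cancel₀ hMne, Real.rpow_one]
  have hCpos : (0 : ℝ) < (C : ℝ) := by
    have : 1 ≤ C := by
      rw [hCdef]
      exact Nat.one_le_iff_ne_zero.mpr (by positivity)
    exact_mod_cast lt_of_lt_of_le zero_lt_one (by exact_mod_cast this)
  -- eventual real bound
  have hbound : ∀ n : ℕ, 1 ≤ n →
      (sawSup G n : ℝ) ^ (1 / (n : ℝ)) ≤ (C : ℝ) ^ (1 / (n : ℝ)) * ρ := by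
    intro n hn
    have hnne : (n : ℝ) ≠ 0 := by positivity
    have h1 : (sawSup G n : ℝ) ≤ (C : ℝ) * ρ ^ (n : ℕ) := by
      have hc := hcount n hn
      have h2 : ((A : ℝ)) ^ ((n - 1) / M) = ρ ^ (M * ((n - 1) / M)) := by
        rw [pow_mul, hρM]
      calc (sawSup G n : ℝ) ≤ (C : ℝ) * (A : ℝ) ^ ((n - 1) / M) := by exact_mod_cast hc
        _ = (C : ℝ) * ρ ^ (M * ((n - 1) / M)) := by rw [h2]
        _ ≤ (C : ℝ) * ρ ^ (n : ℕ) := by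
            refine mul_le_mul_of_nonneg_left ?_ (le_of_lt hCpos)
            refine pow_le_pow_right₀ hρ1 ?_
            have := Nat.div_mul_le_self (n - 1) M
            calc M * ((n - 1) / M) = (n - 1) / M * M := by ring
              _ ≤ n - 1 := Nat.div_mul_le_self _ _
              _ ≤ n := by omega
    calc (sawSup G n : ℝ) ^ (1 / (n : ℝ))
        ≤ ((C : ℝ) * ρ ^ (n : ℕ)) ^ (1 / (n : ℝ)) := by
          refine Real.rpow_le_rpow (Nat.cast_nonneg _) h1 (by positivity)
      _ = (C : ℝ) ^ (1 / (n : ℝ)) * ρ := by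
          rw [Real.mul_rpow (le_of_lt hCpos) (by positivity)]
          congr 1
          rw [← Real.rpow_natCast ρ n, ← Real.rpow_mul hρnn]
          rw [mul_one_div, div_self hnne, Real.rpow_one]
  -- limit of the right-hand side
  have hrhs : Filter.Tendsto (fun n : ℕ => (C : ℝ) ^ (1 / (n : ℝ)) * ρ)
      Filter.atTop (nhds ρ) := by
    have h1 : Filter.Tendsto (fun n : ℕ => 1 / (n : ℝ)) Filter.atTop (nhds 0) :=
      tendsto_one_div_atTop_nhds_zero_nat
    have h2 : Filter.Tendsto (fun n : ℕ => (C : ℝ) ^ (1 / (n : ℝ)))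
        Filter.atTop (nhds 1) := by
      have hcont := (Real.continuousAt_const_rpow (ne_of_gt hCpos) : ContinuousAt _ (0:ℝ))
      have := hcont.tendsto.comp h1
      simpa [Real.rpow_zero, Function.comp_def] using this
    have := h2.mul_const ρ
    simpa using this
  have hle : μ ≤ ρ := by
    refine le_of_tendsto_of_tendsto hμ hrhs ?_
    filter_upwards [Filter.eventually_ge_atTop 1] with n hn
    exact hbound n hn
  -- conclude
  have hDcast : ((D : ℕ) : ℝ) = (Δ : ℝ) - 1 := by
    rw [hDdef]
    push_cast [Nat.cast_sub (by omega : 1 ≤ Δ)]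
    ring
  have hfin : ρ < (D : ℝ) := by
    have hlt : (A : ℝ) < ((D ^ M : ℕ) : ℝ) := by
      exact_mod_cast Nat.sub_lt (by omega) one_pos
    calc ρ = (A : ℝ) ^ (1 / (M : ℝ)) := hρdef
      _ < (((D ^ M : ℕ) : ℝ)) ^ (1 / (M : ℝ)) := by
          refine Real.rpow_lt_rpow hAnn hlt (by positivity)
      _ = (D : ℝ) := by
          rw [Nat.cast_pow, ← Real.rpow_natCast ((D : ℕ) : ℝ) M,
            ← Real.rpow_mul (Nat.cast_nonneg _), mul_one_div, div_self hMne, Real.rpow_one]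
  calc μ ≤ ρ := hle
    _ < (D : ℝ) := hfin
    _ = (Δ : ℝ) - 1 := hDcast
end
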